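/- arXiv:1411.0415 — 4 statements merged into one kernel-verified Lean document; each statement's English description precedes it below -/
import Mathlib

section
/- Let k ≥ 2 and n ≥ k+1, and let A ⊆ 2^[n] be a family that contains neither Y_k nor Y_k' as a weak subposet, with ∅ ∉ A and [n] ∉ A. Then the sum over all A ∈ A of 1/C(n,|A|) is at most k. -/
open Finset

/-- The family `𝒜` contains `Y_k` as a (weak) subposet: `k + 2` pairwise distinct sets
`A 1 ⊆ A 2 ⊆ ⋯ ⊆ A k`, `A k ⊆ B`, `A k ⊆ C`, all in `𝒜`. -/
def ContainsYk {n : ℕ} (k : ℕ) (𝒜 : Finset (Finset (Fin n))) : Prop :=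
  ∃ (A : Fin k → Finset (Fin n)) (B C : Finset (Fin n)),
    (∀ i, A i ∈ 𝒜) ∧ B ∈ 𝒜 ∧ C ∈ 𝒜 ∧
    Function.Injective A ∧ (∀ i, A i ≠ B) ∧ (∀ i, A i ≠ C) ∧ B ≠ C ∧
    (∀ i j : Fin k, i ≤ j → A i ⊆ A j) ∧ (∀ i, A i ⊆ B) ∧ (∀ i, A i ⊆ C)

/-- The family `𝒜` contains `Y_k'` as a (weak) subposet: `k + 2` pairwise distinct sets
`A k ⊆ A (k-1) ⊆ ⋯ ⊆ A 1`, `B ⊆ A k`, `C ⊆ A k`, all in `𝒜`. -/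
def ContainsYk' {n : ℕ} (k : ℕ) (𝒜 : Finset (Finset (Fin n))) : Prop :=
  ∃ (A : Fin k → Finset (Fin n)) (B C : Finset (Fin n)),
    (∀ i, A i ∈ 𝒜) ∧ B ∈ 𝒜 ∧ C ∈ 𝒜 ∧
    Function.Injective A ∧ (∀ i, A i ≠ B) ∧ (∀ i, A i ≠ C) ∧ B ≠ C ∧
    (∀ i j : Fin k, i ≤ j → A j ⊆ A i) ∧ (∀ i, B ⊆ A i) ∧ (∀ i, C ⊆ A i)

namespace LymYk

attribute [local instance] Classical.propDecidable

variable {n : ℕ}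

/-- The prefix of size `m` of the ordering of `Fin n` given by `σ`. -/
def pref (σ : Equiv.Perm (Fin n)) (m : ℕ) : Finset (Fin n) :=
  univ.filter (fun x => ((σ.symm x : Fin n) : ℕ) < m)

lemma mem_pref {σ : Equiv.Perm (Fin n)} {m : ℕ} {x : Fin n} :
    x ∈ pref σ m ↔ ((σ.symm x : Fin n) : ℕ) < m := by simp [pref]

lemma pref_mono {σ : Equiv.Perm (Fin n)} {m m' : ℕ} (h : m ≤ m') :
    pref σ m ⊆ pref σ m' := by
  intro x hx
  rw [mem_pref] at hx ⊢
  omega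

lemma card_pref {σ : Equiv.Perm (Fin n)} {m : ℕ} (h : m ≤ n) :
    (pref σ m).card = m := by
  have himg : pref σ m = (univ.filter (fun y : Fin n => (y : ℕ) < m)).image σ := by
    ext x
    simp only [mem_pref, Finset.mem_image, Finset.mem_filter, Finset.mem_univ, true_and]
    constructor
    · intro hx
      exact ⟨σ.symm x, hx, σ.apply_symm_apply x⟩
    · rintro ⟨y, hy, rfl⟩
      simpa using hy
  have hfil : (univ.filter (fun y : Fin n => (y : ℕ) < m)) =
      (Finset.range m).attachFin (fun x hx => lt_of_lt_of_le (Finset.mem_range.mp hx) h) := by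
    ext y
    simp [Finset.mem_attachFin]
  rw [himg, Finset.card_image_of_injective _ σ.injective, hfil, Finset.card_attachFin,
    Finset.card_range]

/-- `A` is a prefix set of `σ`. -/
def isPref (σ : Equiv.Perm (Fin n)) (A : Finset (Fin n)) : Prop :=
  pref σ A.card = A

lemma isPref_subset {σ : Equiv.Perm (Fin n)} {A B : Finset (Fin n)}
    (hA : isPref σ A) (hB : isPref σ B) (h : A.card ≤ B.card) : A ⊆ B := by
  rw [← hA, ← hB]; exact pref_mono h

lemma isPref_total {σ : Equiv.Perm (Fin n)} {A B : Finset (Fin n)}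
    (hA : isPref σ A) (hB : isPref σ B) : A ⊆ B ∨ B ⊆ A := by
  rcases le_total A.card B.card with h | h
  · exact Or.inl (isPref_subset hA hB h)
  · exact Or.inr (isPref_subset hB hA h)

/-- The sets of `𝒜` that occur as prefixes of `σ`. -/
noncomputable def hitF (𝒜 : Finset (Finset (Fin n))) (σ : Equiv.Perm (Fin n)) :
    Finset (Finset (Fin n)) :=
  𝒜.filter (fun A => isPref σ A)

lemma mem_hitF {𝒜 : Finset (Finset (Fin n))} {σ : Equiv.Perm (Fin n)} {A : Finset (Fin n)} :
    A ∈ hitF 𝒜 σ ↔ A ∈ 𝒜 ∧ isPref σ A := by simp [hitF]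

lemma isChain_hitF (𝒜 : Finset (Finset (Fin n))) (σ : Equiv.Perm (Fin n)) :
    IsChain (· ⊆ ·) (hitF 𝒜 σ : Set (Finset (Fin n))) := by
  intro X hX Y hY _
  simp only [Finset.mem_coe, mem_hitF] at hX hY
  exact isPref_total hX.2 hY.2

/-! ### Enumerating a finite chain in increasing order -/

/-- Rank of `X` in `𝒞` : the number of elements strictly below it. -/
def rank (𝒞 : Finset (Finset (Fin n))) (X : Finset (Fin n)) : ℕ :=
  (𝒞.filter (fun Y => Y ⊂ X)).card

/-- The `i`-th smallest element of a chain `𝒞`. -/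
noncomputable def enum (𝒞 : Finset (Finset (Fin n))) (i : ℕ) : Finset (Fin n) :=
  (𝒞.filter (fun X => rank 𝒞 X = i)).sup id

section chainEnum

variable {𝒞 : Finset (Finset (Fin n))}

lemma chain_cases (hc : IsChain (· ⊆ ·) (𝒞 : Set (Finset (Fin n))))
    {X Y : Finset (Fin n)} (hX : X ∈ 𝒞) (hY : Y ∈ 𝒞) : X ⊆ Y ∨ Y ⊆ X := by
  rcases eq_or_ne X Y with rfl | hne
  · exact Or.inl le_rfl
  · exact hc hX hY hne

lemma rank_mono {X Y : Finset (Fin n)} (h : X ⊆ Y) : rank 𝒞 X ≤ rank 𝒞 Y := by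
  apply Finset.card_le_card
  intro Z hZ
  simp only [Finset.mem_filter] at hZ ⊢
  exact ⟨hZ.1, hZ.2.trans_subset h⟩

lemma rank_lt_card {X : Finset (Fin n)} (hX : X ∈ 𝒞) : rank 𝒞 X < 𝒞.card := by
  have : (𝒞.filter (fun Y => Y ⊂ X)) ⊆ 𝒞.erase X := by
    intro Z hZ
    simp only [Finset.mem_filter] at hZ
    exact Finset.mem_erase.mpr ⟨ne_of_ssubset hZ.2, hZ.1⟩
  calc rank 𝒞 X ≤ (𝒞.erase X).card := Finset.card_le_card this
    _ < 𝒞.card := Finset.card_erase_lt_of_mem hX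

lemma rank_strict {X Y : Finset (Fin n)} (hX : X ∈ 𝒞) (h : X ⊂ Y) :
    rank 𝒞 X < rank 𝒞 Y := by
  have hsub : insert X (𝒞.filter (fun Z => Z ⊂ X)) ⊆ 𝒞.filter (fun Z => Z ⊂ Y) := by
    intro Z hZ
    rcases Finset.mem_insert.mp hZ with rfl | hZ
    · exact Finset.mem_filter.mpr ⟨hX, h⟩
    · simp only [Finset.mem_filter] at hZ ⊢
      exact ⟨hZ.1, hZ.2.trans h⟩
  have hXnot : X ∉ 𝒞.filter (fun Z => Z ⊂ X) := by
    simp only [Finset.mem_filter, not_and]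
    exact fun _ h => absurd h (lt_irrefl X)
  calc rank 𝒞 X < (insert X (𝒞.filter (fun Z => Z ⊂ X))).card := by
        rw [Finset.card_insert_of_notMem hXnot]
        exact Nat.lt_succ_self _
    _ ≤ _ := Finset.card_le_card hsub

lemma rank_injOn (hc : IsChain (· ⊆ ·) (𝒞 : Set (Finset (Fin n)))) {X Y : Finset (Fin n)} (hX : X ∈ 𝒞) (hY : Y ∈ 𝒞)
    (h : rank 𝒞 X = rank 𝒞 Y) : X = Y := by
  by_contra hne
  rcases hc hX hY hne with hss | hss
  · exact absurd h (Nat.ne_of_lt (rank_strict hX (ssubset_of_subset_of_ne hss hne)))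
  · exact absurd h.symm (Nat.ne_of_lt (rank_strict hY (ssubset_of_subset_of_ne hss (Ne.symm hne))))

lemma exists_rank_eq (hc : IsChain (· ⊆ ·) (𝒞 : Set (Finset (Fin n)))) {i : ℕ} (hi : i < 𝒞.card) : ∃ X ∈ 𝒞, rank 𝒞 X = i := by
  have hinj : Set.InjOn (rank 𝒞) 𝒞 := fun X hX Y hY h => rank_injOn hc hX hY h
  have hcard : (𝒞.image (rank 𝒞)).card = 𝒞.card := Finset.card_image_of_injOn hinj
  have hsub : 𝒞.image (rank 𝒞) ⊆ Finset.range 𝒞.card := by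
    intro j hj
    rcases Finset.mem_image.mp hj with ⟨X, hX, rfl⟩
    exact Finset.mem_range.mpr (rank_lt_card hX)
  have : 𝒞.image (rank 𝒞) = Finset.range 𝒞.card :=
    Finset.eq_of_subset_of_card_le hsub (by rw [hcard, Finset.card_range])
  have : i ∈ 𝒞.image (rank 𝒞) := this ▸ Finset.mem_range.mpr hi
  rcases Finset.mem_image.mp this with ⟨X, hX, hXr⟩
  exact ⟨X, hX, hXr⟩

lemma enum_eq_of_rank (hc : IsChain (· ⊆ ·) (𝒞 : Set (Finset (Fin n)))) {X : Finset (Fin n)} (hX : X ∈ 𝒞) :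
    enum 𝒞 (rank 𝒞 X) = X := by
  have : 𝒞.filter (fun Y => rank 𝒞 Y = rank 𝒞 X) = {X} := by
    ext Y
    simp only [Finset.mem_filter, Finset.mem_singleton]
    constructor
    · rintro ⟨hY, hr⟩; exact rank_injOn hc hY hX hr
    · rintro rfl; exact ⟨hX, rfl⟩
  rw [enum, this, Finset.sup_singleton, id]

lemma enum_mem (hc : IsChain (· ⊆ ·) (𝒞 : Set (Finset (Fin n)))) {i : ℕ} (hi : i < 𝒞.card) : enum 𝒞 i ∈ 𝒞 := by
  obtain ⟨X, hX, rfl⟩ := exists_rank_eq hc hi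
  rw [enum_eq_of_rank hc hX]; exact hX

lemma rank_enum (hc : IsChain (· ⊆ ·) (𝒞 : Set (Finset (Fin n)))) {i : ℕ} (hi : i < 𝒞.card) : rank 𝒞 (enum 𝒞 i) = i := by
  obtain ⟨X, hX, rfl⟩ := exists_rank_eq hc hi
  rw [enum_eq_of_rank hc hX]

lemma enum_ssubset (hc : IsChain (· ⊆ ·) (𝒞 : Set (Finset (Fin n)))) {i j : ℕ} (hij : i < j) (hj : j < 𝒞.card) :
    enum 𝒞 i ⊂ enum 𝒞 j := by
  have hi : i < 𝒞.card := hij.trans hj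
  have hmi := enum_mem hc hi
  have hmj := enum_mem hc hj
  have hne : enum 𝒞 i ≠ enum 𝒞 j := by
    intro h
    have := rank_enum hc hi
    rw [h, rank_enum hc hj] at this
    omega
  rcases hc hmi hmj hne with hss | hss
  · exact ssubset_of_subset_of_ne hss hne
  · exfalso
    have h1 := rank_strict hmj (ssubset_of_subset_of_ne hss (Ne.symm hne))
    rw [rank_enum hc hi, rank_enum hc hj] at h1
    omega

lemma enum_subset (hc : IsChain (· ⊆ ·) (𝒞 : Set (Finset (Fin n)))) {i j : ℕ} (hij : i ≤ j) (hj : j < 𝒞.card) :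
    enum 𝒞 i ⊆ enum 𝒞 j := by
  rcases Nat.lt_or_ge i j with h | h
  · exact (enum_ssubset hc h hj).subset
  · have : i = j := le_antisymm hij h
    subst this
    exact Finset.Subset.refl _

end chainEnum

section YkLemmas

variable {k : ℕ} {𝒜 : Finset (Finset (Fin n))}

/-- A chain of `k+2` distinct sets in `𝒜` yields `Y_k`. -/
lemma chain_to_Yk (hk : 2 ≤ k) {𝒞 : Finset (Finset (Fin n))}
    (hc : IsChain (· ⊆ ·) (𝒞 : Set (Finset (Fin n))))
    (hsub : 𝒞 ⊆ 𝒜) (hcard : 𝒞.card = k + 2) : ContainsYk k 𝒜 := by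
  have hmem : ∀ i : ℕ, i < k + 2 → enum 𝒞 i ∈ 𝒜 := fun i hi =>
    hsub (enum_mem hc (by omega))
  have hss : ∀ i j : ℕ, i < j → j < k + 2 → enum 𝒞 i ⊂ enum 𝒞 j := fun i j hij hj =>
    enum_ssubset hc hij (by omega)
  refine ⟨fun i => enum 𝒞 (i : ℕ), enum 𝒞 k, enum 𝒞 (k+1), ?_, ?_, ?_, ?_, ?_, ?_, ?_, ?_, ?_, ?_⟩
  · exact fun i => hmem i (by omega)
  · exact hmem k (by omega)
  · exact hmem (k+1) (by omega)
  · intro i j hij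
    by_contra hne
    have hne' : (i : ℕ) ≠ (j : ℕ) := fun h => hne (Fin.ext h)
    rcases Nat.lt_or_ge (i : ℕ) (j : ℕ) with h | h
    · exact (ne_of_ssubset (hss _ _ h (by omega))) hij
    · have : (j : ℕ) < (i : ℕ) := by omega
      exact (ne_of_ssubset (hss _ _ this (by omega))) hij.symm
  · exact fun i => ne_of_ssubset (hss _ _ (by omega) (by omega))
  · exact fun i => ne_of_ssubset (hss _ _ (by omega) (by omega))
  · exact ne_of_ssubset (hss _ _ (by omega) (by omega))
  · intro i j hij
    exact enum_subset hc (by exact_mod_cast hij) (by omega)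
  · exact fun i => (hss _ _ (by omega) (by omega)).subset
  · exact fun i => (hss _ _ (by omega) (by omega)).subset

/-- Every permutation has at most `k+1` hits. -/
lemma hits_le (hk : 2 ≤ k) (hY : ¬ ContainsYk k 𝒜) (σ : Equiv.Perm (Fin n)) :
    (hitF 𝒜 σ).card ≤ k + 1 := by
  by_contra h
  push_neg at h
  obtain ⟨𝒟, h𝒟sub, h𝒟card⟩ := Finset.exists_subset_card_eq (show k + 2 ≤ (hitF 𝒜 σ).card by omega)
  exact hY (chain_to_Yk hk ((isChain_hitF 𝒜 σ).mono (Finset.coe_subset.mpr h𝒟sub))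
    (fun X hX => (mem_hitF.mp (h𝒟sub hX)).1) h𝒟card)

end YkLemmas

section FullSigma

variable {k : ℕ} {𝒜 : Finset (Finset (Fin n))} {σ : Equiv.Perm (Fin n)}

/-- Uniqueness of sets above the top of a `k`-chain, from `¬ Y_k`. -/
lemma up_unique (hk : 2 ≤ k) (hY : ¬ ContainsYk k 𝒜)
    (hfull : (hitF 𝒜 σ).card = k + 1)
    {B C : Finset (Fin n)} (hB : B ∈ 𝒜) (hC : C ∈ 𝒜)
    (hBs : enum (hitF 𝒜 σ) (k-1) ⊂ B) (hCs : enum (hitF 𝒜 σ) (k-1) ⊂ C) : B = C := by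
  set 𝒞 := hitF 𝒜 σ with h𝒞
  have hc := isChain_hitF 𝒜 σ
  by_contra hBC
  apply hY
  refine ⟨fun i => enum 𝒞 (i : ℕ), B, C, ?_, hB, hC, ?_, ?_, ?_, hBC, ?_, ?_, ?_⟩
  · exact fun i => (mem_hitF.mp (enum_mem hc (by rw [hfull]; omega))).1
  · intro i j hij
    have hne' : (i : ℕ) ≠ (j : ℕ) → False := by
      intro hne
      rcases Nat.lt_or_ge (i : ℕ) (j : ℕ) with h | h
      · exact (ne_of_ssubset (enum_ssubset hc h (by rw [hfull]; omega))) hij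
      · have h2 : (j : ℕ) < (i : ℕ) := by omega
        exact (ne_of_ssubset (enum_ssubset hc h2 (by rw [hfull]; omega))) hij.symm
    exact Fin.ext (by by_contra hne; exact hne' hne)
  · intro i
    have hsub : enum 𝒞 (i : ℕ) ⊆ enum 𝒞 (k-1) := by
      apply enum_subset hc (by omega) (by rw [hfull]; omega)
    exact fun h => (ne_of_ssubset hBs) (le_antisymm hBs.subset (h ▸ hsub)) |>.elim
  · intro i
    have hsub : enum 𝒞 (i : ℕ) ⊆ enum 𝒞 (k-1) := by
      apply enum_subset hc (by omega) (by rw [hfull]; omega)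
    exact fun h => (ne_of_ssubset hCs) (le_antisymm hCs.subset (h ▸ hsub)) |>.elim
  · intro i j hij
    exact enum_subset hc (by exact_mod_cast hij) (by rw [hfull]; omega)
  · intro i
    exact (enum_subset hc (by omega) (by rw [hfull]; omega)).trans hBs.subset
  · intro i
    exact (enum_subset hc (by omega) (by rw [hfull]; omega)).trans hCs.subset

/-- Uniqueness of sets below the second element, from `¬ Y_k'`. -/
lemma down_unique (hk : 2 ≤ k) (hY' : ¬ ContainsYk' k 𝒜)
    (hfull : (hitF 𝒜 σ).card = k + 1)
    {B C : Finset (Fin n)} (hB : B ∈ 𝒜) (hC : C ∈ 𝒜)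
    (hBs : B ⊂ enum (hitF 𝒜 σ) 1) (hCs : C ⊂ enum (hitF 𝒜 σ) 1) : B = C := by
  set 𝒞 := hitF 𝒜 σ with h𝒞
  have hc := isChain_hitF 𝒜 σ
  by_contra hBC
  apply hY'
  refine ⟨fun i => enum 𝒞 (k - (i : ℕ)), B, C, ?_, hB, hC, ?_, ?_, ?_, hBC, ?_, ?_, ?_⟩
  · exact fun i => (mem_hitF.mp (enum_mem hc (by rw [hfull]; omega))).1
  · intro i j hij
    have hne' : (i : ℕ) ≠ (j : ℕ) → False := by
      intro hne
      have hipos : (i : ℕ) < k := i.isLt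
      have hjpos : (j : ℕ) < k := j.isLt
      rcases Nat.lt_or_ge (k - (i : ℕ)) (k - (j : ℕ)) with h | h
      · exact (ne_of_ssubset (enum_ssubset hc h (by rw [hfull]; omega))) hij
      · have h2 : k - (j : ℕ) < k - (i : ℕ) := by omega
        exact (ne_of_ssubset (enum_ssubset hc h2 (by rw [hfull]; omega))) hij.symm
    refine Fin.ext (by by_contra hne; exact hne' hne)
  · intro i
    have hsub : enum 𝒞 1 ⊆ enum 𝒞 (k - (i : ℕ)) := by
      apply enum_subset hc (by have := i.isLt; omega) (by rw [hfull]; omega)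
    intro h
    exact (ne_of_ssubset hBs) (le_antisymm hBs.subset (hsub.trans h.le))
  · intro i
    have hsub : enum 𝒞 1 ⊆ enum 𝒞 (k - (i : ℕ)) := by
      apply enum_subset hc (by have := i.isLt; omega) (by rw [hfull]; omega)
    intro h
    exact (ne_of_ssubset hCs) (le_antisymm hCs.subset (hsub.trans h.le))
  · intro i j hij
    have : k - (j : ℕ) ≤ k - (i : ℕ) := by
      have : (i : ℕ) ≤ (j : ℕ) := hij
      omega
    exact enum_subset hc this (by rw [hfull]; omega)
  · intro i
    refine hBs.subset.trans (enum_subset hc (by have := i.isLt; omega) (by rw [hfull]; omega))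
  · intro i
    refine hCs.subset.trans (enum_subset hc (by have := i.isLt; omega) (by rw [hfull]; omega))

end FullSigma

section Rho

variable {t1 t2 tk tk1 : ℕ}

/-- Rotate the position block `[0,t2)` by `t1` and the block `[tk, n)` by `tk1 - tk`. -/
def rho (t1 t2 tk tk1 : ℕ) (h2 : t1 < t2) (h3 : t2 ≤ tk) (h4 : tk < tk1) (h5 : tk1 < n) :
    Equiv.Perm (Fin n) where
  toFun j :=
    if (j : ℕ) < t2 then
      ⟨((j : ℕ) + t1) % t2, by
        have ht2 : 0 < t2 := by omega
        have := Nat.mod_lt ((j : ℕ) + t1) ht2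
        omega⟩
    else if tk ≤ (j : ℕ) then
      ⟨tk + (((j : ℕ) - tk + (tk1 - tk)) % (n - tk)), by
        have hM : 0 < n - tk := by omega
        have := Nat.mod_lt ((j : ℕ) - tk + (tk1 - tk)) hM
        omega⟩
    else j
  invFun j :=
    if (j : ℕ) < t2 then
      ⟨((j : ℕ) + (t2 - t1)) % t2, by
        have ht2 : 0 < t2 := by omega
        have := Nat.mod_lt ((j : ℕ) + (t2 - t1)) ht2
        omega⟩
    else if tk ≤ (j : ℕ) then
      ⟨tk + (((j : ℕ) - tk + (n - tk1)) % (n - tk)), by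
        have hM : 0 < n - tk := by omega
        have := Nat.mod_lt ((j : ℕ) - tk + (n - tk1)) hM
        omega⟩
    else j
  left_inv := by
    intro j
    have ht2 : 0 < t2 := by omega
    have hM : 0 < n - tk := by omega
    by_cases hA : (j : ℕ) < t2
    · have hv : (((j : ℕ) + t1) % t2) < t2 := Nat.mod_lt _ ht2
      simp only [hA, if_true, hv]
      apply Fin.ext
      simp only
      rw [Nat.mod_add_mod]
      have harith : (j : ℕ) + t1 + (t2 - t1) = (j : ℕ) + t2 := by omega
      rw [harith, Nat.add_mod_right, Nat.mod_eq_of_lt hA]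
    · by_cases hB : tk ≤ (j : ℕ)
      · have hv1 : ¬ (tk + (((j : ℕ) - tk + (tk1 - tk)) % (n - tk)) < t2) := by omega
        simp only [hA, if_false, hB, if_true, hv1]
        have hv2 : tk ≤ tk + (((j : ℕ) - tk + (tk1 - tk)) % (n - tk)) := Nat.le_add_right _ _
        simp only [hv2, if_true]
        apply Fin.ext
        simp only
        have hred : tk + (((j : ℕ) - tk + (tk1 - tk)) % (n - tk)) - tk
            = (((j : ℕ) - tk + (tk1 - tk)) % (n - tk)) := by omega
        rw [hred, Nat.mod_add_mod]
        have harith : (j : ℕ) - tk + (tk1 - tk) + (n - tk1) = ((j : ℕ) - tk) + (n - tk) := by omega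
        rw [harith, Nat.add_mod_right, Nat.mod_eq_of_lt (by have := j.isLt; omega)]
        have := j.isLt
        omega
      · simp only [hA, if_false, hB]
  right_inv := by
    intro j
    have ht2 : 0 < t2 := by omega
    have hM : 0 < n - tk := by omega
    by_cases hA : (j : ℕ) < t2
    · have hv : (((j : ℕ) + (t2 - t1)) % t2) < t2 := Nat.mod_lt _ ht2
      simp only [hA, if_true, hv]
      apply Fin.ext
      simp only
      rw [Nat.mod_add_mod]
      have harith : (j : ℕ) + (t2 - t1) + t1 = (j : ℕ) + t2 := by omega
      rw [harith, Nat.add_mod_right, Nat.mod_eq_of_lt hA]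
    · by_cases hB : tk ≤ (j : ℕ)
      · have hv1 : ¬ (tk + (((j : ℕ) - tk + (n - tk1)) % (n - tk)) < t2) := by omega
        simp only [hA, if_false, hB, if_true, hv1]
        have hv2 : tk ≤ tk + (((j : ℕ) - tk + (n - tk1)) % (n - tk)) := Nat.le_add_right _ _
        simp only [hv2, if_true]
        apply Fin.ext
        simp only
        have hred : tk + (((j : ℕ) - tk + (n - tk1)) % (n - tk)) - tk
            = (((j : ℕ) - tk + (n - tk1)) % (n - tk)) := by omega
        rw [hred, Nat.mod_add_mod]
        have harith : (j : ℕ) - tk + (n - tk1) + (tk1 - tk) = ((j : ℕ) - tk) + (n - tk) := by omega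
        rw [harith, Nat.add_mod_right, Nat.mod_eq_of_lt (by have := j.isLt; omega)]
        have := j.isLt
        omega
      · simp only [hA, if_false, hB]

variable (h2 : t1 < t2) (h3 : t2 ≤ tk) (h4 : tk < tk1) (h5 : tk1 < n)

lemma rho_symm_lt_iff {m : ℕ} (hm2 : t2 ≤ m) (hmk : m ≤ tk) (p : Fin n) :
    (((rho t1 t2 tk tk1 h2 h3 h4 h5).symm p : Fin n) : ℕ) < m ↔ (p : ℕ) < m := by
  have ht2 : 0 < t2 := by omega
  show ((if (p : ℕ) < t2 then _ else if tk ≤ (p : ℕ) then _ else p : Fin n) : ℕ) < m ↔ _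
  by_cases hA : (p : ℕ) < t2
  · simp only [hA, if_true]
    have := Nat.mod_lt ((p : ℕ) + (t2 - t1)) ht2
    constructor <;> intro <;> omega
  · by_cases hB : tk ≤ (p : ℕ)
    · simp only [hA, if_false, hB, if_true]
      constructor <;> intro h <;> omega
    · simp only [hA, if_false, hB]

lemma rho_symm_t1 (ht1n : t1 < n) :
    (((rho t1 t2 tk tk1 h2 h3 h4 h5).symm ⟨t1, ht1n⟩ : Fin n) : ℕ) = 0 := by
  show ((if (t1 : ℕ) < t2 then _ else if tk ≤ t1 then _ else _ : Fin n) : ℕ) = 0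
  simp only [h2, if_true]
  show (t1 + (t2 - t1)) % t2 = 0
  have : t1 + (t2 - t1) = t2 := by omega
  rw [this, Nat.mod_self]

lemma rho_symm_tk1 :
    (((rho t1 t2 tk tk1 h2 h3 h4 h5).symm ⟨tk1, h5⟩ : Fin n) : ℕ) = tk := by
  have hA : ¬ (tk1 < t2) := by omega
  have hB : tk ≤ tk1 := by omega
  show ((if (tk1 : ℕ) < t2 then _ else if tk ≤ tk1 then _ else _ : Fin n) : ℕ) = tk
  simp only [hA, if_false, hB, if_true]
  show tk + ((tk1 - tk + (n - tk1)) % (n - tk)) = tk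
  have : tk1 - tk + (n - tk1) = n - tk := by omega
  rw [this, Nat.mod_self, Nat.add_zero]

end Rho

section Phi

variable {k : ℕ} {𝒜 : Finset (Finset (Fin n))}

/-- Cards of the enumerated hit chain. -/
noncomputable def tOf (𝒜 : Finset (Finset (Fin n))) (σ : Equiv.Perm (Fin n)) (i : ℕ) : ℕ :=
  (enum (hitF 𝒜 σ) i).card

/-- The conditions allowing the rotation surgery. -/
def phiCond (k : ℕ) (𝒜 : Finset (Finset (Fin n))) (σ : Equiv.Perm (Fin n)) : Prop :=
  tOf 𝒜 σ 0 < tOf 𝒜 σ 1 ∧ tOf 𝒜 σ 1 ≤ tOf 𝒜 σ (k-1) ∧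
    tOf 𝒜 σ (k-1) < tOf 𝒜 σ k ∧ tOf 𝒜 σ k < n

/-- The chain surgery map. -/
noncomputable def phi (k : ℕ) (𝒜 : Finset (Finset (Fin n))) (σ : Equiv.Perm (Fin n)) :
    Equiv.Perm (Fin n) :=
  if h : phiCond k 𝒜 σ then
    (rho (tOf 𝒜 σ 0) (tOf 𝒜 σ 1) (tOf 𝒜 σ (k-1)) (tOf 𝒜 σ k) h.1 h.2.1 h.2.2.1 h.2.2.2).trans σ
  else σ

variable (hk : 2 ≤ k) (h0 : ∅ ∉ 𝒜) (h1 : (Finset.univ : Finset (Fin n)) ∉ 𝒜)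
  {σ : Equiv.Perm (Fin n)} (hfull : (hitF 𝒜 σ).card = k + 1)

lemma enum_mem_A (hfull : (hitF 𝒜 σ).card = k + 1) {i : ℕ} (hi : i ≤ k) :
    enum (hitF 𝒜 σ) i ∈ 𝒜 :=
  (mem_hitF.mp (enum_mem (isChain_hitF 𝒜 σ) (by omega))).1

lemma enum_isPref (hfull : (hitF 𝒜 σ).card = k + 1) {i : ℕ} (hi : i ≤ k) :
    isPref σ (enum (hitF 𝒜 σ) i) :=
  (mem_hitF.mp (enum_mem (isChain_hitF 𝒜 σ) (by omega))).2

lemma t0_pos (hk : 2 ≤ k) (h0 : ∅ ∉ 𝒜) (hfull : (hitF 𝒜 σ).card = k + 1) :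
    0 < tOf 𝒜 σ 0 := by
  show 0 < (enum (hitF 𝒜 σ) 0).card
  rw [Finset.card_pos, Finset.nonempty_iff_ne_empty]
  intro h
  exact h0 (h ▸ enum_mem_A hfull (by omega))

lemma phiCond_of_full (hk : 2 ≤ k) (h1 : (Finset.univ : Finset (Fin n)) ∉ 𝒜)
    (hfull : (hitF 𝒜 σ).card = k + 1) : phiCond k 𝒜 σ := by
  have hc := isChain_hitF 𝒜 σ
  refine ⟨?_, ?_, ?_, ?_⟩
  · exact Finset.card_lt_card (enum_ssubset hc (by omega) (by omega))
  · exact Finset.card_le_card (enum_subset hc (by omega) (by omega))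
  · exact Finset.card_lt_card (enum_ssubset hc (by omega) (by omega))
  · have hle : tOf 𝒜 σ k ≤ n := by
      have := Finset.card_le_univ (enum (hitF 𝒜 σ) k)
      simpa [tOf] using this
    rcases Nat.lt_or_ge (tOf 𝒜 σ k) n with h | h
    · exact h
    · exfalso
      have heq : tOf 𝒜 σ k = n := by omega
      have : enum (hitF 𝒜 σ) k = Finset.univ :=
        Finset.eq_univ_of_card _ (by simpa [tOf] using heq)
      exact h1 (this ▸ enum_mem_A hfull (by omega))

lemma tk_lt_n (hk : 2 ≤ k) (h1 : (Finset.univ : Finset (Fin n)) ∉ 𝒜)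
    (hfull : (hitF 𝒜 σ).card = k + 1) : tOf 𝒜 σ k < n :=
  (phiCond_of_full hk h1 hfull).2.2.2

lemma phi_eq_of_full (hk : 2 ≤ k) (h1 : (Finset.univ : Finset (Fin n)) ∉ 𝒜)
    (hfull : (hitF 𝒜 σ).card = k + 1) :
    phi k 𝒜 σ = (rho (tOf 𝒜 σ 0) (tOf 𝒜 σ 1) (tOf 𝒜 σ (k-1)) (tOf 𝒜 σ k)
      (phiCond_of_full hk h1 hfull).1 (phiCond_of_full hk h1 hfull).2.1
      (phiCond_of_full hk h1 hfull).2.2.1 (phiCond_of_full hk h1 hfull).2.2.2).trans σ := by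
  rw [phi, dif_pos (phiCond_of_full hk h1 hfull)]

lemma pref_phi_eq (hk : 2 ≤ k) (h1 : (Finset.univ : Finset (Fin n)) ∉ 𝒜)
    (hfull : (hitF 𝒜 σ).card = k + 1)
    {m : ℕ} (hm1 : tOf 𝒜 σ 1 ≤ m) (hm2 : m ≤ tOf 𝒜 σ (k-1)) :
    pref (phi k 𝒜 σ) m = pref σ m := by
  rw [phi_eq_of_full hk h1 hfull]
  ext x
  rw [mem_pref, mem_pref, Equiv.symm_trans_apply]
  exact rho_symm_lt_iff _ _ _ _ hm1 hm2 (σ.symm x)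

lemma enum_isPref_phi (hk : 2 ≤ k) (h1 : (Finset.univ : Finset (Fin n)) ∉ 𝒜)
    (hfull : (hitF 𝒜 σ).card = k + 1) {j : ℕ} (hj1 : 1 ≤ j) (hj2 : j ≤ k - 1) :
    isPref (phi k 𝒜 σ) (enum (hitF 𝒜 σ) j) := by
  have hc := isChain_hitF 𝒜 σ
  have hcard1 : tOf 𝒜 σ 1 ≤ (enum (hitF 𝒜 σ) j).card :=
    Finset.card_le_card (enum_subset hc hj1 (by omega))
  have hcard2 : (enum (hitF 𝒜 σ) j).card ≤ tOf 𝒜 σ (k-1) :=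
    Finset.card_le_card (enum_subset hc hj2 (by omega))
  unfold isPref
  rw [pref_phi_eq hk h1 hfull hcard1 hcard2]
  exact enum_isPref hfull (by omega)

lemma enum_mem_hitF_phi (hk : 2 ≤ k) (h1 : (Finset.univ : Finset (Fin n)) ∉ 𝒜)
    (hfull : (hitF 𝒜 σ).card = k + 1) {j : ℕ} (hj1 : 1 ≤ j) (hj2 : j ≤ k - 1) :
    enum (hitF 𝒜 σ) j ∈ hitF 𝒜 (phi k 𝒜 σ) :=
  mem_hitF.mpr ⟨enum_mem_A hfull (by omega), enum_isPref_phi hk h1 hfull hj1 hj2⟩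

lemma not_isPref_phi_bot (hk : 2 ≤ k) (h0 : ∅ ∉ 𝒜) (h1 : (Finset.univ : Finset (Fin n)) ∉ 𝒜)
    (hfull : (hitF 𝒜 σ).card = k + 1) :
    ¬ isPref (phi k 𝒜 σ) (enum (hitF 𝒜 σ) 0) := by
  intro hP
  have ht0 := t0_pos hk h0 hfull
  have hcond := phiCond_of_full hk h1 hfull
  have ht0n : tOf 𝒜 σ 0 < n := by
    have := hcond.1; have := hcond.2.1; have := hcond.2.2.1; have := hcond.2.2.2; omega
  set x : Fin n := σ ⟨tOf 𝒜 σ 0, ht0n⟩ with hx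
  have hxmem : x ∈ pref (phi k 𝒜 σ) (tOf 𝒜 σ 0) := by
    rw [mem_pref, phi_eq_of_full hk h1 hfull, Equiv.symm_trans_apply, hx,
      Equiv.symm_apply_apply, rho_symm_t1]
    exact ht0
  have hxnot : x ∉ enum (hitF 𝒜 σ) 0 := by
    have : enum (hitF 𝒜 σ) 0 = pref σ (tOf 𝒜 σ 0) := (enum_isPref hfull (by omega)).symm
    rw [this, mem_pref, hx, Equiv.symm_apply_apply]
    simp
  apply hxnot
  rw [← hP]
  exact hxmem

lemma not_isPref_phi_top (hk : 2 ≤ k) (h1 : (Finset.univ : Finset (Fin n)) ∉ 𝒜)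
    (hfull : (hitF 𝒜 σ).card = k + 1) :
    ¬ isPref (phi k 𝒜 σ) (enum (hitF 𝒜 σ) k) := by
  intro hP
  have hcond := phiCond_of_full hk h1 hfull
  set x : Fin n := σ ⟨tOf 𝒜 σ k, hcond.2.2.2⟩ with hx
  have hxmem : x ∈ pref (phi k 𝒜 σ) (tOf 𝒜 σ k) := by
    rw [mem_pref, phi_eq_of_full hk h1 hfull, Equiv.symm_trans_apply, hx,
      Equiv.symm_apply_apply, rho_symm_tk1]
    exact hcond.2.2.1
  have hxnot : x ∉ enum (hitF 𝒜 σ) k := by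
    have : enum (hitF 𝒜 σ) k = pref σ (tOf 𝒜 σ k) := (enum_isPref hfull (by omega)).symm
    rw [this, mem_pref, hx, Equiv.symm_apply_apply]
    simp
  apply hxnot
  rw [← hP]
  exact hxmem

end Phi

section PhiMain

variable {k : ℕ} {𝒜 : Finset (Finset (Fin n))} {σ : Equiv.Perm (Fin n)}

lemma hit_phi_between (hk : 2 ≤ k) (hY : ¬ ContainsYk k 𝒜) (hY' : ¬ ContainsYk' k 𝒜)
    (h0 : ∅ ∉ 𝒜) (h1 : (Finset.univ : Finset (Fin n)) ∉ 𝒜)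
    (hfull : (hitF 𝒜 σ).card = k + 1)
    {X : Finset (Fin n)} (hX : X ∈ hitF 𝒜 (phi k 𝒜 σ)) :
    enum (hitF 𝒜 σ) 1 ⊆ X ∧ X ⊆ enum (hitF 𝒜 σ) (k-1) := by
  obtain ⟨hXA, hXP⟩ := mem_hitF.mp hX
  constructor
  · rcases isPref_total hXP (enum_isPref_phi hk h1 hfull le_rfl (by omega)) with h | h
    · -- X ⊆ E 1
      rcases eq_or_ne X (enum (hitF 𝒜 σ) 1) with rfl | hne
      · exact Finset.Subset.refl _
      · exfalso
        have hss : X ⊂ enum (hitF 𝒜 σ) 1 := ssubset_of_subset_of_ne h hne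
        have h01 : enum (hitF 𝒜 σ) 0 ⊂ enum (hitF 𝒜 σ) 1 :=
          enum_ssubset (isChain_hitF 𝒜 σ) (by omega) (by omega)
        have : X = enum (hitF 𝒜 σ) 0 :=
          down_unique hk hY' hfull hXA (enum_mem_A hfull (by omega)) hss h01
        exact not_isPref_phi_bot hk h0 h1 hfull (this ▸ hXP)
    · exact h
  · rcases isPref_total hXP (enum_isPref_phi hk h1 hfull (by omega) le_rfl) with h | h
    · exact h
    · rcases eq_or_ne X (enum (hitF 𝒜 σ) (k-1)) with rfl | hne
      · exact Finset.Subset.refl _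
      · exfalso
        have hss : enum (hitF 𝒜 σ) (k-1) ⊂ X := ssubset_of_subset_of_ne h (Ne.symm hne)
        have hks : enum (hitF 𝒜 σ) (k-1) ⊂ enum (hitF 𝒜 σ) k :=
          enum_ssubset (isChain_hitF 𝒜 σ) (by omega) (by omega)
        have : X = enum (hitF 𝒜 σ) k :=
          up_unique hk hY hfull hXA (enum_mem_A hfull (by omega)) hss hks
        exact not_isPref_phi_top hk h1 hfull (this ▸ hXP)

lemma enum_injOn (hfull : (hitF 𝒜 σ).card = k + 1) {i j : ℕ} (hi : i ≤ k) (hj : j ≤ k)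
    (h : enum (hitF 𝒜 σ) i = enum (hitF 𝒜 σ) j) : i = j := by
  have hc := isChain_hitF 𝒜 σ
  have h1 := rank_enum hc (show i < (hitF 𝒜 σ).card by omega)
  have h2 := rank_enum hc (show j < (hitF 𝒜 σ).card by omega)
  rw [h] at h1
  omega

lemma hitF_phi_eq (hk : 2 ≤ k) (hY : ¬ ContainsYk k 𝒜) (hY' : ¬ ContainsYk' k 𝒜)
    (h0 : ∅ ∉ 𝒜) (h1 : (Finset.univ : Finset (Fin n)) ∉ 𝒜)
    (hfull : (hitF 𝒜 σ).card = k + 1) :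
    hitF 𝒜 (phi k 𝒜 σ) = (Finset.Icc 1 (k-1)).image (enum (hitF 𝒜 σ)) := by
  have hc := isChain_hitF 𝒜 σ
  apply Finset.Subset.antisymm
  · intro X hX
    obtain ⟨hlo, hhi⟩ := hit_phi_between hk hY hY' h0 h1 hfull hX
    obtain ⟨hXA, hXP⟩ := mem_hitF.mp hX
    rw [Finset.mem_image]
    by_contra hnot
    push_neg at hnot
    have hXne : ∀ j : ℕ, j ≤ k → X ≠ enum (hitF 𝒜 σ) j := by
      intro j hj hEq
      rcases Nat.lt_or_ge j 1 with hj0 | hj1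
      · have hj' : j = 0 := by omega
        rw [hj'] at hEq
        have h01 : enum (hitF 𝒜 σ) 0 ⊂ enum (hitF 𝒜 σ) 1 :=
          enum_ssubset hc (by omega) (by omega)
        rw [hEq] at hlo
        exact (not_subset_of_ssubset h01) hlo
      · rcases Nat.lt_or_ge j k with hjk | hjk
        · exact hnot _ (Finset.mem_Icc.mpr ⟨hj1, by omega⟩) hEq.symm
        · have hj' : j = k := by omega
          rw [hj'] at hEq
          have hks : enum (hitF 𝒜 σ) (k-1) ⊂ enum (hitF 𝒜 σ) k :=
            enum_ssubset hc (by omega) (by omega)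
          rw [hEq] at hhi
          exact (not_subset_of_ssubset hks) hhi
    -- build a (k+2)-chain
    set 𝒟 : Finset (Finset (Fin n)) :=
      insert X ((Finset.range (k+1)).image (enum (hitF 𝒜 σ))) with h𝒟
    have hXsub : ∀ j : ℕ, j ≤ k → X ⊆ enum (hitF 𝒜 σ) j ∨ enum (hitF 𝒜 σ) j ⊆ X := by
      intro j hj
      rcases Nat.lt_or_ge j 1 with hj0 | hj1
      · have hj' : j = 0 := by omega
        rw [hj']
        exact Or.inr ((enum_subset hc (by omega) (by omega)).trans hlo)
      · rcases Nat.lt_or_ge j k with hjk | hjk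
        · exact isPref_total hXP (enum_isPref_phi hk h1 hfull hj1 (by omega))
        · have hj' : j = k := by omega
          rw [hj']
          exact Or.inl (hhi.trans (enum_subset hc (by omega) (by omega)))
    have hchain : IsChain (· ⊆ ·) (𝒟 : Set (Finset (Fin n))) := by
      intro a ha b hb hab
      simp only [h𝒟, Finset.coe_insert, Set.mem_insert_iff, Finset.coe_image,
        Set.mem_image, Finset.mem_coe, Finset.mem_range] at ha hb
      rcases ha with rfl | ⟨i, hi, rfl⟩
      · rcases hb with rfl | ⟨j, hj, rfl⟩
        · exact absurd rfl hab
        · exact hXsub j (by omega)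
      · rcases hb with rfl | ⟨j, hj, rfl⟩
        · exact Or.symm (hXsub i (by omega))
        · exact chain_cases hc (enum_mem hc (by omega)) (enum_mem hc (by omega))
    have hXnotmem : X ∉ (Finset.range (k+1)).image (enum (hitF 𝒜 σ)) := by
      rw [Finset.mem_image]
      rintro ⟨j, hj, rfl⟩
      exact hXne j (by simpa using Nat.lt_succ_iff.mp (Finset.mem_range.mp hj)) rfl
    have hcard : 𝒟.card = k + 2 := by
      rw [h𝒟, Finset.card_insert_of_notMem hXnotmem,
        Finset.card_image_of_injOn (fun i hi j hj h =>
          enum_injOn hfull (Nat.lt_succ_iff.mp (Finset.mem_range.mp hi))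
            (Nat.lt_succ_iff.mp (Finset.mem_range.mp hj)) h),
        Finset.card_range]
    have hsub𝒜 : 𝒟 ⊆ 𝒜 := by
      intro Z hZ
      rcases Finset.mem_insert.mp hZ with rfl | hZ
      · exact hXA
      · rcases Finset.mem_image.mp hZ with ⟨j, hj, rfl⟩
        exact enum_mem_A hfull (Nat.lt_succ_iff.mp (Finset.mem_range.mp hj))
    exact hY (chain_to_Yk hk hchain hsub𝒜 hcard)
  · intro Z hZ
    rcases Finset.mem_image.mp hZ with ⟨j, hj, rfl⟩
    obtain ⟨hj1, hj2⟩ := Finset.mem_Icc.mp hj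
    exact enum_mem_hitF_phi hk h1 hfull hj1 hj2

lemma card_hitF_phi_le (hk : 2 ≤ k) (hY : ¬ ContainsYk k 𝒜) (hY' : ¬ ContainsYk' k 𝒜)
    (h0 : ∅ ∉ 𝒜) (h1 : (Finset.univ : Finset (Fin n)) ∉ 𝒜)
    (hfull : (hitF 𝒜 σ).card = k + 1) :
    (hitF 𝒜 (phi k 𝒜 σ)).card ≤ k - 1 := by
  rw [hitF_phi_eq hk hY hY' h0 h1 hfull]
  calc ((Finset.Icc 1 (k-1)).image (enum (hitF 𝒜 σ))).card
      ≤ (Finset.Icc 1 (k-1)).card := Finset.card_image_le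
    _ = k - 1 := by rw [Nat.card_Icc]; omega

end PhiMain

section PhiInj

variable {k : ℕ} {𝒜 : Finset (Finset (Fin n))}

lemma rho_congr {t1 t2 tk tk1 s1 s2 sk sk1 : ℕ}
    (h2 : t1 < t2) (h3 : t2 ≤ tk) (h4 : tk < tk1) (h5 : tk1 < n)
    (e1 : t1 = s1) (e2 : t2 = s2) (e3 : tk = sk) (e4 : tk1 = sk1) :
    rho (n := n) t1 t2 tk tk1 h2 h3 h4 h5
      = rho s1 s2 sk sk1 (e1 ▸ e2 ▸ h2) (e2 ▸ e3 ▸ h3) (e3 ▸ e4 ▸ h4) (e4 ▸ h5) := by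
  subst e1; subst e2; subst e3; subst e4; rfl

lemma hitF_eq_image {σ : Equiv.Perm (Fin n)} (hfull : (hitF 𝒜 σ).card = k + 1) :
    hitF 𝒜 σ = (Finset.range (k+1)).image (enum (hitF 𝒜 σ)) := by
  have hc := isChain_hitF 𝒜 σ
  apply Finset.Subset.antisymm
  · intro X hX
    rw [Finset.mem_image]
    exact ⟨rank (hitF 𝒜 σ) X, Finset.mem_range.mpr (by have := rank_lt_card hX; omega),
      enum_eq_of_rank hc hX⟩
  · intro Z hZ
    rcases Finset.mem_image.mp hZ with ⟨j, hj, rfl⟩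
    exact enum_mem hc (by rw [hfull]; exact Finset.mem_range.mp hj)

lemma phi_inj (hk : 2 ≤ k) (hY : ¬ ContainsYk k 𝒜) (hY' : ¬ ContainsYk' k 𝒜)
    (h0 : ∅ ∉ 𝒜) (h1 : (Finset.univ : Finset (Fin n)) ∉ 𝒜)
    {σ τ : Equiv.Perm (Fin n)} (hfσ : (hitF 𝒜 σ).card = k + 1)
    (hfτ : (hitF 𝒜 τ).card = k + 1) (heq : phi k 𝒜 σ = phi k 𝒜 τ) : σ = τ := by
  have hcσ := isChain_hitF 𝒜 σ
  have hcτ := isChain_hitF 𝒜 τ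
  -- the two middle anchors agree
  have hG1mem : enum (hitF 𝒜 τ) 1 ∈ hitF 𝒜 (phi k 𝒜 σ) := by
    rw [heq]; exact enum_mem_hitF_phi hk h1 hfτ le_rfl (by omega)
  have hE1mem : enum (hitF 𝒜 σ) 1 ∈ hitF 𝒜 (phi k 𝒜 τ) := by
    rw [← heq]; exact enum_mem_hitF_phi hk h1 hfσ le_rfl (by omega)
  have hGk1mem : enum (hitF 𝒜 τ) (k-1) ∈ hitF 𝒜 (phi k 𝒜 σ) := by
    rw [heq]; exact enum_mem_hitF_phi hk h1 hfτ (by omega) le_rfl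
  have hEk1mem : enum (hitF 𝒜 σ) (k-1) ∈ hitF 𝒜 (phi k 𝒜 τ) := by
    rw [← heq]; exact enum_mem_hitF_phi hk h1 hfσ (by omega) le_rfl
  have h1eq : enum (hitF 𝒜 σ) 1 = enum (hitF 𝒜 τ) 1 :=
    Finset.Subset.antisymm
      (hit_phi_between hk hY hY' h0 h1 hfσ hG1mem).1
      (hit_phi_between hk hY hY' h0 h1 hfτ hE1mem).1
  have hk1eq : enum (hitF 𝒜 σ) (k-1) = enum (hitF 𝒜 τ) (k-1) :=
    Finset.Subset.antisymm
      (hit_phi_between hk hY hY' h0 h1 hfτ hEk1mem).2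
      (hit_phi_between hk hY hY' h0 h1 hfσ hGk1mem).2
  -- the extreme anchors agree
  have h0eq : enum (hitF 𝒜 σ) 0 = enum (hitF 𝒜 τ) 0 := by
    apply down_unique hk hY' hfσ (enum_mem_A hfσ (by omega)) (enum_mem_A hfτ (by omega))
    · exact enum_ssubset hcσ (by omega) (by omega)
    · rw [h1eq]
      exact enum_ssubset hcτ (by omega) (by omega)
  have hkeq : enum (hitF 𝒜 σ) k = enum (hitF 𝒜 τ) k := by
    apply up_unique hk hY hfσ (enum_mem_A hfσ (by omega)) (enum_mem_A hfτ (by omega))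
    · exact enum_ssubset hcσ (by omega) (by omega)
    · rw [hk1eq]
      exact enum_ssubset hcτ (by omega) (by omega)
  -- the hit families agree
  have hHF : hitF 𝒜 σ = hitF 𝒜 τ := by
    have hσi := hitF_phi_eq hk hY hY' h0 h1 hfσ
    have hτi := hitF_phi_eq hk hY hY' h0 h1 hfτ
    rw [heq, hτi] at hσi
    -- hσi : (Icc 1 (k-1)).image (enum (hitF 𝒜 τ)) = (Icc 1 (k-1)).image (enum (hitF 𝒜 σ))
    rw [hitF_eq_image hfσ, hitF_eq_image hfτ]
    apply Finset.Subset.antisymm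
    · intro Z hZ
      rcases Finset.mem_image.mp hZ with ⟨j, hjr, rfl⟩
      have hj : j ≤ k := by have := Finset.mem_range.mp hjr; omega
      rcases Nat.lt_or_ge j 1 with hj0 | hj1
      · have hj' : j = 0 := by omega
        rw [hj', h0eq]
        exact Finset.mem_image.mpr ⟨0, Finset.mem_range.mpr (by omega), rfl⟩
      · rcases Nat.lt_or_ge j k with hjk | hjk
        · have : enum (hitF 𝒜 σ) j ∈ (Finset.Icc 1 (k-1)).image (enum (hitF 𝒜 τ)) := by
            rw [hσi]
            exact Finset.mem_image.mpr ⟨j, Finset.mem_Icc.mpr ⟨hj1, by omega⟩, rfl⟩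
          rcases Finset.mem_image.mp this with ⟨j', hj', hEq⟩
          exact Finset.mem_image.mpr ⟨j', Finset.mem_range.mpr
            (by have := (Finset.mem_Icc.mp hj').2; omega), hEq⟩
        · have hj' : j = k := by omega
          rw [hj', hkeq]
          exact Finset.mem_image.mpr ⟨k, Finset.mem_range.mpr (by omega), rfl⟩
    · intro Z hZ
      rcases Finset.mem_image.mp hZ with ⟨j, hjr, rfl⟩
      have hj : j ≤ k := by have := Finset.mem_range.mp hjr; omega
      rcases Nat.lt_or_ge j 1 with hj0 | hj1
      · have hj' : j = 0 := by omega
        rw [hj', ← h0eq]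
        exact Finset.mem_image.mpr ⟨0, Finset.mem_range.mpr (by omega), rfl⟩
      · rcases Nat.lt_or_ge j k with hjk | hjk
        · have : enum (hitF 𝒜 τ) j ∈ (Finset.Icc 1 (k-1)).image (enum (hitF 𝒜 σ)) := by
            rw [← hσi]
            exact Finset.mem_image.mpr ⟨j, Finset.mem_Icc.mpr ⟨hj1, by omega⟩, rfl⟩
          rcases Finset.mem_image.mp this with ⟨j', hj', hEq⟩
          exact Finset.mem_image.mpr ⟨j', Finset.mem_range.mpr
            (by have := (Finset.mem_Icc.mp hj').2; omega), hEq⟩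
        · have hj' : j = k := by omega
          rw [hj', ← hkeq]
          exact Finset.mem_image.mpr ⟨k, Finset.mem_range.mpr (by omega), rfl⟩
  -- conclude
  have hT : ∀ i : ℕ, tOf 𝒜 σ i = tOf 𝒜 τ i := by
    intro i
    unfold tOf
    rw [hHF]
  have hcondσ := phiCond_of_full hk h1 hfσ
  have hrho : rho (tOf 𝒜 σ 0) (tOf 𝒜 σ 1) (tOf 𝒜 σ (k-1)) (tOf 𝒜 σ k)
      hcondσ.1 hcondσ.2.1 hcondσ.2.2.1 hcondσ.2.2.2
      = rho (tOf 𝒜 τ 0) (tOf 𝒜 τ 1) (tOf 𝒜 τ (k-1)) (tOf 𝒜 τ k)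
        ((hT 0) ▸ (hT 1) ▸ hcondσ.1) ((hT 1) ▸ (hT (k-1)) ▸ hcondσ.2.1)
        ((hT (k-1)) ▸ (hT k) ▸ hcondσ.2.2.1) ((hT k) ▸ hcondσ.2.2.2) :=
    rho_congr _ _ _ _ (hT 0) (hT 1) (hT (k-1)) (hT k)
  have hphiσ := phi_eq_of_full hk h1 hfσ
  have hphiτ := phi_eq_of_full hk h1 hfτ
  rw [hphiσ, hphiτ] at heq
  ext x
  have happ := congrArg (fun (e : Equiv.Perm (Fin n)) =>
    e ((rho (tOf 𝒜 σ 0) (tOf 𝒜 σ 1) (tOf 𝒜 σ (k-1)) (tOf 𝒜 σ k)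
      hcondσ.1 hcondσ.2.1 hcondσ.2.2.1 hcondσ.2.2.2).symm x)) heq
  simp only [Equiv.trans_apply] at happ
  rw [Equiv.apply_symm_apply] at happ
  -- happ : σ x = (rho τ-args) ((rho σ-args).symm x) applied through τ
  rw [happ]
  congr 1
  rw [← hrho]
  rw [Equiv.apply_symm_apply]

end PhiInj

section Counting

lemma card_filter_val_lt {m : ℕ} (h : m ≤ n) :
    ((Finset.univ : Finset (Fin n)).filter (fun y : Fin n => (y : ℕ) < m)).card = m := by
  have hfil : ((Finset.univ : Finset (Fin n)).filter (fun y : Fin n => (y : ℕ) < m)) =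
      (Finset.range m).attachFin (fun x hx => lt_of_lt_of_le (Finset.mem_range.mp hx) h) := by
    ext y
    simp [Finset.mem_attachFin]
  rw [hfil, Finset.card_attachFin, Finset.card_range]

lemma pref_eq_iff {σ : Equiv.Perm (Fin n)} {a : ℕ} {A : Finset (Fin n)} :
    pref σ a = A ↔ ∀ j : Fin n, ((j : ℕ) < a ↔ σ j ∈ A) := by
  constructor
  · intro h j
    rw [← h, mem_pref, Equiv.symm_apply_apply]
  · intro h
    ext x
    rw [mem_pref]
    have := h (σ.symm x)
    rwa [Equiv.apply_symm_apply] at this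

/-- The number of permutations with a given prefix set. -/
lemma card_pref_fiber (A : Finset (Fin n)) :
    ((Finset.univ : Finset (Equiv.Perm (Fin n))).filter
      (fun σ => pref σ A.card = A)).card = Nat.factorial A.card * Nat.factorial (n - A.card) := by
  classical
  set a := A.card with ha
  have han : a ≤ n := by
    have := Finset.card_le_univ A
    simpa using this
  -- subtype cardinalities
  have cardP : Fintype.card {j : Fin n // (j : ℕ) < a} = a := by
    rw [Fintype.card_subtype]
    exact card_filter_val_lt han
  have cardA : Fintype.card {x : Fin n // x ∈ A} = a := by
    rw [Fintype.card_coe]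
  have cardPc : Fintype.card {j : Fin n // ¬ (j : ℕ) < a} = n - a := by
    rw [Fintype.card_subtype_compl, cardP]
    simp
  have cardAc : Fintype.card {x : Fin n // x ∉ A} = n - a := by
    rw [Fintype.card_subtype_compl, cardA]
    simp
  -- the equivalence
  let T := ({j : Fin n // (j : ℕ) < a} ≃ {x : Fin n // x ∈ A}) ×
    ({j : Fin n // ¬ (j : ℕ) < a} ≃ {x : Fin n // x ∉ A})
  have hmain : ((Finset.univ : Finset (Equiv.Perm (Fin n))).filter
      (fun σ => pref σ A.card = A)).card = Fintype.card T := by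
    rw [← Fintype.card_subtype]
    apply Fintype.card_congr
    refine
      { toFun := fun σp =>
          ⟨Equiv.subtypeEquiv σp.1 (fun j => pref_eq_iff.mp σp.2 j),
           Equiv.subtypeEquiv σp.1 (fun j => not_iff_not.mpr (pref_eq_iff.mp σp.2 j))⟩
        invFun := fun ef =>
          ⟨Equiv.subtypeCongr ef.1 ef.2, pref_eq_iff.mpr (fun j => ?_)⟩
        left_inv := fun σp => ?_
        right_inv := fun ef => ?_ }
    · by_cases hj : (j : ℕ) < a
      · constructor
        · intro _
          have : Equiv.subtypeCongr ef.1 ef.2 j = (ef.1 ⟨j, hj⟩ : Fin n) := by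
            simp [Equiv.subtypeCongr, hj]
          rw [this]
          exact (ef.1 ⟨j, hj⟩).2
        · intro _; exact hj
      · constructor
        · intro h; exact absurd h hj
        · intro hmem
          exfalso
          have : Equiv.subtypeCongr ef.1 ef.2 j = (ef.2 ⟨j, hj⟩ : Fin n) := by
            simp [Equiv.subtypeCongr, hj]
          rw [this] at hmem
          exact (ef.2 ⟨j, hj⟩).2 hmem
    · apply Subtype.ext
      apply Equiv.ext
      intro j
      by_cases hj : (j : ℕ) < a
      · simp [Equiv.subtypeCongr, Equiv.subtypeEquiv, hj]
      · simp [Equiv.subtypeCongr, Equiv.subtypeEquiv, hj]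
    · apply Prod.ext
      · apply Equiv.ext
        intro j
        apply Subtype.ext
        simp [Equiv.subtypeCongr, Equiv.subtypeEquiv, j.2]
      · apply Equiv.ext
        intro j
        apply Subtype.ext
        simp [Equiv.subtypeCongr, Equiv.subtypeEquiv, j.2]
  rw [hmain]
  have e1 : {j : Fin n // (j : ℕ) < a} ≃ {x : Fin n // x ∈ A} :=
    Fintype.equivOfCardEq (by rw [cardP, cardA])
  have e2 : {j : Fin n // ¬ (j : ℕ) < a} ≃ {x : Fin n // x ∉ A} :=
    Fintype.equivOfCardEq (by rw [cardPc, cardAc])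
  show Fintype.card (_ × _) = _
  rw [Fintype.card_prod, Fintype.card_equiv e1, Fintype.card_equiv e2, cardP, cardPc]

end Counting

section Final

variable {k : ℕ} {𝒜 : Finset (Finset (Fin n))}

lemma sum_hits_eq (𝒜 : Finset (Finset (Fin n))) :
    ∑ σ : Equiv.Perm (Fin n), (hitF 𝒜 σ).card
      = ∑ A ∈ 𝒜, Nat.factorial A.card * Nat.factorial (n - A.card) := by
  have step1 : ∑ σ : Equiv.Perm (Fin n), (hitF 𝒜 σ).card
      = ∑ σ : Equiv.Perm (Fin n), ∑ A ∈ 𝒜, (if isPref σ A then 1 else 0) := by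
    apply Finset.sum_congr rfl
    intro σ _
    rw [hitF, Finset.card_filter]
  rw [step1, Finset.sum_comm]
  apply Finset.sum_congr rfl
  intro A _
  rw [← Finset.card_filter]
  rw [← card_pref_fiber A]
  apply Finset.card_nbij id
  · intro σ hσ
    simp only [Finset.coe_filter, Finset.mem_filter, Finset.mem_univ, true_and, Set.mem_setOf_eq] at hσ ⊢
    exact hσ
  · intro σ hσ τ hτ h
    exact h
  · intro σ hσ
    simp only [Finset.coe_filter, Set.mem_setOf_eq, Finset.mem_univ, true_and] at hσ
    exact ⟨σ, by simp only [Finset.coe_filter, Set.mem_setOf_eq, Finset.mem_univ, true_and]; exact hσ, rfl⟩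

lemma sum_hits_le (hk : 2 ≤ k) (hY : ¬ ContainsYk k 𝒜) (hY' : ¬ ContainsYk' k 𝒜)
    (h0 : ∅ ∉ 𝒜) (h1 : (Finset.univ : Finset (Fin n)) ∉ 𝒜) :
    ∑ σ : Equiv.Perm (Fin n), (hitF 𝒜 σ).card ≤ k * Nat.factorial n := by
  classical
  set F := Finset.univ.filter (fun σ : Equiv.Perm (Fin n) => (hitF 𝒜 σ).card = k + 1) with hF
  set G := Finset.univ.filter (fun σ : Equiv.Perm (Fin n) => ¬ (hitF 𝒜 σ).card = k + 1) with hG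
  set D := G.filter (fun σ : Equiv.Perm (Fin n) => (hitF 𝒜 σ).card ≤ k - 1) with hD
  set R := G.filter (fun σ : Equiv.Perm (Fin n) => ¬ (hitF 𝒜 σ).card ≤ k - 1) with hR
  have hFD : F.card ≤ D.card := by
    apply Finset.card_le_card_of_injOn (phi k 𝒜)
    · intro σ hσ
      rw [hF, Finset.mem_coe, Finset.mem_filter] at hσ
      rw [Finset.mem_coe, hD, Finset.mem_filter, hG, Finset.mem_filter]
      have hle := card_hitF_phi_le hk hY hY' h0 h1 hσ.2
      exact ⟨⟨Finset.mem_univ _, by omega⟩, hle⟩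
    · intro σ hσ τ hτ heq
      simp only [hF, Finset.coe_filter, Set.mem_setOf_eq, Finset.mem_univ, true_and] at hσ hτ
      exact phi_inj hk hY hY' h0 h1 hσ hτ heq
  have hsplit1 : ∑ σ ∈ F, (hitF 𝒜 σ).card + ∑ σ ∈ G, (hitF 𝒜 σ).card
      = ∑ σ : Equiv.Perm (Fin n), (hitF 𝒜 σ).card :=
    Finset.sum_filter_add_sum_filter_not _ _ _
  have hsplit2 : ∑ σ ∈ D, (hitF 𝒜 σ).card + ∑ σ ∈ R, (hitF 𝒜 σ).card
      = ∑ σ ∈ G, (hitF 𝒜 σ).card :=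
    Finset.sum_filter_add_sum_filter_not _ _ _
  have hcard1 : F.card + G.card = Nat.factorial n := by
    rw [hF, hG]
    rw [Finset.card_filter_add_card_filter_not]
    rw [Finset.card_univ, Fintype.card_perm, Fintype.card_fin]
  have hcard2 : D.card + R.card = G.card := by
    rw [hD, hR]
    exact Finset.card_filter_add_card_filter_not _
  have hsumF : ∑ σ ∈ F, (hitF 𝒜 σ).card = (k+1) * F.card := by
    rw [Finset.sum_congr rfl (fun σ hσ => (Finset.mem_filter.mp hσ).2)]
    rw [Finset.sum_const, smul_eq_mul, mul_comm]
  have hsumD : ∑ σ ∈ D, (hitF 𝒜 σ).card ≤ (k-1) * D.card := by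
    rw [mul_comm]
    calc ∑ σ ∈ D, (hitF 𝒜 σ).card ≤ ∑ σ ∈ D, (k-1) := by
          apply Finset.sum_le_sum
          intro σ hσ
          exact (Finset.mem_filter.mp hσ).2
      _ = D.card * (k-1) := by rw [Finset.sum_const, smul_eq_mul]
  have hsumR : ∑ σ ∈ R, (hitF 𝒜 σ).card ≤ k * R.card := by
    rw [mul_comm]
    calc ∑ σ ∈ R, (hitF 𝒜 σ).card ≤ ∑ σ ∈ R, k := by
          apply Finset.sum_le_sum
          intro σ hσ
          rw [hR, Finset.mem_filter, hG, Finset.mem_filter] at hσ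
          have := hits_le hk hY σ
          omega
      _ = R.card * k := by rw [Finset.sum_const, smul_eq_mul]
  have hkey : (k+1) * F.card + ((k-1) * D.card + k * R.card)
      ≤ k * (F.card + (D.card + R.card)) := by
    obtain ⟨k', rfl⟩ : ∃ k', k = k' + 2 := ⟨k - 2, by omega⟩
    set f := F.card
    set d := D.card
    set r := R.card
    have e1 : (k' + 2 + 1) * f = (k' + 2) * f + f := by ring
    have e2 : (k' + 2 - 1) * d = (k' + 1) * d := by
      congr 1
    have e3 : (k' + 2) * (f + (d + r)) = (k' + 2) * f + ((k' + 1) * d + d) + (k' + 2) * r := by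
      ring
    rw [e1, e2, e3]
    omega
  calc ∑ σ : Equiv.Perm (Fin n), (hitF 𝒜 σ).card
      = ∑ σ ∈ F, (hitF 𝒜 σ).card + (∑ σ ∈ D, (hitF 𝒜 σ).card + ∑ σ ∈ R, (hitF 𝒜 σ).card) := by
        rw [hsplit2, hsplit1]
    _ ≤ (k+1) * F.card + ((k-1) * D.card + k * R.card) := by
        rw [hsumF]
        exact Nat.add_le_add le_rfl (Nat.add_le_add hsumD hsumR)
    _ ≤ k * (F.card + (D.card + R.card)) := hkey
    _ = k * Nat.factorial n := by rw [hcard2, hcard1]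

end Final

end LymYk

/-- LYM-type inequality for families containing neither `Y_k` nor `Y_k'`
and avoiding `∅` and `[n]`. -/
theorem lym_Yk_Yk' (n k : ℕ) (hk : 2 ≤ k) (hn : k + 1 ≤ n) (𝒜 : Finset (Finset (Fin n)))
    (hY : ¬ ContainsYk k 𝒜) (hY' : ¬ ContainsYk' k 𝒜)
    (h0 : ∅ ∉ 𝒜) (h1 : (Finset.univ : Finset (Fin n)) ∉ 𝒜) :
    ∑ A ∈ 𝒜, ((n.choose A.card : ℚ))⁻¹ ≤ (k : ℚ) := by
  classical
  have key : ∑ A ∈ 𝒜, Nat.factorial A.card * Nat.factorial (n - A.card)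
      ≤ k * Nat.factorial n := by
    rw [← LymYk.sum_hits_eq 𝒜]
    exact LymYk.sum_hits_le hk hY hY' h0 h1
  have hnfac : (0:ℚ) < (Nat.factorial n : ℚ) := by exact_mod_cast Nat.factorial_pos n
  have hterm : ∀ A ∈ 𝒜, ((n.choose A.card : ℚ))⁻¹
      = ((Nat.factorial A.card * Nat.factorial (n - A.card) : ℕ) : ℚ)
        / (Nat.factorial n : ℚ) := by
    intro A hA
    have hle : A.card ≤ n := by simpa using Finset.card_le_univ A
    have hnat : n.choose A.card * (Nat.factorial A.card * Nat.factorial (n - A.card))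
        = Nat.factorial n := by
      rw [← Nat.choose_mul_factorial_mul_factorial hle]
      ring
    have hQ : ((n.choose A.card : ℚ))
        * (((Nat.factorial A.card * Nat.factorial (n - A.card) : ℕ)) : ℚ)
        = (Nat.factorial n : ℚ) := by exact_mod_cast congrArg (Nat.cast (R := ℚ)) hnat
    have hCpos : (0:ℚ) < (n.choose A.card : ℚ) := by
      exact_mod_cast Nat.choose_pos hle
    rw [eq_div_iff (ne_of_gt hnfac), ← hQ, inv_mul_cancel_left₀ (ne_of_gt hCpos)]
  calc ∑ A ∈ 𝒜, ((n.choose A.card : ℚ))⁻¹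
      = ∑ A ∈ 𝒜, ((Nat.factorial A.card * Nat.factorial (n - A.card) : ℕ) : ℚ)
        / (Nat.factorial n : ℚ) := Finset.sum_congr rfl hterm
    _ = (∑ A ∈ 𝒜, ((Nat.factorial A.card * Nat.factorial (n - A.card) : ℕ) : ℚ))
        / (Nat.factorial n : ℚ) := by rw [Finset.sum_div]
    _ ≤ ((k * Nat.factorial n : ℕ) : ℚ) / (Nat.factorial n : ℚ) := by
        gcongr
        exact_mod_cast key
    _ = (k : ℚ) := by
        push_cast
        rw [mul_div_assoc, div_self (ne_of_gt hnfac), mul_one]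
end

section
/- Let A ⊆ 2^[n] be a family that contains neither Y nor Y' as an induced subposet, with ∅ ∉ A and [n] ∉ A. Then the sum over all A ∈ A of 1/C(n,|A|) is at most 2. -/
open Finset

/-- The family `𝒜` contains `Y` as an induced subposet: four pairwise distinct sets
`w, x, y, z ∈ 𝒜` with `w ⊆ x`, `x ⊆ y`, `x ⊆ z`, `y ⊄ z` and `z ⊄ y`. -/
def ContainsInducedY {n : ℕ} (𝒜 : Finset (Finset (Fin n))) : Prop :=
  ∃ w x y z : Finset (Fin n),
    w ∈ 𝒜 ∧ x ∈ 𝒜 ∧ y ∈ 𝒜 ∧ z ∈ 𝒜 ∧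
    w ≠ x ∧ w ≠ y ∧ w ≠ z ∧ x ≠ y ∧ x ≠ z ∧ y ≠ z ∧
    w ⊆ x ∧ x ⊆ y ∧ x ⊆ z ∧ ¬ y ⊂ z ∧ ¬ z ⊂ y

/-- The family `𝒜` contains `Y'` as an induced subposet: four pairwise distinct sets
`w, x, y, z ∈ 𝒜` with `x ⊆ w`, `y ⊆ x`, `z ⊆ x`, `y ⊄ z` and `z ⊄ y`. -/
def ContainsInducedY' {n : ℕ} (𝒜 : Finset (Finset (Fin n))) : Prop :=
  ∃ w x y z : Finset (Fin n),
    w ∈ 𝒜 ∧ x ∈ 𝒜 ∧ y ∈ 𝒜 ∧ z ∈ 𝒜 ∧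
    w ≠ x ∧ w ≠ y ∧ w ≠ z ∧ x ≠ y ∧ x ≠ z ∧ y ≠ z ∧
    x ⊆ w ∧ y ⊆ x ∧ z ⊆ x ∧ ¬ y ⊂ z ∧ ¬ z ⊂ y

open Equiv

variable {n : ℕ}


def seg (σ : Equiv.Perm (Fin n)) (k : ℕ) : Finset (Fin n) :=
  Finset.univ.filter (fun v => ((σ.symm v : Fin n) : ℕ) < k)

lemma mem_seg {σ : Equiv.Perm (Fin n)} {k : ℕ} {v : Fin n} :
    v ∈ seg σ k ↔ ((σ.symm v : Fin n) : ℕ) < k := by simp [seg]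

def hits (σ : Equiv.Perm (Fin n)) (A : Finset (Fin n)) : Prop := seg σ A.card = A

instance (σ : Equiv.Perm (Fin n)) (A : Finset (Fin n)) : Decidable (hits σ A) := by
  unfold hits; infer_instance

lemma seg_mono {σ : Equiv.Perm (Fin n)} {k l : ℕ} (h : k ≤ l) : seg σ k ⊆ seg σ l := by
  intro v hv; rw [mem_seg] at *; omega

lemma hits_comparable {σ : Equiv.Perm (Fin n)} {A B : Finset (Fin n)}
    (hA : hits σ A) (hB : hits σ B) : A ⊆ B ∨ B ⊆ A := by
  rcases le_total A.card B.card with h | h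
  · left; rw [← hA, ← hB]; exact seg_mono h
  · right; rw [← hA, ← hB]; exact seg_mono h

lemma card_seg (σ : Equiv.Perm (Fin n)) {k : ℕ} (h : k ≤ n) : (seg σ k).card = k := by
  have h1 : seg σ k = (Finset.univ.filter (fun v : Fin n => (v : ℕ) < k)).image σ := by
    ext v
    simp only [mem_seg, Finset.mem_image, Finset.mem_filter, Finset.mem_univ, true_and]
    constructor
    · intro hv; exact ⟨σ.symm v, hv, by simp⟩
    · rintro ⟨w, hw, rfl⟩; simpa using hw
  rw [h1, Finset.card_image_of_injective _ σ.injective]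
  have h2 : (Finset.univ.filter (fun v : Fin n => (v : ℕ) < k)).image Fin.val = Finset.range k := by
    ext m
    simp only [Finset.mem_image, Finset.mem_filter, Finset.mem_univ, true_and, Finset.mem_range]
    constructor
    · rintro ⟨v, hv, rfl⟩; exact hv
    · intro hm; exact ⟨⟨m, lt_of_lt_of_le hm h⟩, hm, rfl⟩
  have := congrArg Finset.card h2
  rwa [Finset.card_image_of_injective _ Fin.val_injective, Finset.card_range] at this

lemma symm_mul_apply (ρ σ : Equiv.Perm (Fin n)) (v : Fin n) :
    (ρ * σ).symm v = σ.symm (ρ.symm v) := rfl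

lemma seg_mul (ρ σ : Equiv.Perm (Fin n)) (k : ℕ) :
    seg (ρ * σ) k = (seg σ k).image ρ := by
  ext v
  simp only [mem_seg, Finset.mem_image, symm_mul_apply]
  constructor
  · intro hv
    exact ⟨ρ.symm v, hv, by simp⟩
  · rintro ⟨w, hw, rfl⟩
    simpa using hw

lemma card_le_n (x : Finset (Fin n)) : x.card ≤ n := by
  simpa using Finset.card_le_univ x

/-- number of permutations of equal-size fibers agree -/
lemma fiber_congr (x y : Finset (Fin n)) (hc : x.card = y.card) :
    (Finset.univ.filter (fun σ : Equiv.Perm (Fin n) => hits σ x)).card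
      = (Finset.univ.filter (fun σ : Equiv.Perm (Fin n) => seg σ x.card = y)).card := by
  unfold hits
  classical
  -- find ρ with x.image ρ = y
  have e : {v // v ∈ x} ≃ {v // v ∈ y} := by
    apply Fintype.equivOfCardEq
    rw [Fintype.card_coe, Fintype.card_coe, hc]
  set ρ : Equiv.Perm (Fin n) := e.extendSubtype with hρ
  have himg : x.image ρ = y := by
    apply Finset.eq_of_subset_of_card_le
    · intro v hv
      obtain ⟨w, hw, rfl⟩ := Finset.mem_image.1 hv
      exact e.extendSubtype_mem w hw
    · rw [Finset.card_image_of_injective _ ρ.injective, hc]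
  apply Finset.card_bij (fun σ _ => ρ * σ)
  · intro σ hσ
    replace hσ : seg σ x.card = x := (Finset.mem_filter.1 hσ).2
    refine Finset.mem_filter.2 ⟨Finset.mem_univ _, ?_⟩
    rw [seg_mul, hσ, himg]
  · intro σ hσ τ hτ h
    exact mul_left_cancel h
  · intro τ hτ
    refine ⟨ρ⁻¹ * τ, ?_, by group⟩
    replace hτ : seg τ x.card = y := (Finset.mem_filter.1 hτ).2
    refine Finset.mem_filter.2 ⟨Finset.mem_univ _, ?_⟩
    rw [seg_mul, hτ, ← himg, Finset.image_image]
    ext v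
    simp

lemma fiber_mul_choose (x : Finset (Fin n)) :
    (Finset.univ.filter (fun σ : Equiv.Perm (Fin n) => hits σ x)).card * n.choose x.card
      = n.factorial := by
  classical
  have hs : x.card ≤ n := card_le_n x
  have hpart : (Finset.univ : Finset (Equiv.Perm (Fin n))).card
      = ∑ y ∈ Finset.univ.powersetCard x.card,
          (Finset.univ.filter (fun σ : Equiv.Perm (Fin n) => seg σ x.card = y)).card := by
    apply Finset.card_eq_sum_card_fiberwise
    intro σ _
    rw [Finset.mem_coe, Finset.mem_powersetCard]
    exact ⟨Finset.subset_univ _, card_seg σ hs⟩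
  have hconst : ∀ y ∈ Finset.univ.powersetCard x.card,
      (Finset.univ.filter (fun σ : Equiv.Perm (Fin n) => seg σ x.card = y)).card
        = (Finset.univ.filter (fun σ : Equiv.Perm (Fin n) => hits σ x)).card := by
    intro y hy
    rw [Finset.mem_powersetCard] at hy
    exact (fiber_congr x y hy.2.symm).symm
  rw [Finset.sum_congr rfl hconst, Finset.sum_const, smul_eq_mul, Finset.card_powersetCard] at hpart
  simp only [Finset.card_univ, Fintype.card_perm, Fintype.card_fin] at hpart
  rw [Nat.mul_comm]
  exact hpart.symm

lemma hits_iff {σ : Equiv.Perm (Fin n)} {A : Finset (Fin n)} :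
    hits σ A ↔ ∀ v, (((σ.symm v : Fin n) : ℕ) < A.card ↔ v ∈ A) := by
  unfold hits
  rw [Finset.ext_iff]
  exact forall_congr' (fun v => by rw [mem_seg])

/-- Swap-involution lemma: the permutations hitting `x` but avoiding every set of `S`
are at least half of all permutations hitting `x`. -/
lemma swap_count (x : Finset (Fin n)) (S : Finset (Finset (Fin n))) (p q : Fin n)
    (hp : ∀ a ∈ S, p ∈ a) (hq : ∀ a ∈ S, q ∉ a) (hpx : p ∈ x ↔ q ∈ x) :
    (Finset.univ.filter (fun σ : Equiv.Perm (Fin n) => hits σ x)).card ≤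
      2 * (Finset.univ.filter
          (fun σ : Equiv.Perm (Fin n) => hits σ x ∧ ∀ a ∈ S, ¬ hits σ a)).card := by
  classical
  set T := Finset.univ.filter (fun σ : Equiv.Perm (Fin n) => hits σ x) with hT
  set G := Finset.univ.filter
      (fun σ : Equiv.Perm (Fin n) => hits σ x ∧ ∀ a ∈ S, ¬ hits σ a) with hG
  set B := Finset.univ.filter
      (fun σ : Equiv.Perm (Fin n) => hits σ x ∧ ¬ ∀ a ∈ S, ¬ hits σ a) with hB
  have hTGB : T.card = G.card + B.card := by
    rw [hT, hG, hB]
    rw [← Finset.filter_filter, ← Finset.filter_filter,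
      Finset.card_filter_add_card_filter_not]
  have hkey : B.card ≤ G.card := by
    apply Finset.card_le_card_of_injOn (fun σ => Equiv.swap p q * σ)
    · intro σ hσ
      simp only [hB, Finset.mem_coe, Finset.mem_filter] at hσ
      obtain ⟨-, hx, hbad⟩ := hσ
      push_neg at hbad
      obtain ⟨a0, ha0S, ha0⟩ := hbad
      have hp0 : ((σ.symm p : Fin n) : ℕ) < a0.card := (hits_iff.1 ha0 p).2 (hp a0 ha0S)
      have hq0 : ¬ ((σ.symm q : Fin n) : ℕ) < a0.card :=
        fun h => hq a0 ha0S ((hits_iff.1 ha0 q).1 h)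
      have hsymm : ∀ v : Fin n, (Equiv.swap p q * σ).symm v = σ.symm (Equiv.swap p q v) := by
        intro v
        rw [symm_mul_apply, Equiv.symm_swap]
      rw [hG, Finset.mem_coe, Finset.mem_filter]
      refine ⟨Finset.mem_univ _, ?_, ?_⟩
      · rw [hits_iff]
        intro v
        rw [hsymm]
        rcases eq_or_ne v p with rfl | hvp
        · rw [Equiv.swap_apply_left]
          rw [hits_iff] at hx
          rw [hx q]
          exact hpx.symm
        rcases eq_or_ne v q with rfl | hvq
        · rw [Equiv.swap_apply_right]
          rw [hits_iff] at hx
          rw [hx p]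
          exact hpx
        · rw [Equiv.swap_apply_of_ne_of_ne hvp hvq]
          exact hits_iff.1 hx v
      · intro a haS ha
        rw [hits_iff] at ha
        have h1 : ((σ.symm q : Fin n) : ℕ) < a.card := by
          have := (ha p).2 (hp a haS)
          rwa [hsymm, Equiv.swap_apply_left] at this
        have h2 : ¬ ((σ.symm p : Fin n) : ℕ) < a.card := by
          intro h
          apply hq a haS
          have := (ha q).1 (by rwa [hsymm, Equiv.swap_apply_right])
          exact this
        omega
    · intro σ _ τ _ h
      exact mul_left_cancel h
  omega


section aux

variable (𝒜 : Finset (Finset (Fin n)))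

/-- the proper subsets of x lying in 𝒜 form a chain, provided x has a proper superset in 𝒜 -/
lemma chain_below (hY' : ¬ ContainsInducedY' 𝒜) {x w : Finset (Fin n)} (hx : x ∈ 𝒜)
    (hw : w ∈ 𝒜) (hxw : x ⊂ w) {a b : Finset (Fin n)} (ha : a ∈ 𝒜) (hax : a ⊂ x)
    (hb : b ∈ 𝒜) (hbx : b ⊂ x) : a ⊆ b ∨ b ⊆ a := by
  by_contra hcon
  push_neg at hcon
  obtain ⟨h1, h2⟩ := hcon
  apply hY'
  refine ⟨w, x, a, b, hw, hx, ha, hb, ?_, ?_, ?_, ?_, ?_, ?_, hxw.subset, hax.subset, hbx.subset,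
    ?_, ?_⟩
  · exact fun h => hxw.ne h.symm
  · exact (hax.trans hxw).ne'
  · exact (hbx.trans hxw).ne'
  · exact fun h => hax.ne h.symm
  · exact fun h => hbx.ne h.symm
  · exact fun h => h1 (h ▸ subset_rfl)
  · exact fun h => h1 h.subset
  · exact fun h => h2 h.subset

lemma chain_above (hY : ¬ ContainsInducedY 𝒜) {x w : Finset (Fin n)} (hx : x ∈ 𝒜)
    (hw : w ∈ 𝒜) (hwx : w ⊂ x) {a b : Finset (Fin n)} (ha : a ∈ 𝒜) (hax : x ⊂ a)
    (hb : b ∈ 𝒜) (hbx : x ⊂ b) : a ⊆ b ∨ b ⊆ a := by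
  by_contra hcon
  push_neg at hcon
  obtain ⟨h1, h2⟩ := hcon
  apply hY
  refine ⟨w, x, a, b, hw, hx, ha, hb, hwx.ne, (hwx.trans hax).ne, (hwx.trans hbx).ne,
    hax.ne, hbx.ne, ?_, hwx.subset, hax.subset, hbx.subset, ?_, ?_⟩
  · exact fun h => h1 (h ▸ subset_rfl)
  · exact fun h => h1 h.subset
  · exact fun h => h2 h.subset

end aux

section pq

variable (𝒜 : Finset (Finset (Fin n)))

lemma exists_pq_below (hY' : ¬ ContainsInducedY' 𝒜) (h0 : ∅ ∉ 𝒜) {x w B : Finset (Fin n)}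
    (hx : x ∈ 𝒜) (hw : w ∈ 𝒜) (hxw : x ⊂ w) (hB : B ∈ 𝒜) (hBx : B ⊂ x) :
    ∃ p q : Fin n, (∀ a ∈ 𝒜, a ⊂ x → p ∈ a) ∧ (∀ a ∈ 𝒜, a ⊂ x → q ∉ a) ∧
      p ∈ x ∧ q ∈ x := by
  classical
  set D := 𝒜.filter (fun a => a ⊂ x) with hD
  have hDne : D.Nonempty := ⟨B, by simp [hD, hB, hBx]⟩
  have hDmem : ∀ a, a ∈ D ↔ a ∈ 𝒜 ∧ a ⊂ x := by intro a; simp [hD]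
  have hchain : ∀ a ∈ D, ∀ b ∈ D, a ⊆ b ∨ b ⊆ a := by
    intro a ha b hb
    rw [hDmem] at ha hb
    exact chain_below 𝒜 hY' hx hw hxw ha.1 ha.2 hb.1 hb.2
  obtain ⟨m, hm, hmin⟩ : ∃ m ∈ D, ∀ b ∈ D, ¬ b < m := by
    obtain ⟨m, hm⟩ := Finset.exists_minimal hDne
    exact ⟨m, hm.1, fun b hb hlt => lt_irrefl _ (lt_of_lt_of_le hlt (hm.2 hb hlt.le))⟩
  obtain ⟨M, hM, hmax⟩ : ∃ M ∈ D, ∀ b ∈ D, ¬ M < b := by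
    obtain ⟨M, hM⟩ := Finset.exists_maximal hDne
    exact ⟨M, hM.1, fun b hb hlt => lt_irrefl _ (lt_of_lt_of_le hlt (hM.2 hb hlt.le))⟩
  have hmle : ∀ b ∈ D, m ⊆ b := by
    intro b hb
    rcases hchain m hm b hb with h | h
    · exact h
    · rcases h.ssubset_or_eq with h' | h'
      · exact absurd (Finset.lt_iff_ssubset.2 h') (hmin b hb)
      · exact le_of_eq h'.symm
  have hMge : ∀ b ∈ D, b ⊆ M := by
    intro b hb
    rcases hchain M hM b hb with h | h
    · rcases h.ssubset_or_eq with h' | h'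
      · exact absurd (Finset.lt_iff_ssubset.2 h') (hmax b hb)
      · exact le_of_eq h'.symm
    · exact h
  have hmne : m.Nonempty := by
    rw [Finset.nonempty_iff_ne_empty]
    intro h
    exact h0 (h ▸ ((hDmem m).1 hm).1)
  obtain ⟨p, hp⟩ := hmne
  obtain ⟨q, hqx, hqM⟩ := Finset.exists_of_ssubset ((hDmem M).1 hM).2
  refine ⟨p, q, ?_, ?_, ?_, hqx⟩
  · intro a ha hax
    exact hmle a ((hDmem a).2 ⟨ha, hax⟩) hp
  · intro a ha hax h
    exact hqM (hMge a ((hDmem a).2 ⟨ha, hax⟩) h)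
  · exact ((hDmem m).1 hm).2.subset (hmle m hm hp)

lemma exists_pq_above (hY : ¬ ContainsInducedY 𝒜) (h1 : (Finset.univ : Finset (Fin n)) ∉ 𝒜)
    {x w B : Finset (Fin n)}
    (hx : x ∈ 𝒜) (hw : w ∈ 𝒜) (hwx : w ⊂ x) (hB : B ∈ 𝒜) (hBx : x ⊂ B) :
    ∃ p q : Fin n, (∀ a ∈ 𝒜, x ⊂ a → p ∈ a) ∧ (∀ a ∈ 𝒜, x ⊂ a → q ∉ a) ∧
      p ∉ x ∧ q ∉ x := by
  classical
  set D := 𝒜.filter (fun a => x ⊂ a) with hD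
  have hDne : D.Nonempty := ⟨B, by simp [hD, hB, hBx]⟩
  have hDmem : ∀ a, a ∈ D ↔ a ∈ 𝒜 ∧ x ⊂ a := by intro a; simp [hD]
  have hchain : ∀ a ∈ D, ∀ b ∈ D, a ⊆ b ∨ b ⊆ a := by
    intro a ha b hb
    rw [hDmem] at ha hb
    exact chain_above 𝒜 hY hx hw hwx ha.1 ha.2 hb.1 hb.2
  obtain ⟨m, hm, hmin⟩ : ∃ m ∈ D, ∀ b ∈ D, ¬ b < m := by
    obtain ⟨m, hm⟩ := Finset.exists_minimal hDne
    exact ⟨m, hm.1, fun b hb hlt => lt_irrefl _ (lt_of_lt_of_le hlt (hm.2 hb hlt.le))⟩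
  obtain ⟨M, hM, hmax⟩ : ∃ M ∈ D, ∀ b ∈ D, ¬ M < b := by
    obtain ⟨M, hM⟩ := Finset.exists_maximal hDne
    exact ⟨M, hM.1, fun b hb hlt => lt_irrefl _ (lt_of_lt_of_le hlt (hM.2 hb hlt.le))⟩
  have hmle : ∀ b ∈ D, m ⊆ b := by
    intro b hb
    rcases hchain m hm b hb with h | h
    · exact h
    · rcases h.ssubset_or_eq with h' | h'
      · exact absurd (Finset.lt_iff_ssubset.2 h') (hmin b hb)
      · exact le_of_eq h'.symm
  have hMge : ∀ b ∈ D, b ⊆ M := by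
    intro b hb
    rcases hchain M hM b hb with h | h
    · rcases h.ssubset_or_eq with h' | h'
      · exact absurd (Finset.lt_iff_ssubset.2 h') (hmax b hb)
      · exact le_of_eq h'.symm
    · exact h
  obtain ⟨p, hpm, hpx⟩ := Finset.exists_of_ssubset ((hDmem m).1 hm).2
  have hMneq : M ≠ Finset.univ := fun h => h1 (h ▸ ((hDmem M).1 hM).1)
  have : ∃ q, q ∉ M := by
    by_contra h
    push_neg at h
    exact hMneq (Finset.eq_univ_iff_forall.2 h)
  obtain ⟨q, hqM⟩ := this
  refine ⟨p, q, ?_, ?_, hpx, ?_⟩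
  · intro a ha hax
    exact hmle a ((hDmem a).2 ⟨ha, hax⟩) hpm
  · intro a ha hax h
    exact hqM (hMge a ((hDmem a).2 ⟨ha, hax⟩) h)
  · exact fun h => hqM (((hDmem M).1 hM).2.subset h)

end pq


section count

variable (𝒜 : Finset (Finset (Fin n)))

def mins : Finset (Finset (Fin n)) := 𝒜.filter (fun A => ∀ B ∈ 𝒜, ¬ B ⊂ A)
def maxs : Finset (Finset (Fin n)) := 𝒜.filter (fun A => ∀ B ∈ 𝒜, ¬ A ⊂ B)
def mids : Finset (Finset (Fin n)) :=
  𝒜.filter (fun A => (∃ B ∈ 𝒜, B ⊂ A) ∧ (∃ B ∈ 𝒜, A ⊂ B))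

lemma per_sigma (σ : Equiv.Perm (Fin n)) :
    (𝒜.filter (fun A => hits σ A)).card ≤
      (if (∃ A ∈ mins 𝒜, hits σ A) then 1 else 0) +
      (if (∃ A ∈ maxs 𝒜, hits σ A) then 1 else 0) +
      ((mids 𝒜).filter (fun A => hits σ A)).card := by
  classical
  have hsub : 𝒜.filter (fun A => hits σ A) ⊆
      ((mins 𝒜).filter (fun A => hits σ A) ∪ (maxs 𝒜).filter (fun A => hits σ A)) ∪
      (mids 𝒜).filter (fun A => hits σ A) := by
    intro A hA
    rw [Finset.mem_filter] at hA
    obtain ⟨hA𝒜, hAh⟩ := hA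
    by_cases hlo : ∃ B ∈ 𝒜, B ⊂ A
    · by_cases hhi : ∃ B ∈ 𝒜, A ⊂ B
      · exact Finset.mem_union_right _ (Finset.mem_filter.2
          ⟨Finset.mem_filter.2 ⟨hA𝒜, hlo, hhi⟩, hAh⟩)
      · push_neg at hhi
        exact Finset.mem_union_left _ (Finset.mem_union_right _ (Finset.mem_filter.2
          ⟨Finset.mem_filter.2 ⟨hA𝒜, hhi⟩, hAh⟩))
    · push_neg at hlo
      exact Finset.mem_union_left _ (Finset.mem_union_left _ (Finset.mem_filter.2
        ⟨Finset.mem_filter.2 ⟨hA𝒜, hlo⟩, hAh⟩))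
  have hmins : ((mins 𝒜).filter (fun A => hits σ A)).card ≤
      (if (∃ A ∈ mins 𝒜, hits σ A) then 1 else 0) := by
    by_cases h : ∃ A ∈ mins 𝒜, hits σ A
    · rw [if_pos h]
      rw [Finset.card_le_one]
      intro a ha b hb
      rw [Finset.mem_filter] at ha hb
      obtain ⟨ha1, ha2⟩ := ha
      obtain ⟨hb1, hb2⟩ := hb
      rw [mins, Finset.mem_filter] at ha1 hb1
      rcases hits_comparable ha2 hb2 with h' | h'
      · rcases h'.ssubset_or_eq with h'' | h''
        · exact absurd h'' (hb1.2 a ha1.1)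
        · exact h''
      · rcases h'.ssubset_or_eq with h'' | h''
        · exact absurd h'' (ha1.2 b hb1.1)
        · exact h''.symm
    · rw [if_neg h, Nat.le_zero, Finset.card_eq_zero, Finset.eq_empty_iff_forall_notMem]
      intro a ha
      rw [Finset.mem_filter] at ha
      exact h ⟨a, ha.1, ha.2⟩
  have hmaxs : ((maxs 𝒜).filter (fun A => hits σ A)).card ≤
      (if (∃ A ∈ maxs 𝒜, hits σ A) then 1 else 0) := by
    by_cases h : ∃ A ∈ maxs 𝒜, hits σ A
    · rw [if_pos h]
      rw [Finset.card_le_one]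
      intro a ha b hb
      rw [Finset.mem_filter] at ha hb
      obtain ⟨ha1, ha2⟩ := ha
      obtain ⟨hb1, hb2⟩ := hb
      rw [maxs, Finset.mem_filter] at ha1 hb1
      rcases hits_comparable ha2 hb2 with h' | h'
      · rcases h'.ssubset_or_eq with h'' | h''
        · exact absurd h'' (ha1.2 b hb1.1)
        · exact h''
      · rcases h'.ssubset_or_eq with h'' | h''
        · exact absurd h'' (hb1.2 a ha1.1)
        · exact h''.symm
    · rw [if_neg h, Nat.le_zero, Finset.card_eq_zero, Finset.eq_empty_iff_forall_notMem]
      intro a ha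
      rw [Finset.mem_filter] at ha
      exact h ⟨a, ha.1, ha.2⟩
  calc (𝒜.filter (fun A => hits σ A)).card
      ≤ (((mins 𝒜).filter (fun A => hits σ A) ∪ (maxs 𝒜).filter (fun A => hits σ A)) ∪
        (mids 𝒜).filter (fun A => hits σ A)).card := Finset.card_le_card hsub
    _ ≤ ((mins 𝒜).filter (fun A => hits σ A) ∪ (maxs 𝒜).filter (fun A => hits σ A)).card +
        ((mids 𝒜).filter (fun A => hits σ A)).card := Finset.card_union_le _ _
    _ ≤ (((mins 𝒜).filter (fun A => hits σ A)).card +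
        ((maxs 𝒜).filter (fun A => hits σ A)).card) +
        ((mids 𝒜).filter (fun A => hits σ A)).card := by
          exact Nat.add_le_add_right (Finset.card_union_le _ _) _
    _ ≤ _ := by exact Nat.add_le_add_right (Nat.add_le_add hmins hmaxs) _

end count

section alphabeta

variable (𝒜 : Finset (Finset (Fin n)))

def alphaSet (x : Finset (Fin n)) : Finset (Equiv.Perm (Fin n)) :=
  Finset.univ.filter (fun σ => hits σ x ∧ ∀ a ∈ 𝒜.filter (fun a => a ⊂ x), ¬ hits σ a)

def betaSet (x : Finset (Fin n)) : Finset (Equiv.Perm (Fin n)) :=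
  Finset.univ.filter (fun σ => hits σ x ∧ ∀ a ∈ 𝒜.filter (fun a => x ⊂ a), ¬ hits σ a)

lemma fib_le_alpha_beta (hY : ¬ ContainsInducedY 𝒜) (hY' : ¬ ContainsInducedY' 𝒜)
    (h0 : ∅ ∉ 𝒜) (h1 : (Finset.univ : Finset (Fin n)) ∉ 𝒜)
    {x : Finset (Fin n)} (hx : x ∈ mids 𝒜) :
    (Finset.univ.filter (fun σ : Equiv.Perm (Fin n) => hits σ x)).card ≤
      (alphaSet 𝒜 x).card + (betaSet 𝒜 x).card := by
  classical
  rw [mids, Finset.mem_filter] at hx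
  obtain ⟨hx𝒜, ⟨B, hB, hBx⟩, ⟨w, hw, hxw⟩⟩ := hx
  obtain ⟨p, q, hp, hq, hpx, hqx⟩ := exists_pq_below 𝒜 hY' h0 hx𝒜 hw hxw hB hBx
  obtain ⟨p', q', hp', hq', hpx', hqx'⟩ := exists_pq_above 𝒜 hY h1 hx𝒜 hB hBx hw hxw
  have hα := swap_count x (𝒜.filter (fun a => a ⊂ x)) p q
    (fun a ha => hp a (Finset.mem_filter.1 ha).1 (Finset.mem_filter.1 ha).2)
    (fun a ha => hq a (Finset.mem_filter.1 ha).1 (Finset.mem_filter.1 ha).2)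
    (by simp [hpx, hqx])
  have hβ := swap_count x (𝒜.filter (fun a => x ⊂ a)) p' q'
    (fun a ha => hp' a (Finset.mem_filter.1 ha).1 (Finset.mem_filter.1 ha).2)
    (fun a ha => hq' a (Finset.mem_filter.1 ha).1 (Finset.mem_filter.1 ha).2)
    (by simp [hpx', hqx'])
  rw [alphaSet, betaSet]
  omega

lemma alpha_sum (hY : ¬ ContainsInducedY 𝒜) (hY' : ¬ ContainsInducedY' 𝒜) :
    ∑ x ∈ mids 𝒜, (alphaSet 𝒜 x).card ≤
      (Finset.univ.filter (fun σ : Equiv.Perm (Fin n) => ¬ ∃ A ∈ mins 𝒜, hits σ A)).card := by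
  classical
  rw [← Finset.card_biUnion]
  · apply Finset.card_le_card
    intro σ hσ
    rw [Finset.mem_biUnion] at hσ
    obtain ⟨x, hx, hσx⟩ := hσ
    rw [mids, Finset.mem_filter] at hx
    rw [alphaSet, Finset.mem_filter] at hσx
    obtain ⟨-, hhit, hmiss⟩ := hσx
    rw [Finset.mem_filter]
    refine ⟨Finset.mem_univ _, ?_⟩
    rintro ⟨A, hAmin, hAhit⟩
    rw [mins, Finset.mem_filter] at hAmin
    rcases hits_comparable hAhit hhit with h | h
    · rcases h.ssubset_or_eq with h' | h'
      · exact hmiss A (Finset.mem_filter.2 ⟨hAmin.1, h'⟩) hAhit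
      · obtain ⟨B, hB, hBA⟩ := hx.2.1
        exact hAmin.2 B hB (h' ▸ hBA)
    · rcases h.ssubset_or_eq with h' | h'
      · exact hAmin.2 x hx.1 h'
      · obtain ⟨B, hB, hBA⟩ := hx.2.1
        exact hAmin.2 B hB (h'.symm ▸ hBA)
  · intro x hx y hy hxy
    rw [Function.onFun, Finset.disjoint_left]
    intro σ hσx hσy
    rw [alphaSet, Finset.mem_filter] at hσx hσy
    obtain ⟨-, hhx, hmx⟩ := hσx
    obtain ⟨-, hhy, hmy⟩ := hσy
    rw [mids, Finset.mem_coe, Finset.mem_filter] at hx hy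
    rcases hits_comparable hhx hhy with h | h
    · rcases h.ssubset_or_eq with h' | h'
      · exact hmy x (Finset.mem_filter.2 ⟨hx.1, h'⟩) hhx
      · exact hxy h'
    · rcases h.ssubset_or_eq with h' | h'
      · exact hmx y (Finset.mem_filter.2 ⟨hy.1, h'⟩) hhy
      · exact hxy h'.symm

lemma beta_sum (hY : ¬ ContainsInducedY 𝒜) (hY' : ¬ ContainsInducedY' 𝒜) :
    ∑ x ∈ mids 𝒜, (betaSet 𝒜 x).card ≤
      (Finset.univ.filter (fun σ : Equiv.Perm (Fin n) => ¬ ∃ A ∈ maxs 𝒜, hits σ A)).card := by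
  classical
  rw [← Finset.card_biUnion]
  · apply Finset.card_le_card
    intro σ hσ
    rw [Finset.mem_biUnion] at hσ
    obtain ⟨x, hx, hσx⟩ := hσ
    rw [mids, Finset.mem_filter] at hx
    rw [betaSet, Finset.mem_filter] at hσx
    obtain ⟨-, hhit, hmiss⟩ := hσx
    rw [Finset.mem_filter]
    refine ⟨Finset.mem_univ _, ?_⟩
    rintro ⟨A, hAmax, hAhit⟩
    rw [maxs, Finset.mem_filter] at hAmax
    rcases hits_comparable hAhit hhit with h | h
    · rcases h.ssubset_or_eq with h' | h'
      · exact hAmax.2 x hx.1 h'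
      · obtain ⟨B, hB, hBA⟩ := hx.2.2
        exact hAmax.2 B hB (h' ▸ hBA)
    · rcases h.ssubset_or_eq with h' | h'
      · exact hmiss A (Finset.mem_filter.2 ⟨hAmax.1, h'⟩) hAhit
      · obtain ⟨B, hB, hBA⟩ := hx.2.2
        exact hAmax.2 B hB (h'.symm ▸ hBA)
  · intro x hx y hy hxy
    rw [Function.onFun, Finset.disjoint_left]
    intro σ hσx hσy
    rw [betaSet, Finset.mem_filter] at hσx hσy
    obtain ⟨-, hhx, hmx⟩ := hσx
    obtain ⟨-, hhy, hmy⟩ := hσy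
    rw [mids, Finset.mem_coe, Finset.mem_filter] at hx hy
    rcases hits_comparable hhx hhy with h | h
    · rcases h.ssubset_or_eq with h' | h'
      · exact hmx y (Finset.mem_filter.2 ⟨hy.1, h'⟩) hhy
      · exact hxy h'
    · rcases h.ssubset_or_eq with h' | h'
      · exact hmy x (Finset.mem_filter.2 ⟨hx.1, h'⟩) hhx
      · exact hxy h'.symm

end alphabeta

lemma master_count (𝒜 : Finset (Finset (Fin n)))
    (hY : ¬ ContainsInducedY 𝒜) (hY' : ¬ ContainsInducedY' 𝒜)
    (h0 : ∅ ∉ 𝒜) (h1 : (Finset.univ : Finset (Fin n)) ∉ 𝒜) :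
    ∑ A ∈ 𝒜, (Finset.univ.filter (fun σ : Equiv.Perm (Fin n) => hits σ A)).card
      ≤ 2 * n.factorial := by
  classical
  have hswap : ∑ A ∈ 𝒜, (Finset.univ.filter (fun σ : Equiv.Perm (Fin n) => hits σ A)).card
      = ∑ σ : Equiv.Perm (Fin n), (𝒜.filter (fun A => hits σ A)).card := by
    simp only [Finset.card_filter]
    exact Finset.sum_comm
  have hmid : ∑ σ : Equiv.Perm (Fin n), ((mids 𝒜).filter (fun A => hits σ A)).card
      = ∑ x ∈ mids 𝒜, (Finset.univ.filter (fun σ : Equiv.Perm (Fin n) => hits σ x)).card := by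
    simp only [Finset.card_filter]
    exact Finset.sum_comm
  have hindmin : ∑ σ : Equiv.Perm (Fin n), (if (∃ A ∈ mins 𝒜, hits σ A) then 1 else 0)
      = (Finset.univ.filter (fun σ : Equiv.Perm (Fin n) => ∃ A ∈ mins 𝒜, hits σ A)).card :=
    (Finset.card_filter _ _).symm
  have hindmax : ∑ σ : Equiv.Perm (Fin n), (if (∃ A ∈ maxs 𝒜, hits σ A) then 1 else 0)
      = (Finset.univ.filter (fun σ : Equiv.Perm (Fin n) => ∃ A ∈ maxs 𝒜, hits σ A)).card :=
    (Finset.card_filter _ _).symm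
  have hcard : (Finset.univ : Finset (Equiv.Perm (Fin n))).card = n.factorial := by
    rw [Finset.card_univ, Fintype.card_perm, Fintype.card_fin]
  have hsplitmin : (Finset.univ.filter (fun σ : Equiv.Perm (Fin n) =>
        ∃ A ∈ mins 𝒜, hits σ A)).card +
      (Finset.univ.filter (fun σ : Equiv.Perm (Fin n) => ¬ ∃ A ∈ mins 𝒜, hits σ A)).card
      = n.factorial := by
    rw [Finset.card_filter_add_card_filter_not, hcard]
  have hsplitmax : (Finset.univ.filter (fun σ : Equiv.Perm (Fin n) =>
        ∃ A ∈ maxs 𝒜, hits σ A)).card +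
      (Finset.univ.filter (fun σ : Equiv.Perm (Fin n) => ¬ ∃ A ∈ maxs 𝒜, hits σ A)).card
      = n.factorial := by
    rw [Finset.card_filter_add_card_filter_not, hcard]
  have hstep1 : ∑ σ : Equiv.Perm (Fin n), (𝒜.filter (fun A => hits σ A)).card ≤
      ∑ σ : Equiv.Perm (Fin n), ((if (∃ A ∈ mins 𝒜, hits σ A) then 1 else 0) +
        (if (∃ A ∈ maxs 𝒜, hits σ A) then 1 else 0) +
        ((mids 𝒜).filter (fun A => hits σ A)).card) :=
    Finset.sum_le_sum (fun σ _ => per_sigma 𝒜 σ)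
  rw [Finset.sum_add_distrib, Finset.sum_add_distrib, hindmin, hindmax, hmid] at hstep1
  have hstep2 : ∑ x ∈ mids 𝒜,
      (Finset.univ.filter (fun σ : Equiv.Perm (Fin n) => hits σ x)).card ≤
      ∑ x ∈ mids 𝒜, ((alphaSet 𝒜 x).card + (betaSet 𝒜 x).card) :=
    Finset.sum_le_sum (fun x hx => fib_le_alpha_beta 𝒜 hY hY' h0 h1 hx)
  rw [Finset.sum_add_distrib] at hstep2
  have hα := alpha_sum 𝒜 hY hY'
  have hβ := beta_sum 𝒜 hY hY'
  omega


/-- LYM-type inequality for families containing neither `Y` nor `Y'` as an induced subposet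
and avoiding `∅` and `[n]`. -/
theorem lym_induced_Y_Y' (n : ℕ) (𝒜 : Finset (Finset (Fin n)))
    (hY : ¬ ContainsInducedY 𝒜) (hY' : ¬ ContainsInducedY' 𝒜)
    (h0 : ∅ ∉ 𝒜) (h1 : (Finset.univ : Finset (Fin n)) ∉ 𝒜) :
    ∑ A ∈ 𝒜, ((n.choose A.card : ℚ))⁻¹ ≤ 2 := by
  classical
  have hf : (0:ℚ) < (n.factorial : ℚ) := by exact_mod_cast n.factorial_pos
  have hA : ∀ A ∈ 𝒜, ((n.choose A.card : ℚ))⁻¹ =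
      ((Finset.univ.filter (fun σ : Equiv.Perm (Fin n) => hits σ A)).card : ℚ)
        / (n.factorial : ℚ) := by
    intro A _
    have hc : (0:ℚ) < (n.choose A.card : ℚ) := by
      exact_mod_cast Nat.choose_pos (card_le_n A)
    rw [inv_eq_one_div, div_eq_div_iff hc.ne' hf.ne', one_mul]
    exact_mod_cast (fiber_mul_choose A).symm
  rw [Finset.sum_congr rfl hA, ← Finset.sum_div, div_le_iff₀ hf]
  have := master_count 𝒜 hY hY' h0 h1
  calc ∑ A ∈ 𝒜, ((Finset.univ.filter (fun σ : Equiv.Perm (Fin n) => hits σ A)).card : ℚ)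
      = ((∑ A ∈ 𝒜, (Finset.univ.filter
          (fun σ : Equiv.Perm (Fin n) => hits σ A)).card : ℕ) : ℚ) := by push_cast; ring
    _ ≤ ((2 * n.factorial : ℕ) : ℚ) := by exact_mod_cast this
    _ = 2 * (n.factorial : ℚ) := by push_cast; ring
end

section
/- Let σ be a cyclic permutation of [n] and let A be a collection of intervals along σ that does not contain the skew-butterfly poset S as a weak subposet. Then |A| ≤ 2n. -/
open Finset

/-- The family `𝒜` contains the skew-butterfly poset `S` as a (weak) subposet:
five pairwise distinct sets `a, b, c, d, e ∈ 𝒜` with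
`a ⊆ c`, `a ⊆ d`, `b ⊆ c`, `b ⊆ d` and `b ⊆ e ⊆ d`. -/
def ContainsSkewButterfly {n : ℕ} (𝒜 : Finset (Finset (Fin n))) : Prop :=
  ∃ a b c d e : Finset (Fin n),
    a ∈ 𝒜 ∧ b ∈ 𝒜 ∧ c ∈ 𝒜 ∧ d ∈ 𝒜 ∧ e ∈ 𝒜 ∧
    a ≠ b ∧ a ≠ c ∧ a ≠ d ∧ a ≠ e ∧ b ≠ c ∧ b ≠ d ∧ b ≠ e ∧ c ≠ d ∧ c ≠ e ∧ d ≠ e ∧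
    a ⊆ c ∧ a ⊆ d ∧ b ⊆ c ∧ b ⊆ d ∧ b ⊆ e ∧ e ⊆ d

/-- The interval `{x i, x (i+1), …, x (i+t)}` along the cyclic permutation `σ`
(indices taken modulo `n`). -/
def cycInterval (n : ℕ) (σ : ZMod n ≃ Fin n) (i : ZMod n) (t : ℕ) : Finset (Fin n) :=
  (Finset.range (t + 1)).image fun s : ℕ => σ (i + (s : ZMod n))

/-- `I` is an interval along the cyclic permutation `σ`; neither `∅` nor `[n]`
is an interval. -/
def IsCycInterval (n : ℕ) (σ : ZMod n ≃ Fin n) (I : Finset (Fin n)) : Prop :=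
  ∃ (i : ZMod n) (t : ℕ), t ≤ n - 2 ∧ I = cycInterval n σ i t


section SkewBFound
variable {n : ℕ} [NeZero n] (σ : ZMod n ≃ Fin n)

lemma mem_cycInterval_skb {i : ZMod n} {t : ℕ} (ht : t < n) {y : Fin n} :
    y ∈ cycInterval n σ i t ↔ (σ.symm y - i).val ≤ t := by
  constructor
  · rintro hy
    simp only [cycInterval, Finset.mem_image, Finset.mem_range] at hy
    obtain ⟨s, hs, rfl⟩ := hy
    rw [Equiv.symm_apply_apply]
    have h0 : (i + (s : ZMod n)) - i = (s : ZMod n) := by ring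
    rw [h0, ZMod.val_cast_of_lt (by omega)]
    omega
  · intro hy
    simp only [cycInterval, Finset.mem_image, Finset.mem_range]
    refine ⟨(σ.symm y - i).val, by omega, ?_⟩
    have h0 : i + (((σ.symm y - i).val : ℕ) : ZMod n) = σ.symm y := by
      rw [ZMod.natCast_rightInverse (σ.symm y - i)]; ring
    rw [h0, Equiv.apply_symm_apply]

lemma cyc_subset_of_ple_skb {i j : ZMod n} {t u : ℕ} (ht : t < n) (hu : u < n)
    (h : (i - j).val + t ≤ u) : cycInterval n σ i t ⊆ cycInterval n σ j u := by
  intro y hy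
  rw [mem_cycInterval_skb σ ht] at hy
  rw [mem_cycInterval_skb σ hu]
  have h2 : σ.symm y - j = (σ.symm y - i) + (i - j) := by ring
  calc (σ.symm y - j).val = ((σ.symm y - i) + (i - j)).val := by rw [h2]
    _ ≤ (σ.symm y - i).val + (i - j).val := ZMod.val_add_le _ _
    _ ≤ u := by omega

end SkewBFound

section Pairs
variable {n : ℕ}

def ple (x y : ZMod n × ℕ) : Prop := (x.1 - y.1).val + x.2 ≤ y.2

def pend (x : ZMod n × ℕ) : ZMod n := x.1 + (x.2 : ZMod n)

def NoS (B : Finset (ZMod n × ℕ)) : Prop :=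
  ∀ a ∈ B, ∀ b ∈ B, ∀ c ∈ B, ∀ d ∈ B, ∀ e ∈ B,
    a ≠ b → a ≠ c → a ≠ d → a ≠ e → b ≠ c → b ≠ d → b ≠ e → c ≠ d → c ≠ e → d ≠ e →
    ple a c → ple a d → ple b c → ple b d → ple b e → ple e d → False

lemma noS_mono {B' B : Finset (ZMod n × ℕ)} (h : B' ⊆ B) (hS : NoS B) : NoS B' :=
  fun a ha b hb c hc d hd e he => hS a (h ha) b (h hb) c (h hc) d (h hd) e (h he)

def rho (x : ZMod n × ℕ) : ZMod n × ℕ := (-x.1 - (x.2 : ZMod n), x.2)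

lemma rho_rho (x : ZMod n × ℕ) : rho (rho x) = x := by
  unfold rho; refine Prod.ext ?_ rfl; simp only; ring
lemma rho_inj : Function.Injective (rho (n := n)) := by
  intro a b h; rw [← rho_rho a, h, rho_rho]
lemma rho_fst (x : ZMod n × ℕ) : (rho x).1 = -(pend x) := by
  unfold rho pend; simp only; ring
lemma pend_rho (x : ZMod n × ℕ) : pend (rho x) = -x.1 := by
  unfold rho pend; simp only; ring
lemma rho_snd (x : ZMod n × ℕ) : (rho x).2 = x.2 := rfl

variable [NeZero n]



variable [NeZero n]

omit [NeZero n] in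
lemma sub_val_off (v : ZMod n) {o o' : ℕ} (ho : o < n) (ho' : o' < n) :
    ((v + (o : ZMod n)) - (v + (o' : ZMod n))).val
      = if o' ≤ o then o - o' else n + o - o' := by
  have h0 : (v + (o : ZMod n)) - (v + (o' : ZMod n)) = (o : ZMod n) - (o' : ZMod n) := by ring
  rw [h0]
  split_ifs with h
  · rw [← Nat.cast_sub h, ZMod.val_cast_of_lt (by omega)]
  · have h1 : (o : ZMod n) - (o' : ZMod n) = ((n + o - o' : ℕ) : ZMod n) := by
      rw [Nat.cast_sub (by omega)]
      push_cast
      simp [ZMod.natCast_self]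
    rw [h1, ZMod.val_cast_of_lt (by omega)]

omit [NeZero n] in
lemma ple_of {v : ZMod n} {x y : ZMod n × ℕ} {o o' t t' : ℕ} (ho : o < n) (ho' : o' < n)
    (hx : x.1 = v + (o : ZMod n)) (hy : y.1 = v + (o' : ZMod n))
    (hxt : x.2 = t) (hyt : y.2 = t')
    (h : (if o' ≤ o then o - o' else n + o - o') + t ≤ t') : ple x y := by
  unfold ple
  rw [hx, hy, hxt, hyt, sub_val_off v ho ho']
  exact h

omit [NeZero n] in
lemma start_eq_off {v : ZMod n} {x y : ZMod n × ℕ} {o o' : ℕ} (ho : o < n) (ho' : o' < n)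
    (hx : x.1 = v + (o : ZMod n)) (hy : y.1 = v + (o' : ZMod n))
    (h : x.1 = y.1) : o = o' := by
  rw [hx, hy] at h
  have h1 := add_left_cancel h
  have h2 := congrArg ZMod.val h1
  rwa [ZMod.val_cast_of_lt ho, ZMod.val_cast_of_lt ho'] at h2

omit [NeZero n] in
lemma pne_of {v : ZMod n} {x y : ZMod n × ℕ} {o o' t t' : ℕ} (ho : o < n) (ho' : o' < n)
    (hx : x.1 = v + (o : ZMod n)) (hy : y.1 = v + (o' : ZMod n))
    (hxt : x.2 = t) (hyt : y.2 = t')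
    (h : ¬(o = o' ∧ t = t')) : x ≠ y := by
  intro he
  exact h ⟨start_eq_off ho ho' hx hy (by rw [he]), by rw [← hxt, ← hyt, he]⟩

lemma exists_partner {B : Finset (ZMod n × ℕ)} {p : ZMod n × ℕ → Prop} [DecidablePred p]
    {x : ZMod n × ℕ} (hx : x ∈ B) (hpx : p x)
    (h2 : 2 ≤ (B.filter p).card) : ∃ w ∈ B, w ≠ x ∧ p w := by
  have hxf : x ∈ B.filter p := Finset.mem_filter.2 ⟨hx, hpx⟩
  obtain ⟨w, hw, hwx⟩ := Finset.exists_mem_ne (s := B.filter p) (by omega) x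
  rw [Finset.mem_filter] at hw
  exact ⟨w, hw.1, hwx, hw.2⟩

lemma off_decomp (v : ZMod n) (x : ZMod n × ℕ) :
    ∃ o : ℕ, o < n ∧ x.1 = v + (o : ZMod n) := by
  refine ⟨(x.1 - v).val, ZMod.val_lt _, ?_⟩
  rw [ZMod.natCast_rightInverse (x.1 - v)]
  ring

lemma modeq_trichotomy {a b : ℕ} (h : a % n = b % n) (ha : a < 2*n) (hb : b < 2*n) :
    a = b ∨ a = b + n ∨ b = a + n := by
  have hn : 0 < n := Nat.pos_of_ne_zero (NeZero.ne n)
  have h1 := Nat.div_add_mod a n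
  have h2 := Nat.div_add_mod b n
  have h4 : a / n < 2 := Nat.div_lt_of_lt_mul (by omega)
  have h5 : b / n < 2 := Nat.div_lt_of_lt_mul (by omega)
  have h6 : a % n < n := Nat.mod_lt _ hn
  interval_cases h7 : a / n <;> interval_cases h8 : b / n <;> omega

omit [NeZero n] in
lemma pend_eq_mod {v : ZMod n} {x y : ZMod n × ℕ} {o o' : ℕ}
    (hx : x.1 = v + (o : ZMod n)) (hy : y.1 = v + (o' : ZMod n))
    (h : pend x = pend y) : (o + x.2) % n = (o' + y.2) % n := by
  unfold pend at h
  rw [hx, hy] at h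
  have h2 : ((o + x.2 : ℕ) : ZMod n) = ((o' + y.2 : ℕ) : ZMod n) := by
    push_cast
    rw [add_assoc, add_assoc] at h
    linear_combination add_left_cancel h
  rwa [ZMod.natCast_eq_natCast_iff'] at h2

/-- Key Lemma X : in a skew-butterfly-free family in which the three arcs
`(v,t1) ⊂ (v,t2) ⊂ (v,t3)` share their start, and end-partners of all three plus a
start-partner of the end-partner of `(v,t2)` exist, we get a contradiction. -/
lemma lemX {B : Finset (ZMod n × ℕ)} (hb : ∀ x ∈ B, x.2 + 2 ≤ n) (hS : NoS B)
    {v : ZMod n} {t1 t2 t3 : ℕ}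
    (h1 : (v, t1) ∈ B) (h2 : (v, t2) ∈ B) (h3 : (v, t3) ∈ B)
    (h12 : t1 < t2) (h23 : t2 < t3)
    (hpart : ∀ x ∈ B, 2 ≤ (B.filter (fun y => y.1 = x.1)).card ∧
                      2 ≤ (B.filter (fun y => pend y = pend x)).card) : False := by
  have hn0 : (0 : ℕ) < n := Nat.pos_of_ne_zero (NeZero.ne n)
  have hb1 : t1 + 2 ≤ n := hb _ h1
  have hb2 : t2 + 2 ≤ n := hb _ h2
  have hb3 : t3 + 2 ≤ n := hb _ h3
  have hI1 : ((v, t1) : ZMod n × ℕ).1 = v + ((0 : ℕ) : ZMod n) := by simp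
  have hI2 : ((v, t2) : ZMod n × ℕ).1 = v + ((0 : ℕ) : ZMod n) := by simp
  have hI3 : ((v, t3) : ZMod n × ℕ).1 = v + ((0 : ℕ) : ZMod n) := by simp
  -- β : end partner of (v,t2)
  obtain ⟨β, hβB, hβne, hβend⟩ := exists_partner (p := fun y => pend y = pend ((v, t2) : ZMod n × ℕ)) h2 rfl (hpart _ h2).2
  obtain ⟨oβ, hoβ, hβ1⟩ := off_decomp v β
  have hbβ : β.2 + 2 ≤ n := hb _ hβB
  have hβmod := pend_eq_mod hβ1 hI2 hβend
  have hβeq : oβ + β.2 = t2 ∨ oβ + β.2 = t2 + n := by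
    rcases modeq_trichotomy hβmod (by omega) (by omega) with h | h | h <;> omega
  rcases hβeq with hβeq | hβeq
  · -- CASE D : β ⊊ I2
    have hoβ1 : 1 ≤ oβ := by
      by_contra hc
      apply hβne
      have ho0 : oβ = 0 := by omega
      have : β.1 = v := by rw [hβ1, ho0]; simp
      have h2' : β.2 = t2 := by omega
      exact Prod.ext this h2'
    -- γ : end partner of (v,t3)
    obtain ⟨γ, hγB, hγne, hγend⟩ := exists_partner (p := fun y => pend y = pend ((v, t3) : ZMod n × ℕ)) h3 rfl (hpart _ h3).2
    obtain ⟨oγ, hoγ, hγ1⟩ := off_decomp v γ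
    have hbγ : γ.2 + 2 ≤ n := hb _ hγB
    have hγmod := pend_eq_mod hγ1 hI3 hγend
    have hγeq : oγ + γ.2 = t3 ∨ oγ + γ.2 = t3 + n := by
      rcases modeq_trichotomy hγmod (by omega) (by omega) with h | h | h <;> omega
    rcases hγeq with hγeq | hγeq
    · -- γ ⊊ I3
      have hoγ1 : 1 ≤ oγ := by
        by_contra hc
        apply hγne
        have ho0 : oγ = 0 := by omega
        have : γ.1 = v := by rw [hγ1, ho0]; simp
        exact Prod.ext this (by omega)
      by_cases hqg : oγ ≤ oβ
      · -- CERT (I1, β, I2, I3, γ)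
        exact hS _ h1 _ hβB _ h2 _ h3 _ hγB
          (pne_of (t := t1) (t' := β.2) (by omega) hoβ hI1 hβ1 rfl rfl (by omega))
          (pne_of (t := t1) (t' := t2) (by omega) (by omega) hI1 hI2 rfl rfl (by omega))
          (pne_of (t := t1) (t' := t3) (by omega) (by omega) hI1 hI3 rfl rfl (by omega))
          (pne_of (t := t1) (t' := γ.2) (by omega) hoγ hI1 hγ1 rfl rfl (by omega))
          (pne_of (t := β.2) (t' := t2) hoβ (by omega) hβ1 hI2 rfl rfl (by omega))
          (pne_of (t := β.2) (t' := t3) hoβ (by omega) hβ1 hI3 rfl rfl (by omega))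
          (pne_of (t := β.2) (t' := γ.2) hoβ hoγ hβ1 hγ1 rfl rfl (by omega))
          (pne_of (t := t2) (t' := t3) (by omega) (by omega) hI2 hI3 rfl rfl (by omega))
          (pne_of (t := t2) (t' := γ.2) (by omega) hoγ hI2 hγ1 rfl rfl (by omega))
          (pne_of (t := t3) (t' := γ.2) (by omega) hoγ hI3 hγ1 rfl rfl (by omega))
          (ple_of (by omega) (by omega) hI1 hI2 rfl rfl (by split_ifs <;> omega))
          (ple_of (by omega) (by omega) hI1 hI3 rfl rfl (by split_ifs <;> omega))
          (ple_of hoβ (by omega) hβ1 hI2 rfl rfl (by split_ifs <;> omega))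
          (ple_of hoβ (by omega) hβ1 hI3 rfl rfl (by split_ifs <;> omega))
          (ple_of hoβ hoγ hβ1 hγ1 rfl rfl (by split_ifs <;> omega))
          (ple_of hoγ (by omega) hγ1 hI3 rfl rfl (by split_ifs <;> omega))
      · -- oβ < oγ ; δ : start partner of β
        obtain ⟨δ, hδB, hδne, hδst⟩ := exists_partner (p := fun y => y.1 = β.1) hβB rfl (hpart _ hβB).1
        obtain ⟨oδ, hoδ, hδ1⟩ := off_decomp v δ
        have hbδ : δ.2 + 2 ≤ n := hb _ hδB
        have hoδβ : oδ = oβ := start_eq_off hoδ hoβ hδ1 hβ1 hδst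
        rw [hoδβ] at hδ1
        have hδsnd : δ.2 ≠ β.2 := by
          intro hsnd
          exact hδne (Prod.ext (by rw [hδ1, hβ1]) hsnd)
        by_cases hu : δ.2 < β.2
        · -- CERT (I1, δ, I2, I3, β)
          exact hS _ h1 _ hδB _ h2 _ h3 _ hβB
            (pne_of (t := t1) (t' := δ.2) (by omega) hoβ hI1 hδ1 rfl rfl (by omega))
            (pne_of (t := t1) (t' := t2) (by omega) (by omega) hI1 hI2 rfl rfl (by omega))
            (pne_of (t := t1) (t' := t3) (by omega) (by omega) hI1 hI3 rfl rfl (by omega))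
            (pne_of (t := t1) (t' := β.2) (by omega) hoβ hI1 hβ1 rfl rfl (by omega))
            (pne_of (t := δ.2) (t' := t2) hoβ (by omega) hδ1 hI2 rfl rfl (by omega))
            (pne_of (t := δ.2) (t' := t3) hoβ (by omega) hδ1 hI3 rfl rfl (by omega))
            (pne_of (t := δ.2) (t' := β.2) hoβ hoβ hδ1 hβ1 rfl rfl (by omega))
            (pne_of (t := t2) (t' := t3) (by omega) (by omega) hI2 hI3 rfl rfl (by omega))
            (pne_of (t := t2) (t' := β.2) (by omega) hoβ hI2 hβ1 rfl rfl (by omega))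
            (pne_of (t := t3) (t' := β.2) (by omega) hoβ hI3 hβ1 rfl rfl (by omega))
            (ple_of (by omega) (by omega) hI1 hI2 rfl rfl (by split_ifs <;> omega))
            (ple_of (by omega) (by omega) hI1 hI3 rfl rfl (by split_ifs <;> omega))
            (ple_of hoβ (by omega) hδ1 hI2 rfl rfl (by split_ifs <;> omega))
            (ple_of hoβ (by omega) hδ1 hI3 rfl rfl (by split_ifs <;> omega))
            (ple_of hoβ hoβ hδ1 hβ1 rfl rfl (by split_ifs <;> omega))
            (ple_of hoβ (by omega) hβ1 hI3 rfl rfl (by split_ifs <;> omega))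
        · by_cases hu2 : oβ + δ.2 ≤ t3
          · -- CERT (I1, β, I2, I3, δ)
            exact hS _ h1 _ hβB _ h2 _ h3 _ hδB
              (pne_of (t := t1) (t' := β.2) (by omega) hoβ hI1 hβ1 rfl rfl (by omega))
              (pne_of (t := t1) (t' := t2) (by omega) (by omega) hI1 hI2 rfl rfl (by omega))
              (pne_of (t := t1) (t' := t3) (by omega) (by omega) hI1 hI3 rfl rfl (by omega))
              (pne_of (t := t1) (t' := δ.2) (by omega) hoβ hI1 hδ1 rfl rfl (by omega))
              (pne_of (t := β.2) (t' := t2) hoβ (by omega) hβ1 hI2 rfl rfl (by omega))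
              (pne_of (t := β.2) (t' := t3) hoβ (by omega) hβ1 hI3 rfl rfl (by omega))
              (pne_of (t := β.2) (t' := δ.2) hoβ hoβ hβ1 hδ1 rfl rfl (by omega))
              (pne_of (t := t2) (t' := t3) (by omega) (by omega) hI2 hI3 rfl rfl (by omega))
              (pne_of (t := t2) (t' := δ.2) (by omega) hoβ hI2 hδ1 rfl rfl (by omega))
              (pne_of (t := t3) (t' := δ.2) (by omega) hoβ hI3 hδ1 rfl rfl (by omega))
              (ple_of (by omega) (by omega) hI1 hI2 rfl rfl (by split_ifs <;> omega))
              (ple_of (by omega) (by omega) hI1 hI3 rfl rfl (by split_ifs <;> omega))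
              (ple_of hoβ (by omega) hβ1 hI2 rfl rfl (by split_ifs <;> omega))
              (ple_of hoβ (by omega) hβ1 hI3 rfl rfl (by split_ifs <;> omega))
              (ple_of hoβ hoβ hβ1 hδ1 rfl rfl (by split_ifs <;> omega))
              (ple_of hoβ (by omega) hδ1 hI3 rfl rfl (by split_ifs <;> omega))
          · -- CERT (γ, β, δ, I3, I2)
            exact hS _ hγB _ hβB _ hδB _ h3 _ h2
              (pne_of (t := γ.2) (t' := β.2) hoγ hoβ hγ1 hβ1 rfl rfl (by omega))
              (pne_of (t := γ.2) (t' := δ.2) hoγ hoβ hγ1 hδ1 rfl rfl (by omega))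
              (pne_of (t := γ.2) (t' := t3) hoγ (by omega) hγ1 hI3 rfl rfl (by omega))
              (pne_of (t := γ.2) (t' := t2) hoγ (by omega) hγ1 hI2 rfl rfl (by omega))
              (pne_of (t := β.2) (t' := δ.2) hoβ hoβ hβ1 hδ1 rfl rfl (by omega))
              (pne_of (t := β.2) (t' := t3) hoβ (by omega) hβ1 hI3 rfl rfl (by omega))
              (pne_of (t := β.2) (t' := t2) hoβ (by omega) hβ1 hI2 rfl rfl (by omega))
              (pne_of (t := δ.2) (t' := t3) hoβ (by omega) hδ1 hI3 rfl rfl (by omega))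
              (pne_of (t := δ.2) (t' := t2) hoβ (by omega) hδ1 hI2 rfl rfl (by omega))
              (pne_of (t := t3) (t' := t2) (by omega) (by omega) hI3 hI2 rfl rfl (by omega))
              (ple_of hoγ hoβ hγ1 hδ1 rfl rfl (by split_ifs <;> omega))
              (ple_of hoγ (by omega) hγ1 hI3 rfl rfl (by split_ifs <;> omega))
              (ple_of hoβ hoβ hβ1 hδ1 rfl rfl (by split_ifs <;> omega))
              (ple_of hoβ (by omega) hβ1 hI3 rfl rfl (by split_ifs <;> omega))
              (ple_of hoβ (by omega) hβ1 hI2 rfl rfl (by split_ifs <;> omega))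
              (ple_of (by omega) (by omega) hI2 hI3 rfl rfl (by split_ifs <;> omega))
    · -- γ ⊋ I3 : CERT (β, I1, I3, γ, I2)
      have hoγ2 : t3 + 2 ≤ oγ := by omega
      exact hS _ hβB _ h1 _ h3 _ hγB _ h2
        (pne_of (t := β.2) (t' := t1) hoβ (by omega) hβ1 hI1 rfl rfl (by omega))
        (pne_of (t := β.2) (t' := t3) hoβ (by omega) hβ1 hI3 rfl rfl (by omega))
        (pne_of (t := β.2) (t' := γ.2) hoβ hoγ hβ1 hγ1 rfl rfl (by omega))
        (pne_of (t := β.2) (t' := t2) hoβ (by omega) hβ1 hI2 rfl rfl (by omega))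
        (pne_of (t := t1) (t' := t3) (by omega) (by omega) hI1 hI3 rfl rfl (by omega))
        (pne_of (t := t1) (t' := γ.2) (by omega) hoγ hI1 hγ1 rfl rfl (by omega))
        (pne_of (t := t1) (t' := t2) (by omega) (by omega) hI1 hI2 rfl rfl (by omega))
        (pne_of (t := t3) (t' := γ.2) (by omega) hoγ hI3 hγ1 rfl rfl (by omega))
        (pne_of (t := t3) (t' := t2) (by omega) (by omega) hI3 hI2 rfl rfl (by omega))
        (pne_of (t := γ.2) (t' := t2) hoγ (by omega) hγ1 hI2 rfl rfl (by omega))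
        (ple_of hoβ (by omega) hβ1 hI3 rfl rfl (by split_ifs <;> omega))
        (ple_of hoβ hoγ hβ1 hγ1 rfl rfl (by split_ifs <;> omega))
        (ple_of (by omega) (by omega) hI1 hI3 rfl rfl (by split_ifs <;> omega))
        (ple_of (by omega) hoγ hI1 hγ1 rfl rfl (by split_ifs <;> omega))
        (ple_of (by omega) (by omega) hI1 hI2 rfl rfl (by split_ifs <;> omega))
        (ple_of (by omega) hoγ hI2 hγ1 rfl rfl (by split_ifs <;> omega))
  · -- CASE B : β ⊋ I2
    have hoβ2 : t2 + 2 ≤ oβ := by omega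
    -- α : end partner of (v,t1)
    obtain ⟨α, hαB, hαne, hαend⟩ := exists_partner (p := fun y => pend y = pend ((v, t1) : ZMod n × ℕ)) h1 rfl (hpart _ h1).2
    obtain ⟨oα, hoα, hα1⟩ := off_decomp v α
    have hbα : α.2 + 2 ≤ n := hb _ hαB
    have hαmod := pend_eq_mod hα1 hI1 hαend
    have hαeq : oα + α.2 = t1 ∨ oα + α.2 = t1 + n := by
      rcases modeq_trichotomy hαmod (by omega) (by omega) with h | h | h <;> omega
    rcases hαeq with hαeq | hαeq
    · -- α ⊊ I1 : CERT (α, I1, β, I3, I2)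
      have hoα1 : 1 ≤ oα := by
        by_contra hc
        apply hαne
        have ho0 : oα = 0 := by omega
        have : α.1 = v := by rw [hα1, ho0]; simp
        exact Prod.ext this (by omega)
      exact hS _ hαB _ h1 _ hβB _ h3 _ h2
        (pne_of (t := α.2) (t' := t1) hoα (by omega) hα1 hI1 rfl rfl (by omega))
        (pne_of (t := α.2) (t' := β.2) hoα hoβ hα1 hβ1 rfl rfl (by omega))
        (pne_of (t := α.2) (t' := t3) hoα (by omega) hα1 hI3 rfl rfl (by omega))
        (pne_of (t := α.2) (t' := t2) hoα (by omega) hα1 hI2 rfl rfl (by omega))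
        (pne_of (t := t1) (t' := β.2) (by omega) hoβ hI1 hβ1 rfl rfl (by omega))
        (pne_of (t := t1) (t' := t3) (by omega) (by omega) hI1 hI3 rfl rfl (by omega))
        (pne_of (t := t1) (t' := t2) (by omega) (by omega) hI1 hI2 rfl rfl (by omega))
        (pne_of (t := β.2) (t' := t3) hoβ (by omega) hβ1 hI3 rfl rfl (by omega))
        (pne_of (t := β.2) (t' := t2) hoβ (by omega) hβ1 hI2 rfl rfl (by omega))
        (pne_of (t := t3) (t' := t2) (by omega) (by omega) hI3 hI2 rfl rfl (by omega))
        (ple_of hoα hoβ hα1 hβ1 rfl rfl (by split_ifs <;> omega))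
        (ple_of hoα (by omega) hα1 hI3 rfl rfl (by split_ifs <;> omega))
        (ple_of (by omega) hoβ hI1 hβ1 rfl rfl (by split_ifs <;> omega))
        (ple_of (by omega) (by omega) hI1 hI3 rfl rfl (by split_ifs <;> omega))
        (ple_of (by omega) (by omega) hI1 hI2 rfl rfl (by split_ifs <;> omega))
        (ple_of (by omega) (by omega) hI2 hI3 rfl rfl (by split_ifs <;> omega))
    · -- α ⊋ I1
      have hoα2 : t1 + 2 ≤ oα := by omega
      by_cases hab : oβ ≤ oα
      · -- CERT (I2, I1, I3, β, α)
        exact hS _ h2 _ h1 _ h3 _ hβB _ hαB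
          (pne_of (t := t2) (t' := t1) (by omega) (by omega) hI2 hI1 rfl rfl (by omega))
          (pne_of (t := t2) (t' := t3) (by omega) (by omega) hI2 hI3 rfl rfl (by omega))
          (pne_of (t := t2) (t' := β.2) (by omega) hoβ hI2 hβ1 rfl rfl (by omega))
          (pne_of (t := t2) (t' := α.2) (by omega) hoα hI2 hα1 rfl rfl (by omega))
          (pne_of (t := t1) (t' := t3) (by omega) (by omega) hI1 hI3 rfl rfl (by omega))
          (pne_of (t := t1) (t' := β.2) (by omega) hoβ hI1 hβ1 rfl rfl (by omega))
          (pne_of (t := t1) (t' := α.2) (by omega) hoα hI1 hα1 rfl rfl (by omega))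
          (pne_of (t := t3) (t' := β.2) (by omega) hoβ hI3 hβ1 rfl rfl (by omega))
          (pne_of (t := t3) (t' := α.2) (by omega) hoα hI3 hα1 rfl rfl (by omega))
          (pne_of (t := β.2) (t' := α.2) hoβ hoα hβ1 hα1 rfl rfl (by omega))
          (ple_of (by omega) (by omega) hI2 hI3 rfl rfl (by split_ifs <;> omega))
          (ple_of (by omega) hoβ hI2 hβ1 rfl rfl (by split_ifs <;> omega))
          (ple_of (by omega) (by omega) hI1 hI3 rfl rfl (by split_ifs <;> omega))
          (ple_of (by omega) hoβ hI1 hβ1 rfl rfl (by split_ifs <;> omega))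
          (ple_of (by omega) hoα hI1 hα1 rfl rfl (by split_ifs <;> omega))
          (ple_of hoα hoβ hα1 hβ1 rfl rfl (by split_ifs <;> omega))
      · -- oα < oβ ; δ : start partner of β
        obtain ⟨δ, hδB, hδne, hδst⟩ := exists_partner (p := fun y => y.1 = β.1) hβB rfl (hpart _ hβB).1
        obtain ⟨oδ, hoδ, hδ1⟩ := off_decomp v δ
        have hbδ : δ.2 + 2 ≤ n := hb _ hδB
        have hoδβ : oδ = oβ := start_eq_off hoδ hoβ hδ1 hβ1 hδst
        rw [hoδβ] at hδ1
        have hδsnd : δ.2 ≠ β.2 := by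
          intro hsnd
          exact hδne (Prod.ext (by rw [hδ1, hβ1]) hsnd)
        by_cases hu : β.2 < δ.2
        · -- CERT (I1, I2, I3, δ, β)
          exact hS _ h1 _ h2 _ h3 _ hδB _ hβB
            (pne_of (t := t1) (t' := t2) (by omega) (by omega) hI1 hI2 rfl rfl (by omega))
            (pne_of (t := t1) (t' := t3) (by omega) (by omega) hI1 hI3 rfl rfl (by omega))
            (pne_of (t := t1) (t' := δ.2) (by omega) hoβ hI1 hδ1 rfl rfl (by omega))
            (pne_of (t := t1) (t' := β.2) (by omega) hoβ hI1 hβ1 rfl rfl (by omega))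
            (pne_of (t := t2) (t' := t3) (by omega) (by omega) hI2 hI3 rfl rfl (by omega))
            (pne_of (t := t2) (t' := δ.2) (by omega) hoβ hI2 hδ1 rfl rfl (by omega))
            (pne_of (t := t2) (t' := β.2) (by omega) hoβ hI2 hβ1 rfl rfl (by omega))
            (pne_of (t := t3) (t' := δ.2) (by omega) hoβ hI3 hδ1 rfl rfl (by omega))
            (pne_of (t := t3) (t' := β.2) (by omega) hoβ hI3 hβ1 rfl rfl (by omega))
            (pne_of (t := δ.2) (t' := β.2) hoβ hoβ hδ1 hβ1 rfl rfl (by omega))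
            (ple_of (by omega) (by omega) hI1 hI3 rfl rfl (by split_ifs <;> omega))
            (ple_of (by omega) hoβ hI1 hδ1 rfl rfl (by split_ifs <;> omega))
            (ple_of (by omega) (by omega) hI2 hI3 rfl rfl (by split_ifs <;> omega))
            (ple_of (by omega) hoβ hI2 hδ1 rfl rfl (by split_ifs <;> omega))
            (ple_of (by omega) hoβ hI2 hβ1 rfl rfl (by split_ifs <;> omega))
            (ple_of hoβ hoβ hβ1 hδ1 rfl rfl (by split_ifs <;> omega))
        · by_cases hu2 : n + t1 ≤ oβ + δ.2
          · -- I1 ⊆ δ : CERT (I2, I1, I3, β, δ)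
            exact hS _ h2 _ h1 _ h3 _ hβB _ hδB
              (pne_of (t := t2) (t' := t1) (by omega) (by omega) hI2 hI1 rfl rfl (by omega))
              (pne_of (t := t2) (t' := t3) (by omega) (by omega) hI2 hI3 rfl rfl (by omega))
              (pne_of (t := t2) (t' := β.2) (by omega) hoβ hI2 hβ1 rfl rfl (by omega))
              (pne_of (t := t2) (t' := δ.2) (by omega) hoβ hI2 hδ1 rfl rfl (by omega))
              (pne_of (t := t1) (t' := t3) (by omega) (by omega) hI1 hI3 rfl rfl (by omega))
              (pne_of (t := t1) (t' := β.2) (by omega) hoβ hI1 hβ1 rfl rfl (by omega))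
              (pne_of (t := t1) (t' := δ.2) (by omega) hoβ hI1 hδ1 rfl rfl (by omega))
              (pne_of (t := t3) (t' := β.2) (by omega) hoβ hI3 hβ1 rfl rfl (by omega))
              (pne_of (t := t3) (t' := δ.2) (by omega) hoβ hI3 hδ1 rfl rfl (by omega))
              (pne_of (t := β.2) (t' := δ.2) hoβ hoβ hβ1 hδ1 rfl rfl (by omega))
              (ple_of (by omega) (by omega) hI2 hI3 rfl rfl (by split_ifs <;> omega))
              (ple_of (by omega) hoβ hI2 hβ1 rfl rfl (by split_ifs <;> omega))
              (ple_of (by omega) (by omega) hI1 hI3 rfl rfl (by split_ifs <;> omega))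
              (ple_of (by omega) hoβ hI1 hβ1 rfl rfl (by split_ifs <;> omega))
              (ple_of (by omega) hoβ hI1 hδ1 rfl rfl (by split_ifs <;> omega))
              (ple_of hoβ hoβ hδ1 hβ1 rfl rfl (by split_ifs <;> omega))
          · -- CERT (δ, I1, α, β, I2)
            exact hS _ hδB _ h1 _ hαB _ hβB _ h2
              (pne_of (t := δ.2) (t' := t1) hoβ (by omega) hδ1 hI1 rfl rfl (by omega))
              (pne_of (t := δ.2) (t' := α.2) hoβ hoα hδ1 hα1 rfl rfl (by omega))
              (pne_of (t := δ.2) (t' := β.2) hoβ hoβ hδ1 hβ1 rfl rfl (by omega))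
              (pne_of (t := δ.2) (t' := t2) hoβ (by omega) hδ1 hI2 rfl rfl (by omega))
              (pne_of (t := t1) (t' := α.2) (by omega) hoα hI1 hα1 rfl rfl (by omega))
              (pne_of (t := t1) (t' := β.2) (by omega) hoβ hI1 hβ1 rfl rfl (by omega))
              (pne_of (t := t1) (t' := t2) (by omega) (by omega) hI1 hI2 rfl rfl (by omega))
              (pne_of (t := α.2) (t' := β.2) hoα hoβ hα1 hβ1 rfl rfl (by omega))
              (pne_of (t := α.2) (t' := t2) hoα (by omega) hα1 hI2 rfl rfl (by omega))
              (pne_of (t := β.2) (t' := t2) hoβ (by omega) hβ1 hI2 rfl rfl (by omega))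
              (ple_of hoβ hoα hδ1 hα1 rfl rfl (by split_ifs <;> omega))
              (ple_of hoβ hoβ hδ1 hβ1 rfl rfl (by split_ifs <;> omega))
              (ple_of (by omega) hoα hI1 hα1 rfl rfl (by split_ifs <;> omega))
              (ple_of (by omega) hoβ hI1 hβ1 rfl rfl (by split_ifs <;> omega))
              (ple_of (by omega) (by omega) hI1 hI2 rfl rfl (by split_ifs <;> omega))
              (ple_of (by omega) hoβ hI2 hβ1 rfl rfl (by split_ifs <;> omega))

lemma cast_val_eq (a : ZMod n) : ((a.val : ℕ) : ZMod n) = a :=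
  ZMod.natCast_rightInverse a

lemma ple_rho {x y : ZMod n × ℕ} (hy : y.2 < n) (h : ple x y) : ple (rho x) (rho y) := by
  unfold ple at h ⊢
  set a := (x.1 - y.1).val with ha
  have hxy : x.2 ≤ y.2 := by omega
  have haxy : a ≤ y.2 - x.2 := by omega
  have e1 : x.1 - y.1 = ((a : ℕ) : ZMod n) := (cast_val_eq _).symm
  have e2 : (rho x).1 - (rho y).1 = ((y.2 - x.2 - a : ℕ) : ZMod n) := by
    unfold rho
    simp only
    rw [Nat.cast_sub haxy, Nat.cast_sub hxy]
    linear_combination -e1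
  rw [rho_snd, rho_snd, e2, ZMod.val_cast_of_lt (by omega)]
  omega


/-- dual version: three arcs sharing an end -/
lemma lemXe {B : Finset (ZMod n × ℕ)} (hb : ∀ x ∈ B, x.2 + 2 ≤ n) (hS : NoS B)
    {x1 x2 x3 : ZMod n × ℕ}
    (h1 : x1 ∈ B) (h2 : x2 ∈ B) (h3 : x3 ∈ B)
    (he12 : pend x1 = pend x2) (he13 : pend x1 = pend x3)
    (h12 : x1.2 < x2.2) (h23 : x2.2 < x3.2)
    (hpart : ∀ x ∈ B, 2 ≤ (B.filter (fun y => y.1 = x.1)).card ∧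
                      2 ≤ (B.filter (fun y => pend y = pend x)).card) : False := by
  set B' : Finset (ZMod n × ℕ) := B.image rho with hB'
  have hmem' : ∀ z, z ∈ B' ↔ ∃ w ∈ B, rho w = z := by
    intro z; simp [hB', Finset.mem_image]
  have hb' : ∀ x ∈ B', x.2 + 2 ≤ n := by
    intro x hx
    obtain ⟨w, hw, rfl⟩ := (hmem' x).1 hx
    rw [rho_snd]; exact hb w hw
  have hS' : NoS B' := by
    intro a ha b hbm c hc d hd e he n1 n2 n3 n4 n5 n6 n7 n8 n9 n10 p1 p2 p3 p4 p5 p6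
    obtain ⟨a0, ha0, rfl⟩ := (hmem' a).1 ha
    obtain ⟨b0, hb0, rfl⟩ := (hmem' b).1 hbm
    obtain ⟨c0, hc0, rfl⟩ := (hmem' c).1 hc
    obtain ⟨d0, hd0, rfl⟩ := (hmem' d).1 hd
    obtain ⟨e0, he0, rfl⟩ := (hmem' e).1 he
    have hq : ∀ u w : ZMod n × ℕ, w ∈ B → ple (rho u) (rho w) → ple u w := by
      intro u w hw hp
      have := ple_rho (y := rho w) (by rw [rho_snd]; have := hb w hw; omega) hp
      rwa [rho_rho, rho_rho] at this
    exact hS a0 ha0 b0 hb0 c0 hc0 d0 hd0 e0 he0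
      (fun h => n1 (by rw [h])) (fun h => n2 (by rw [h])) (fun h => n3 (by rw [h]))
      (fun h => n4 (by rw [h])) (fun h => n5 (by rw [h])) (fun h => n6 (by rw [h]))
      (fun h => n7 (by rw [h])) (fun h => n8 (by rw [h])) (fun h => n9 (by rw [h]))
      (fun h => n10 (by rw [h]))
      (hq _ _ hc0 p1) (hq _ _ hd0 p2) (hq _ _ hc0 p3) (hq _ _ hd0 p4)
      (hq _ _ he0 p5) (hq _ _ hd0 p6)
  have hpart' : ∀ x ∈ B', 2 ≤ (B'.filter (fun y => y.1 = x.1)).card ∧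
                      2 ≤ (B'.filter (fun y => pend y = pend x)).card := by
    intro x hx
    obtain ⟨w, hw, rfl⟩ := (hmem' x).1 hx
    constructor
    · have heq : B'.filter (fun y => y.1 = (rho w).1)
          = (B.filter (fun y => pend y = pend w)).image rho := by
        ext z
        simp only [Finset.mem_filter, Finset.mem_image, hB']
        constructor
        · rintro ⟨⟨u, hu, rfl⟩, hz⟩
          refine ⟨u, ⟨hu, ?_⟩, rfl⟩
          rw [rho_fst, rho_fst] at hz
          exact neg_injective hz
        · rintro ⟨u, ⟨hu, hz⟩, rfl⟩
          exact ⟨⟨u, hu, rfl⟩, by rw [rho_fst, rho_fst, hz]⟩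
      rw [heq, Finset.card_image_of_injective _ rho_inj]
      exact (hpart w hw).2
    · have heq : B'.filter (fun y => pend y = pend (rho w))
          = (B.filter (fun y => y.1 = w.1)).image rho := by
        ext z
        simp only [Finset.mem_filter, Finset.mem_image, hB']
        constructor
        · rintro ⟨⟨u, hu, rfl⟩, hz⟩
          refine ⟨u, ⟨hu, ?_⟩, rfl⟩
          rw [pend_rho, pend_rho] at hz
          exact neg_injective hz
        · rintro ⟨u, ⟨hu, hz⟩, rfl⟩
          exact ⟨⟨u, hu, rfl⟩, by rw [pend_rho, pend_rho, hz]⟩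
      rw [heq, Finset.card_image_of_injective _ rho_inj]
      exact (hpart w hw).1
  set v : ZMod n := -(pend x1) with hv
  have e1 : rho x1 = (v, x1.2) := Prod.ext (by rw [rho_fst]) rfl
  have e2 : rho x2 = (v, x2.2) := Prod.ext (by rw [rho_fst, hv, he12]) rfl
  have e3 : rho x3 = (v, x3.2) := Prod.ext (by rw [rho_fst, hv, he13]) rfl
  exact lemX hb' hS'
    (e1 ▸ Finset.mem_image_of_mem rho h1)
    (e2 ▸ Finset.mem_image_of_mem rho h2)
    (e3 ▸ Finset.mem_image_of_mem rho h3) h12 h23 hpart'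

lemma three_distinct {α : Type*} [DecidableEq α] {s : Finset α} (h : 3 ≤ s.card) :
    ∃ a ∈ s, ∃ b ∈ s, ∃ c ∈ s, a ≠ b ∧ a ≠ c ∧ b ≠ c := by
  obtain ⟨a, ha⟩ := Finset.card_pos.1 (show 0 < s.card by omega)
  have h2 : 2 ≤ (s.erase a).card := by rw [Finset.card_erase_of_mem ha]; omega
  obtain ⟨b, hb⟩ := Finset.card_pos.1 (show 0 < (s.erase a).card by omega)
  have h3 : 1 ≤ ((s.erase a).erase b).card := by
    rw [Finset.card_erase_of_mem hb]; omega
  obtain ⟨c, hc⟩ := Finset.card_pos.1 (show 0 < ((s.erase a).erase b).card by omega)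
  have hcb : c ≠ b := Finset.ne_of_mem_erase hc
  have hca : c ≠ a := Finset.ne_of_mem_erase (Finset.mem_of_mem_erase hc)
  have hba : b ≠ a := Finset.ne_of_mem_erase hb
  exact ⟨a, ha, b, Finset.mem_of_mem_erase hb,
    c, Finset.mem_of_mem_erase (Finset.mem_of_mem_erase hc),
    hba.symm, hca.symm, hcb.symm⟩

/-- main counting lemma -/
lemma card_le_slots (B : Finset (ZMod n × ℕ)) (hb : ∀ x ∈ B, x.2 + 2 ≤ n) (hS : NoS B) :
    B.card ≤ (B.image Prod.fst).card + (B.image pend).card := by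
  induction B using Finset.strongInduction with
  | _ B ih =>
  by_cases hpriv : ∃ b ∈ B, (B.filter (fun y => y.1 = b.1)).card ≤ 1 ∨
      (B.filter (fun y => pend y = pend b)).card ≤ 1
  · obtain ⟨b, hbB, hcase⟩ := hpriv
    have hsub : B.erase b ⊂ B := Finset.erase_ssubset hbB
    have hIH := ih _ hsub (fun x hx => hb x (Finset.mem_of_mem_erase hx))
      (noS_mono (Finset.erase_subset _ _) hS)
    have hpos : 0 < B.card := Finset.card_pos.2 ⟨b, hbB⟩
    have hcard : (B.erase b).card = B.card - 1 := Finset.card_erase_of_mem hbB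
    have two_le : ∀ (f : ZMod n × ℕ → ZMod n) (c : ZMod n × ℕ), c ∈ B.erase b →
        f c = f b → 2 ≤ (B.filter (fun y => f y = f b)).card := by
      intro f c hc hfc
      have hcB : c ∈ B := Finset.mem_of_mem_erase hc
      have hcb : c ≠ b := Finset.ne_of_mem_erase hc
      have h1 : b ∈ B.filter (fun y => f y = f b) := Finset.mem_filter.2 ⟨hbB, rfl⟩
      have h2 : c ∈ B.filter (fun y => f y = f b) := Finset.mem_filter.2 ⟨hcB, hfc⟩
      have : ({c, b} : Finset (ZMod n × ℕ)) ⊆ B.filter (fun y => f y = f b) := by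
        intro z hz
        rcases Finset.mem_insert.1 hz with rfl | hz
        · exact h2
        · rwa [Finset.mem_singleton.1 hz]
      calc 2 = ({c, b} : Finset (ZMod n × ℕ)).card := by
            rw [Finset.card_insert_of_notMem (by simp [hcb]), Finset.card_singleton]
        _ ≤ _ := Finset.card_le_card this
    rcases hcase with hc | hc
    · -- start slot of b is private
      have hnotin : b.1 ∉ (B.erase b).image Prod.fst := by
        intro hmem
        obtain ⟨c, hc1, hc2⟩ := Finset.mem_image.1 hmem
        have := two_le Prod.fst c hc1 hc2
        omega
      have himg1 : ((B.erase b).image Prod.fst).card + 1 ≤ (B.image Prod.fst).card := by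
        have hsub2 : insert b.1 ((B.erase b).image Prod.fst) ⊆ B.image Prod.fst := by
          intro z hz
          rcases Finset.mem_insert.1 hz with rfl | hz
          · exact Finset.mem_image_of_mem _ hbB
          · exact Finset.image_subset_image (Finset.erase_subset _ _) hz
        calc ((B.erase b).image Prod.fst).card + 1
            = (insert b.1 ((B.erase b).image Prod.fst)).card :=
              (Finset.card_insert_of_notMem hnotin).symm
          _ ≤ _ := Finset.card_le_card hsub2
      have himg2 : ((B.erase b).image pend).card ≤ (B.image pend).card :=
        Finset.card_le_card (Finset.image_subset_image (Finset.erase_subset _ _))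
      omega
    · -- end slot of b is private
      have hnotin : pend b ∉ (B.erase b).image pend := by
        intro hmem
        obtain ⟨c, hc1, hc2⟩ := Finset.mem_image.1 hmem
        have := two_le pend c hc1 hc2
        omega
      have himg1 : ((B.erase b).image pend).card + 1 ≤ (B.image pend).card := by
        have hsub2 : insert (pend b) ((B.erase b).image pend) ⊆ B.image pend := by
          intro z hz
          rcases Finset.mem_insert.1 hz with rfl | hz
          · exact Finset.mem_image_of_mem _ hbB
          · exact Finset.image_subset_image (Finset.erase_subset _ _) hz
        calc ((B.erase b).image pend).card + 1
            = (insert (pend b) ((B.erase b).image pend)).card :=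
              (Finset.card_insert_of_notMem hnotin).symm
          _ ≤ _ := Finset.card_le_card hsub2
      have himg2 : ((B.erase b).image Prod.fst).card ≤ (B.image Prod.fst).card :=
        Finset.card_le_card (Finset.image_subset_image (Finset.erase_subset _ _))
      omega
  · push_neg at hpriv
    have hpart : ∀ x ∈ B, 2 ≤ (B.filter (fun y => y.1 = x.1)).card ∧
        2 ≤ (B.filter (fun y => pend y = pend x)).card := by
      intro x hx
      obtain ⟨a, bb⟩ := hpriv x hx
      exact ⟨by omega, by omega⟩
    have hfibS : ∀ a ∈ B.image Prod.fst, (B.filter (fun x => x.1 = a)).card ≤ 2 := by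
      intro a ha
      by_contra hgt
      obtain ⟨x1, hx1, x2, hx2, x3, hx3, ne12, ne13, ne23⟩ :=
        three_distinct (s := B.filter (fun x => x.1 = a)) (by omega)
      rw [Finset.mem_filter] at hx1 hx2 hx3
      have e1 : x1 = (a, x1.2) := Prod.ext hx1.2 rfl
      have e2 : x2 = (a, x2.2) := Prod.ext hx2.2 rfl
      have e3 : x3 = (a, x3.2) := Prod.ext hx3.2 rfl
      have m1 : (a, x1.2) ∈ B := e1 ▸ hx1.1
      have m2 : (a, x2.2) ∈ B := e2 ▸ hx2.1
      have m3 : (a, x3.2) ∈ B := e3 ▸ hx3.1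
      have s12 : x1.2 ≠ x2.2 := fun h => ne12 (by rw [e1, e2, h])
      have s13 : x1.2 ≠ x3.2 := fun h => ne13 (by rw [e1, e3, h])
      have s23 : x2.2 ≠ x3.2 := fun h => ne23 (by rw [e2, e3, h])
      have key : ∀ s1 s2 s3 : ℕ, (a, s1) ∈ B → (a, s2) ∈ B → (a, s3) ∈ B →
          s1 < s2 → s2 < s3 → False :=
        fun s1 s2 s3 k1 k2 k3 l1 l2 => lemX hb hS k1 k2 k3 l1 l2 hpart
      rcases lt_trichotomy x1.2 x2.2 with h12 | h12 | h12
      · rcases lt_trichotomy x2.2 x3.2 with h23 | h23 | h23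
        · exact key _ _ _ m1 m2 m3 h12 h23
        · exact absurd h23 s23
        · rcases lt_trichotomy x1.2 x3.2 with h13 | h13 | h13
          · exact key _ _ _ m1 m3 m2 h13 h23
          · exact absurd h13 s13
          · exact key _ _ _ m3 m1 m2 h13 h12
      · exact absurd h12 s12
      · rcases lt_trichotomy x1.2 x3.2 with h13 | h13 | h13
        · exact key _ _ _ m2 m1 m3 h12 h13
        · exact absurd h13 s13
        · rcases lt_trichotomy x2.2 x3.2 with h23 | h23 | h23
          · exact key _ _ _ m2 m3 m1 h23 h13
          · exact absurd h23 s23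
          · exact key _ _ _ m3 m2 m1 h23 h12
    have hfibE : ∀ a ∈ B.image pend, (B.filter (fun x => pend x = a)).card ≤ 2 := by
      intro a ha
      by_contra hgt
      obtain ⟨x1, hx1, x2, hx2, x3, hx3, ne12, ne13, ne23⟩ :=
        three_distinct (s := B.filter (fun x => pend x = a)) (by omega)
      rw [Finset.mem_filter] at hx1 hx2 hx3
      have s12 : x1.2 ≠ x2.2 := by
        intro h
        apply ne12
        have hfst : x1.1 = x2.1 := by
          have := hx1.2.trans hx2.2.symm
          unfold pend at this
          rw [h] at this
          exact add_right_cancel this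
        exact Prod.ext hfst h
      have s13 : x1.2 ≠ x3.2 := by
        intro h
        apply ne13
        have hfst : x1.1 = x3.1 := by
          have := hx1.2.trans hx3.2.symm
          unfold pend at this
          rw [h] at this
          exact add_right_cancel this
        exact Prod.ext hfst h
      have s23 : x2.2 ≠ x3.2 := by
        intro h
        apply ne23
        have hfst : x2.1 = x3.1 := by
          have := hx2.2.trans hx3.2.symm
          unfold pend at this
          rw [h] at this
          exact add_right_cancel this
        exact Prod.ext hfst h
      have key : ∀ y1 y2 y3 : ZMod n × ℕ, y1 ∈ B → y2 ∈ B → y3 ∈ B →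
          pend y1 = pend y2 → pend y1 = pend y3 →
          y1.2 < y2.2 → y2.2 < y3.2 → False :=
        fun y1 y2 y3 k1 k2 k3 q1 q2 l1 l2 => lemXe hb hS k1 k2 k3 q1 q2 l1 l2 hpart
      have q12 : pend x1 = pend x2 := hx1.2.trans hx2.2.symm
      have q13 : pend x1 = pend x3 := hx1.2.trans hx3.2.symm
      have q23 : pend x2 = pend x3 := hx2.2.trans hx3.2.symm
      rcases lt_trichotomy x1.2 x2.2 with h12 | h12 | h12
      · rcases lt_trichotomy x2.2 x3.2 with h23 | h23 | h23
        · exact key _ _ _ hx1.1 hx2.1 hx3.1 q12 q13 h12 h23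
        · exact absurd h23 s23
        · rcases lt_trichotomy x1.2 x3.2 with h13 | h13 | h13
          · exact key _ _ _ hx1.1 hx3.1 hx2.1 q13 q12 h13 h23
          · exact absurd h13 s13
          · exact key _ _ _ hx3.1 hx1.1 hx2.1 q13.symm (q13.symm.trans q12) h13 h12
      · exact absurd h12 s12
      · rcases lt_trichotomy x1.2 x3.2 with h13 | h13 | h13
        · exact key _ _ _ hx2.1 hx1.1 hx3.1 q12.symm (q12.symm.trans q13) h12 h13
        · exact absurd h13 s13
        · rcases lt_trichotomy x2.2 x3.2 with h23 | h23 | h23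
          · exact key _ _ _ hx2.1 hx3.1 hx1.1 q23 q12.symm h23 h13
          · exact absurd h23 s23
          · exact key _ _ _ hx3.1 hx2.1 hx1.1 q23.symm q13.symm h23 h12
    have c1 : B.card ≤ 2 * (B.image Prod.fst).card :=
      Finset.card_le_mul_card_image B 2 hfibS
    have c2 : B.card ≤ 2 * (B.image pend).card :=
      Finset.card_le_mul_card_image B 2 hfibE
    omega


end Pairs


lemma skb_main_case (m : ℕ) (σ : ZMod (m+2) ≃ Fin (m+2))
    (𝒜 : Finset (Finset (Fin (m+2)))) (hInt : ∀ I ∈ 𝒜, IsCycInterval (m+2) σ I)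
    (hS : ¬ ContainsSkewButterfly 𝒜) :
    𝒜.card ≤ 2 * (m+2) := by
  classical
  have hNN : 2 ≤ m + 2 := by omega
  have hfspec : ∀ I ∈ 𝒜, ∃ p : ZMod (m+2) × ℕ, p.2 ≤ m + 2 - 2 ∧ I = cycInterval (m+2) σ p.1 p.2 := by
    intro I hI
    obtain ⟨i, t, ht, hEq⟩ := hInt I hI
    exact ⟨(i, t), ht, hEq⟩
  choose! f hf1 hf2 using hfspec
  set B : Finset (ZMod (m+2) × ℕ) := 𝒜.image f with hB
  have hinj : Set.InjOn f 𝒜 := by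
    intro I hI J hJ h
    rw [hf2 I hI, hf2 J hJ, h]
  have hcard : B.card = 𝒜.card := Finset.card_image_of_injOn hinj
  have hbound : ∀ x ∈ B, x.2 + 2 ≤ m + 2 := by
    intro x hx
    obtain ⟨I, hI, rfl⟩ := Finset.mem_image.1 hx
    have := hf1 I hI
    omega
  have hsubs : ∀ x ∈ B, ∀ y ∈ B, ∀ (I J : Finset (Fin (m+2))), I ∈ 𝒜 → J ∈ 𝒜 →
      f I = x → f J = y → ple x y → I ⊆ J := by
    intro x hx y hy I J hI hJ hfI hfJ hp
    have h1 := hf2 I hI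
    have h2 := hf2 J hJ
    rw [hfI] at h1
    rw [hfJ] at h2
    have hb1 := hbound x hx
    have hb2 := hbound y hy
    have := cyc_subset_of_ple_skb σ (t := x.2) (u := y.2) (by omega) (by omega) hp
    rw [← h1, ← h2] at this
    exact this
  have hNoS : NoS B := by
    intro a ha b hb c hc d hd e he n1 n2 n3 n4 n5 n6 n7 n8 n9 n10 p1 p2 p3 p4 p5 p6
    obtain ⟨Ia, hIa, hfa⟩ := Finset.mem_image.1 ha
    obtain ⟨Ib, hIb, hfb⟩ := Finset.mem_image.1 hb
    obtain ⟨Ic, hIc, hfc⟩ := Finset.mem_image.1 hc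
    obtain ⟨Id', hId, hfd⟩ := Finset.mem_image.1 hd
    obtain ⟨Ie, hIe, hfe⟩ := Finset.mem_image.1 he
    apply hS
    refine ⟨Ia, Ib, Ic, Id', Ie, hIa, hIb, hIc, hId, hIe,
      fun h => n1 (by rw [← hfa, ← hfb, h]),
      fun h => n2 (by rw [← hfa, ← hfc, h]),
      fun h => n3 (by rw [← hfa, ← hfd, h]),
      fun h => n4 (by rw [← hfa, ← hfe, h]),
      fun h => n5 (by rw [← hfb, ← hfc, h]),
      fun h => n6 (by rw [← hfb, ← hfd, h]),
      fun h => n7 (by rw [← hfb, ← hfe, h]),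
      fun h => n8 (by rw [← hfc, ← hfd, h]),
      fun h => n9 (by rw [← hfc, ← hfe, h]),
      fun h => n10 (by rw [← hfd, ← hfe, h]),
      hsubs a ha c hc Ia Ic hIa hIc hfa hfc p1,
      hsubs a ha d hd Ia Id' hIa hId hfa hfd p2,
      hsubs b hb c hc Ib Ic hIb hIc hfb hfc p3,
      hsubs b hb d hd Ib Id' hIb hId hfb hfd p4,
      hsubs b hb e he Ib Ie hIb hIe hfb hfe p5,
      hsubs e he d hd Ie Id' hIe hId hfe hfd p6⟩
  have hmain := card_le_slots B hbound hNoS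
  have h1 : (B.image Prod.fst).card ≤ m + 2 := by
    calc (B.image Prod.fst).card ≤ Fintype.card (ZMod (m+2)) := Finset.card_le_univ _
      _ = m + 2 := ZMod.card (m+2)
  have h2 : (B.image pend).card ≤ m + 2 := by
    calc (B.image pend).card ≤ Fintype.card (ZMod (m+2)) := Finset.card_le_univ _
      _ = m + 2 := ZMod.card (m+2)
  omega


/-- A skew-butterfly-free collection of intervals along a cyclic permutation of `[n]`
has at most `2n` members. -/
theorem skew_butterfly_intervals_bound (n : ℕ) (σ : ZMod n ≃ Fin n)
    (𝒜 : Finset (Finset (Fin n))) (hInt : ∀ I ∈ 𝒜, IsCycInterval n σ I)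
    (hS : ¬ ContainsSkewButterfly 𝒜) :
    𝒜.card ≤ 2 * n := by
  match n, σ, 𝒜, hInt, hS with
  | 0, σ, 𝒜, hInt, hS => exact (σ 0).elim0
  | 1, σ, 𝒜, hInt, hS =>
    calc 𝒜.card ≤ Fintype.card (Finset (Fin 1)) := Finset.card_le_univ 𝒜
      _ ≤ 2 * 1 := by rw [Fintype.card_finset]; simp
  | (m+2), σ, 𝒜, hInt, hS => exact skb_main_case m σ 𝒜 hInt hS
end

section
/- Let σ be a cyclic permutation of [n], let C_1, …, C_n be the chain decomposition of the intervals along σ, and let A be a collection of intervals along σ that does not contain the skew-butterfly poset S as a weak subposet. If C_i is of type 4, type 3^R or type 3^S, then |A ∩ C_{i+1}| ≤ 1 (indices of chains taken modulo n). -/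
open Finset

/-- The chain `C i` of the chain decomposition of the intervals along `σ`: it contains
exactly one interval of each size `1, 2, …, n - 1`, where the interval of size `2k` is
`{x (i-k), …, x (i+k-1)}` and the interval of size `2k+1` is `{x (i-k), …, x (i+k)}`. -/
def chainC (n : ℕ) (σ : ZMod n ≃ Fin n) (i : ZMod n) : Finset (Finset (Fin n)) :=
  (Finset.Icc 1 (n - 1)).image fun m => cycInterval n σ (i - ((m / 2 : ℕ) : ZMod n)) (m - 1)

/-- The chain `C` is of type `3^S`: exactly `3` sets of `𝒜` on `C`, whose sizes are
not consecutive. -/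
def Type3S {n : ℕ} (𝒜 C : Finset (Finset (Fin n))) : Prop :=
  (𝒜 ∩ C).card = 3 ∧ ¬ ∃ j : ℕ, (𝒜 ∩ C).image Finset.card = {j, j + 1, j + 2}

/-- The chain `C` is of type `3^R`: exactly `3` sets of `𝒜` on `C`, with consecutive sizes
`j, j+1, j+2` where `j` is odd (two of the sets have odd size). -/
def Type3R {n : ℕ} (𝒜 C : Finset (Finset (Fin n))) : Prop :=
  (𝒜 ∩ C).card = 3 ∧ ∃ j : ℕ, Odd j ∧ (𝒜 ∩ C).image Finset.card = {j, j + 1, j + 2}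

/-- The chain `C` is of type `3^L`: exactly `3` sets of `𝒜` on `C`, with consecutive sizes
`j, j+1, j+2` where `j` is even (two of the sets have even size). -/
def Type3L {n : ℕ} (𝒜 C : Finset (Finset (Fin n))) : Prop :=
  (𝒜 ∩ C).card = 3 ∧ ∃ j : ℕ, Even j ∧ (𝒜 ∩ C).image Finset.card = {j, j + 1, j + 2}

section SBaux
variable {n : ℕ} (σ : ZMod n ≃ Fin n)

lemma SB_mem_cyc {i y : ZMod n} {t : ℕ} :
    σ y ∈ cycInterval n σ i t ↔ ∃ s : ℕ, s ≤ t ∧ y = i + (s : ZMod n) := by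
  unfold cycInterval
  simp only [Finset.mem_image, Finset.mem_range, Nat.lt_succ_iff]
  constructor
  · rintro ⟨s, hs, h⟩; exact ⟨s, hs, (σ.injective h).symm⟩
  · rintro ⟨s, hs, rfl⟩; exact ⟨s, hs, rfl⟩

lemma SB_cyc_mono {i : ZMod n} {d t t' : ℕ} (h : d + t ≤ t') :
    cycInterval n σ (i + (d : ZMod n)) t ⊆ cycInterval n σ i t' := by
  intro x hx
  unfold cycInterval at hx ⊢
  simp only [Finset.mem_image, Finset.mem_range, Nat.lt_succ_iff] at hx ⊢
  obtain ⟨s, hs, rfl⟩ := hx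
  exact ⟨d + s, by omega, congrArg σ (by push_cast; ring)⟩

lemma SB_cyc_start_inj {i i' : ZMod n} {t : ℕ} (hn : t + 2 ≤ n)
    (h : cycInterval n σ i t = cycInterval n σ i' t) : i = i' := by
  have h0 : σ i ∈ cycInterval n σ i' t := by
    rw [← h]
    exact (SB_mem_cyc σ).mpr ⟨0, Nat.zero_le t, by simp⟩
  obtain ⟨s, hs, hi⟩ := (SB_mem_cyc σ).mp h0
  rcases Nat.eq_zero_or_pos s with rfl | hpos
  · simpa using hi
  · exfalso
    have h1 : σ (i - 1) ∈ cycInterval n σ i' t :=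
      (SB_mem_cyc σ).mpr ⟨s - 1, by omega, by
        rw [hi, Nat.cast_sub hpos]; push_cast; ring⟩
    rw [← h] at h1
    obtain ⟨u, hu, hiu⟩ := (SB_mem_cyc σ).mp h1
    have hz : ((u + 1 : ℕ) : ZMod n) = 0 := by push_cast; linear_combination -hiu
    have hdvd := (ZMod.natCast_eq_zero_iff _ _).mp hz
    have := Nat.le_of_dvd (Nat.succ_pos u) hdvd
    omega

/-- The interval of size `m` on the chain `C i`. -/
def SB_Iv (i : ZMod n) (m : ℕ) : Finset (Fin n) :=
  cycInterval n σ (i - ((m / 2 : ℕ) : ZMod n)) (m - 1)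

lemma SB_Iv_card {i : ZMod n} {m : ℕ} (h1 : 1 ≤ m) (h2 : m ≤ n - 1) :
    (SB_Iv σ i m).card = m := by
  haveI : NeZero n := ⟨by omega⟩
  unfold SB_Iv cycInterval
  rw [Finset.card_image_of_injOn, Finset.card_range]
  · omega
  · intro a ha b hb hab
    simp only [Finset.coe_range, Set.mem_Iio] at ha hb
    have h3 : (a : ZMod n) = b := by
      have := σ.injective hab
      exact add_left_cancel this
    have := congrArg ZMod.val h3
    rwa [ZMod.val_cast_of_lt (by omega), ZMod.val_cast_of_lt (by omega)] at this

lemma SB_Iv_ne_of_card {i i' : ZMod n} {p q : ℕ} (hp : 1 ≤ p) (hp' : p ≤ n - 1)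
    (hq : 1 ≤ q) (hq' : q ≤ n - 1) (hpq : p ≠ q) : SB_Iv σ i p ≠ SB_Iv σ i' q := by
  intro h
  apply hpq
  rw [← SB_Iv_card σ hp hp' (i := i), ← SB_Iv_card σ hq hq' (i := i'), h]

lemma SB_Iv_ne_next {i : ZMod n} {p q : ℕ} (hp : 1 ≤ p) (hp' : p ≤ n - 1)
    (hq : 1 ≤ q) (hq' : q ≤ n - 1) : SB_Iv σ i p ≠ SB_Iv σ (i + 1) q := by
  rcases eq_or_ne p q with rfl | hne
  · intro h
    have heq := SB_cyc_start_inj σ (t := p - 1) (by omega) h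
    have h1 : ((1 : ℕ) : ZMod n) = 0 := by push_cast; linear_combination -heq
    have hdvd := (ZMod.natCast_eq_zero_iff 1 n).mp h1
    have := Nat.le_of_dvd one_pos hdvd
    omega
  · exact SB_Iv_ne_of_card σ hp hp' hq hq' hne

lemma SB_Iv_mono {i : ZMod n} {p q : ℕ} (hpq : p ≤ q) : SB_Iv σ i p ⊆ SB_Iv σ i q := by
  have hstart : i - ((p / 2 : ℕ) : ZMod n)
      = (i - ((q / 2 : ℕ) : ZMod n)) + ((q / 2 - p / 2 : ℕ) : ZMod n) := by
    rw [Nat.cast_sub (Nat.div_le_div_right hpq)]; ring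
  unfold SB_Iv
  rw [hstart]
  exact SB_cyc_mono σ (by omega)

lemma SB_Iv_subset_succ {i : ZMod n} {p q : ℕ}
    (h : p + 2 ≤ q ∨ (q = p + 1 ∧ p % 2 = 1)) :
    SB_Iv σ i p ⊆ SB_Iv σ (i + 1) q := by
  have hdiv : p / 2 + 1 ≤ q / 2 := by omega
  have hstart : i - ((p / 2 : ℕ) : ZMod n)
      = (i + 1 - ((q / 2 : ℕ) : ZMod n)) + ((q / 2 - (1 + p / 2) : ℕ) : ZMod n) := by
    rw [Nat.cast_sub (by omega)]; push_cast; ring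
  unfold SB_Iv
  rw [hstart]
  exact SB_cyc_mono σ (by omega)

lemma SB_succ_subset_Iv {i : ZMod n} {p q : ℕ} (hq : 1 ≤ q)
    (h : q + 2 ≤ p ∨ (p = q + 1 ∧ p % 2 = 1)) :
    SB_Iv σ (i + 1) q ⊆ SB_Iv σ i p := by
  have hstart : (i + 1) - ((q / 2 : ℕ) : ZMod n)
      = (i - ((p / 2 : ℕ) : ZMod n)) + ((p / 2 + 1 - q / 2 : ℕ) : ZMod n) := by
    rw [Nat.cast_sub (by omega)]; push_cast; ring
  unfold SB_Iv
  rw [hstart]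
  exact SB_cyc_mono σ (by omega)

lemma SB_arith3 (s1 s2 s3 m1 m2 : ℕ) (h12 : s1 < s2) (h23 : s2 < s3) (hm : m1 < m2)
    (h3L : ¬(s2 = s1 + 1 ∧ s3 = s2 + 1 ∧ s1 % 2 = 0)) :
    ((m1 + 2 ≤ s3 ∨ (s3 = m1 + 1 ∧ s3 % 2 = 1)) ∧ (s1 + 2 ≤ m2 ∨ (m2 = s1 + 1 ∧ s1 % 2 = 1)))
    ∨ ((s1 + 2 ≤ m1 ∨ (m1 = s1 + 1 ∧ s1 % 2 = 1)) ∧ (s2 + 2 ≤ m2 ∨ (m2 = s2 + 1 ∧ s2 % 2 = 1)))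
    ∨ ((m1 + 2 ≤ s2 ∨ (s2 = m1 + 1 ∧ s2 % 2 = 1)) ∧ (m2 + 2 ≤ s3 ∨ (s3 = m2 + 1 ∧ s3 % 2 = 1))) := by
  omega

lemma SB_arith4 (s2 s3 m1 m2 : ℕ) (h23 : s2 < s3) (hm : m1 < m2) :
    (s2 + 2 ≤ m2 ∨ (m2 = s2 + 1 ∧ s2 % 2 = 1)) ∨ (m1 + 2 ≤ s3 ∨ (s3 = m1 + 1 ∧ s3 % 2 = 1)) := by
  omega

lemma SB_order3P {P : ℕ → Prop} {a b c : ℕ} (hab : a ≠ b) (hac : a ≠ c) (hbc : b ≠ c)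
    (ha : P a) (hb : P b) (hc : P c) :
    ∃ x y z, x < y ∧ y < z ∧ P x ∧ P y ∧ P z ∧ ({a, b, c} : Finset ℕ) = {x, y, z} := by
  rcases (show (a<b∧b<c) ∨ (a<c∧c<b) ∨ (b<a∧a<c) ∨ (b<c∧c<a) ∨ (c<a∧a<b) ∨ (c<b∧b<a) by
    omega) with ⟨h1,h2⟩|⟨h1,h2⟩|⟨h1,h2⟩|⟨h1,h2⟩|⟨h1,h2⟩|⟨h1,h2⟩
  · exact ⟨a, b, c, h1, h2, ha, hb, hc, rfl⟩
  · exact ⟨a, c, b, h1, h2, ha, hc, hb, by ext w; simp; tauto⟩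
  · exact ⟨b, a, c, h1, h2, hb, ha, hc, by ext w; simp; tauto⟩
  · exact ⟨b, c, a, h1, h2, hb, hc, ha, by ext w; simp; tauto⟩
  · exact ⟨c, a, b, h1, h2, hc, ha, hb, by ext w; simp; tauto⟩
  · exact ⟨c, b, a, h1, h2, hc, hb, ha, by ext w; simp; tauto⟩

lemma SB_order4P {P : ℕ → Prop} {a b c d : ℕ} (hab : a ≠ b) (hac : a ≠ c) (had : a ≠ d)
    (hbc : b ≠ c) (hbd : b ≠ d) (hcd : c ≠ d)
    (ha : P a) (hb : P b) (hc : P c) (hd : P d) :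
    ∃ p q r s, p < q ∧ q < r ∧ r < s ∧ P p ∧ P q ∧ P r ∧ P s := by
  obtain ⟨x, y, z, h1, h2, Px, Py, Pz, hset⟩ := SB_order3P hbc hbd hcd hb hc hd
  have hx : x = b ∨ x = c ∨ x = d := by
    have : x ∈ ({b, c, d} : Finset ℕ) := by rw [hset]; simp
    simpa using this
  have hy : y = b ∨ y = c ∨ y = d := by
    have : y ∈ ({b, c, d} : Finset ℕ) := by rw [hset]; simp
    simpa using this
  have hz : z = b ∨ z = c ∨ z = d := by
    have : z ∈ ({b, c, d} : Finset ℕ) := by rw [hset]; simp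
    simpa using this
  have hax : a ≠ x := by rcases hx with rfl | rfl | rfl <;> assumption
  have hay : a ≠ y := by rcases hy with rfl | rfl | rfl <;> assumption
  have haz : a ≠ z := by rcases hz with rfl | rfl | rfl <;> assumption
  rcases (show a < x ∨ (x < a ∧ a < y) ∨ (y < a ∧ a < z) ∨ z < a by omega) with
    h | ⟨h, h'⟩ | ⟨h, h'⟩ | h
  · exact ⟨a, x, y, z, h, h1, h2, ha, Px, Py, Pz⟩
  · exact ⟨x, a, y, z, h, h', h2, Px, ha, Py, Pz⟩
  · exact ⟨x, y, a, z, h1, h, h', Px, Py, ha, Pz⟩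
  · exact ⟨x, y, z, a, h1, h2, h, Px, Py, Pz, ha⟩



lemma SB_key3 {𝒜 : Finset (Finset (Fin n))} (hS : ¬ ContainsSkewButterfly 𝒜) (i : ZMod n)
    {s1 s2 s3 m1 m2 : ℕ}
    (h12 : s1 < s2) (h23 : s2 < s3) (hm : m1 < m2)
    (hs1 : 1 ≤ s1) (hs3n : s3 ≤ n - 1) (hm1 : 1 ≤ m1) (hm2n : m2 ≤ n - 1)
    (hI1 : SB_Iv σ i s1 ∈ 𝒜) (hI2 : SB_Iv σ i s2 ∈ 𝒜) (hI3 : SB_Iv σ i s3 ∈ 𝒜)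
    (hJ1 : SB_Iv σ (i + 1) m1 ∈ 𝒜) (hJ2 : SB_Iv σ (i + 1) m2 ∈ 𝒜)
    (h3L : ¬(s2 = s1 + 1 ∧ s3 = s2 + 1 ∧ s1 % 2 = 0)) : False := by
  have hs1n : s1 ≤ n - 1 := by omega
  have hs2 : 1 ≤ s2 := by omega
  have hs2n : s2 ≤ n - 1 := by omega
  have hs3 : 1 ≤ s3 := by omega
  have hm1n : m1 ≤ n - 1 := by omega
  have hm2 : 1 ≤ m2 := by omega
  rcases SB_arith3 s1 s2 s3 m1 m2 h12 h23 hm h3L with ⟨hQ, hP⟩ | ⟨hP1, hP2⟩ | ⟨hQ1, hQ2⟩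
  · exact hS ⟨SB_Iv σ (i+1) m1, SB_Iv σ i s1, SB_Iv σ (i+1) m2, SB_Iv σ i s3, SB_Iv σ i s2,
      hJ1, hI1, hJ2, hI3, hI2,
      (SB_Iv_ne_next σ hs1 hs1n hm1 hm1n).symm,
      SB_Iv_ne_of_card σ hm1 hm1n hm2 hm2n hm.ne,
      (SB_Iv_ne_next σ hs3 hs3n hm1 hm1n).symm,
      (SB_Iv_ne_next σ hs2 hs2n hm1 hm1n).symm,
      SB_Iv_ne_next σ hs1 hs1n hm2 hm2n,
      SB_Iv_ne_of_card σ hs1 hs1n hs3 hs3n (by omega),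
      SB_Iv_ne_of_card σ hs1 hs1n hs2 hs2n (by omega),
      (SB_Iv_ne_next σ hs3 hs3n hm2 hm2n).symm,
      (SB_Iv_ne_next σ hs2 hs2n hm2 hm2n).symm,
      SB_Iv_ne_of_card σ hs3 hs3n hs2 hs2n (by omega),
      SB_Iv_mono σ hm.le,
      SB_succ_subset_Iv σ hm1 hQ,
      SB_Iv_subset_succ σ hP,
      SB_Iv_mono σ (by omega),
      SB_Iv_mono σ h12.le,
      SB_Iv_mono σ h23.le⟩
  · exact hS ⟨SB_Iv σ i s2, SB_Iv σ i s1, SB_Iv σ i s3, SB_Iv σ (i+1) m2, SB_Iv σ (i+1) m1,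
      hI2, hI1, hI3, hJ2, hJ1,
      SB_Iv_ne_of_card σ hs2 hs2n hs1 hs1n (by omega),
      SB_Iv_ne_of_card σ hs2 hs2n hs3 hs3n (by omega),
      SB_Iv_ne_next σ hs2 hs2n hm2 hm2n,
      SB_Iv_ne_next σ hs2 hs2n hm1 hm1n,
      SB_Iv_ne_of_card σ hs1 hs1n hs3 hs3n (by omega),
      SB_Iv_ne_next σ hs1 hs1n hm2 hm2n,
      SB_Iv_ne_next σ hs1 hs1n hm1 hm1n,
      SB_Iv_ne_next σ hs3 hs3n hm2 hm2n,
      SB_Iv_ne_next σ hs3 hs3n hm1 hm1n,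
      SB_Iv_ne_of_card σ hm2 hm2n hm1 hm1n (by omega),
      SB_Iv_mono σ h23.le,
      SB_Iv_subset_succ σ hP2,
      SB_Iv_mono σ (by omega),
      Finset.Subset.trans (SB_Iv_subset_succ σ hP1) (SB_Iv_mono σ hm.le),
      SB_Iv_subset_succ σ hP1,
      SB_Iv_mono σ hm.le⟩
  · exact hS ⟨SB_Iv σ i s1, SB_Iv σ (i+1) m1, SB_Iv σ i s2, SB_Iv σ i s3, SB_Iv σ (i+1) m2,
      hI1, hJ1, hI2, hI3, hJ2,
      SB_Iv_ne_next σ hs1 hs1n hm1 hm1n,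
      SB_Iv_ne_of_card σ hs1 hs1n hs2 hs2n (by omega),
      SB_Iv_ne_of_card σ hs1 hs1n hs3 hs3n (by omega),
      SB_Iv_ne_next σ hs1 hs1n hm2 hm2n,
      (SB_Iv_ne_next σ hs2 hs2n hm1 hm1n).symm,
      (SB_Iv_ne_next σ hs3 hs3n hm1 hm1n).symm,
      SB_Iv_ne_of_card σ hm1 hm1n hm2 hm2n (by omega),
      SB_Iv_ne_of_card σ hs2 hs2n hs3 hs3n (by omega),
      SB_Iv_ne_next σ hs2 hs2n hm2 hm2n,
      SB_Iv_ne_next σ hs3 hs3n hm2 hm2n,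
      SB_Iv_mono σ h12.le,
      SB_Iv_mono σ (by omega),
      SB_succ_subset_Iv σ hm1 hQ1,
      Finset.Subset.trans (SB_Iv_mono σ hm.le) (SB_succ_subset_Iv σ hm2 hQ2),
      SB_Iv_mono σ hm.le,
      SB_succ_subset_Iv σ hm2 hQ2⟩

lemma SB_key4 {𝒜 : Finset (Finset (Fin n))} (hS : ¬ ContainsSkewButterfly 𝒜) (i : ZMod n)
    {s1 s2 s3 s4 m1 m2 : ℕ}
    (h12 : s1 < s2) (h23 : s2 < s3) (h34 : s3 < s4) (hm : m1 < m2)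
    (hs1 : 1 ≤ s1) (hs4n : s4 ≤ n - 1) (hm1 : 1 ≤ m1) (hm1n : m1 ≤ n - 1)
    (hm2 : 1 ≤ m2) (hm2n : m2 ≤ n - 1)
    (hI1 : SB_Iv σ i s1 ∈ 𝒜) (hI2 : SB_Iv σ i s2 ∈ 𝒜) (hI3 : SB_Iv σ i s3 ∈ 𝒜)
    (hI4 : SB_Iv σ i s4 ∈ 𝒜)
    (hJ1 : SB_Iv σ (i + 1) m1 ∈ 𝒜) (hJ2 : SB_Iv σ (i + 1) m2 ∈ 𝒜) : False := by
  have hs1n : s1 ≤ n - 1 := by omega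
  have hs2 : 1 ≤ s2 := by omega
  have hs2n : s2 ≤ n - 1 := by omega
  have hs3 : 1 ≤ s3 := by omega
  have hs3n : s3 ≤ n - 1 := by omega
  have hs4 : 1 ≤ s4 := by omega
  rcases SB_arith4 s2 s3 m1 m2 h23 hm with hP | hQ
  · exact hS ⟨SB_Iv σ i s1, SB_Iv σ i s2, SB_Iv σ (i+1) m2, SB_Iv σ i s4, SB_Iv σ i s3,
      hI1, hI2, hJ2, hI4, hI3,
      SB_Iv_ne_of_card σ hs1 hs1n hs2 hs2n (by omega),
      SB_Iv_ne_next σ hs1 hs1n hm2 hm2n,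
      SB_Iv_ne_of_card σ hs1 hs1n hs4 hs4n (by omega),
      SB_Iv_ne_of_card σ hs1 hs1n hs3 hs3n (by omega),
      SB_Iv_ne_next σ hs2 hs2n hm2 hm2n,
      SB_Iv_ne_of_card σ hs2 hs2n hs4 hs4n (by omega),
      SB_Iv_ne_of_card σ hs2 hs2n hs3 hs3n (by omega),
      (SB_Iv_ne_next σ hs4 hs4n hm2 hm2n).symm,
      (SB_Iv_ne_next σ hs3 hs3n hm2 hm2n).symm,
      SB_Iv_ne_of_card σ hs4 hs4n hs3 hs3n (by omega),
      SB_Iv_subset_succ σ (Or.inl (by rcases hP with h | h <;> omega)),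
      SB_Iv_mono σ (by omega),
      SB_Iv_subset_succ σ hP,
      SB_Iv_mono σ (by omega),
      SB_Iv_mono σ h23.le,
      SB_Iv_mono σ h34.le⟩
  · exact hS ⟨SB_Iv σ (i+1) m1, SB_Iv σ i s1, SB_Iv σ i s4, SB_Iv σ i s3, SB_Iv σ i s2,
      hJ1, hI1, hI4, hI3, hI2,
      (SB_Iv_ne_next σ hs1 hs1n hm1 hm1n).symm,
      (SB_Iv_ne_next σ hs4 hs4n hm1 hm1n).symm,
      (SB_Iv_ne_next σ hs3 hs3n hm1 hm1n).symm,
      (SB_Iv_ne_next σ hs2 hs2n hm1 hm1n).symm,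
      SB_Iv_ne_of_card σ hs1 hs1n hs4 hs4n (by omega),
      SB_Iv_ne_of_card σ hs1 hs1n hs3 hs3n (by omega),
      SB_Iv_ne_of_card σ hs1 hs1n hs2 hs2n (by omega),
      SB_Iv_ne_of_card σ hs4 hs4n hs3 hs3n (by omega),
      SB_Iv_ne_of_card σ hs4 hs4n hs2 hs2n (by omega),
      SB_Iv_ne_of_card σ hs3 hs3n hs2 hs2n (by omega),
      SB_succ_subset_Iv σ hm1 (Or.inl (by rcases hQ with h | h <;> omega)),
      SB_succ_subset_Iv σ hm1 hQ,
      SB_Iv_mono σ (by omega),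
      SB_Iv_mono σ (by omega),
      SB_Iv_mono σ h12.le,
      SB_Iv_mono σ h23.le⟩


lemma SB_mem_chainC {σ : ZMod n ≃ Fin n} {S : Finset (Fin n)} {i : ZMod n} :
    S ∈ chainC n σ i ↔ ∃ m, (1 ≤ m ∧ m ≤ n - 1) ∧ S = SB_Iv σ i m := by
  simp only [chainC, Finset.mem_image, Finset.mem_Icc, SB_Iv]
  constructor
  · rintro ⟨m, hm, rfl⟩; exact ⟨m, hm, rfl⟩
  · rintro ⟨m, hm, rfl⟩; exact ⟨m, hm, rfl⟩

end SBaux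

/-- If `C i` is of type `4`, `3^R` or `3^S`, then the next chain `C (i+1)` meets `𝒜`
in at most one set. -/
theorem skew_butterfly_chain_lemma1 (n : ℕ) (σ : ZMod n ≃ Fin n)
    (𝒜 : Finset (Finset (Fin n))) (hInt : ∀ I ∈ 𝒜, IsCycInterval n σ I)
    (hS : ¬ ContainsSkewButterfly 𝒜) (i : ZMod n)
    (hi : (𝒜 ∩ chainC n σ i).card = 4 ∨ Type3R 𝒜 (chainC n σ i) ∨ Type3S 𝒜 (chainC n σ i)) :
    (𝒜 ∩ chainC n σ (i + 1)).card ≤ 1 := by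
  by_contra hcard
  obtain ⟨A, hA, B, hB, hABne⟩ := Finset.one_lt_card.mp (show 1 < (𝒜 ∩ chainC n σ (i + 1)).card by omega)
  obtain ⟨hA𝒜, hAc⟩ := Finset.mem_inter.mp hA
  obtain ⟨hB𝒜, hBc⟩ := Finset.mem_inter.mp hB
  obtain ⟨ma, hma, rfl⟩ := SB_mem_chainC.mp hAc
  obtain ⟨mb, hmb, rfl⟩ := SB_mem_chainC.mp hBc
  have hmab : ma ≠ mb := by rintro rfl; exact hABne rfl
  obtain ⟨m1, m2, hm12, hb1, hb1n, hb2, hb2n, hm1A, hm2A⟩ :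
      ∃ m1 m2, m1 < m2 ∧ 1 ≤ m1 ∧ m1 ≤ n - 1 ∧ 1 ≤ m2 ∧ m2 ≤ n - 1 ∧
        SB_Iv σ (i + 1) m1 ∈ 𝒜 ∧ SB_Iv σ (i + 1) m2 ∈ 𝒜 := by
    rcases hmab.lt_or_gt with h | h
    · exact ⟨ma, mb, h, hma.1, hma.2, hmb.1, hmb.2, hA𝒜, hB𝒜⟩
    · exact ⟨mb, ma, h, hmb.1, hmb.2, hma.1, hma.2, hB𝒜, hA𝒜⟩
  -- helper to process card = 3 cases
  have extract3 : ∀ (h3 : (𝒜 ∩ chainC n σ i).card = 3),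
      ∃ s1 s2 s3, s1 < s2 ∧ s2 < s3 ∧
        (1 ≤ s1 ∧ s1 ≤ n - 1 ∧ SB_Iv σ i s1 ∈ 𝒜) ∧
        (1 ≤ s2 ∧ s2 ≤ n - 1 ∧ SB_Iv σ i s2 ∈ 𝒜) ∧
        (1 ≤ s3 ∧ s3 ≤ n - 1 ∧ SB_Iv σ i s3 ∈ 𝒜) ∧
        (𝒜 ∩ chainC n σ i).image Finset.card = {s1, s2, s3} := by
    intro h3
    obtain ⟨X, Y, Z, hXY, hXZ, hYZ, hset⟩ := Finset.card_eq_three.mp h3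
    have hX : X ∈ 𝒜 ∩ chainC n σ i := by rw [hset]; simp
    have hY : Y ∈ 𝒜 ∩ chainC n σ i := by rw [hset]; simp
    have hZ : Z ∈ 𝒜 ∩ chainC n σ i := by rw [hset]; simp
    obtain ⟨px, hpx, hXe⟩ := SB_mem_chainC.mp (Finset.mem_inter.mp hX).2
    obtain ⟨py, hpy, hYe⟩ := SB_mem_chainC.mp (Finset.mem_inter.mp hY).2
    obtain ⟨pz, hpz, hZe⟩ := SB_mem_chainC.mp (Finset.mem_inter.mp hZ).2
    have hxy : px ≠ py := by rintro rfl; exact hXY (hXe.trans hYe.symm)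
    have hxz : px ≠ pz := by rintro rfl; exact hXZ (hXe.trans hZe.symm)
    have hyz : py ≠ pz := by rintro rfl; exact hYZ (hYe.trans hZe.symm)
    obtain ⟨s1, s2, s3, h12, h23, P1, P2, P3, hseteq⟩ :=
      SB_order3P (P := fun p => 1 ≤ p ∧ p ≤ n - 1 ∧ SB_Iv σ i p ∈ 𝒜) hxy hxz hyz
        ⟨hpx.1, hpx.2, hXe ▸ (Finset.mem_inter.mp hX).1⟩
        ⟨hpy.1, hpy.2, hYe ▸ (Finset.mem_inter.mp hY).1⟩
        ⟨hpz.1, hpz.2, hZe ▸ (Finset.mem_inter.mp hZ).1⟩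
    refine ⟨s1, s2, s3, h12, h23, P1, P2, P3, ?_⟩
    rw [hset, ← hseteq, hXe, hYe, hZe]
    rw [Finset.image_insert, Finset.image_insert, Finset.image_singleton,
      SB_Iv_card σ hpx.1 hpx.2, SB_Iv_card σ hpy.1 hpy.2, SB_Iv_card σ hpz.1 hpz.2]
  rcases hi with h4 | ⟨h3, j, hjodd, hjeq⟩ | ⟨h3, hnotc⟩
  · -- type 4
    have hne : (𝒜 ∩ chainC n σ i).Nonempty := by
      rw [← Finset.card_pos]; omega
    obtain ⟨W, hW⟩ := hne
    have h3 : ((𝒜 ∩ chainC n σ i).erase W).card = 3 := by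
      rw [Finset.card_erase_of_mem hW, h4]
    obtain ⟨X, Y, Z, hXY, hXZ, hYZ, hset⟩ := Finset.card_eq_three.mp h3
    have hX : X ∈ (𝒜 ∩ chainC n σ i).erase W := by rw [hset]; simp
    have hY : Y ∈ (𝒜 ∩ chainC n σ i).erase W := by rw [hset]; simp
    have hZ : Z ∈ (𝒜 ∩ chainC n σ i).erase W := by rw [hset]; simp
    have hWX : W ≠ X := (Finset.ne_of_mem_erase hX).symm
    have hWY : W ≠ Y := (Finset.ne_of_mem_erase hY).symm
    have hWZ : W ≠ Z := (Finset.ne_of_mem_erase hZ).symm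
    have hX' := Finset.mem_of_mem_erase hX
    have hY' := Finset.mem_of_mem_erase hY
    have hZ' := Finset.mem_of_mem_erase hZ
    obtain ⟨pw, hpw, hWe⟩ := SB_mem_chainC.mp (Finset.mem_inter.mp hW).2
    obtain ⟨px, hpx, hXe⟩ := SB_mem_chainC.mp (Finset.mem_inter.mp hX').2
    obtain ⟨py, hpy, hYe⟩ := SB_mem_chainC.mp (Finset.mem_inter.mp hY').2
    obtain ⟨pz, hpz, hZe⟩ := SB_mem_chainC.mp (Finset.mem_inter.mp hZ').2
    have hwx : pw ≠ px := by rintro rfl; exact hWX (hWe.trans hXe.symm)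
    have hwy : pw ≠ py := by rintro rfl; exact hWY (hWe.trans hYe.symm)
    have hwz : pw ≠ pz := by rintro rfl; exact hWZ (hWe.trans hZe.symm)
    have hxy : px ≠ py := by rintro rfl; exact hXY (hXe.trans hYe.symm)
    have hxz : px ≠ pz := by rintro rfl; exact hXZ (hXe.trans hZe.symm)
    have hyz : py ≠ pz := by rintro rfl; exact hYZ (hYe.trans hZe.symm)
    obtain ⟨s1, s2, s3, s4, h12, h23, h34, P1, P2, P3, P4⟩ :=
      SB_order4P (P := fun p => 1 ≤ p ∧ p ≤ n - 1 ∧ SB_Iv σ i p ∈ 𝒜) hwx hwy hwz hxy hxz hyz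
        ⟨hpw.1, hpw.2, hWe ▸ (Finset.mem_inter.mp hW).1⟩
        ⟨hpx.1, hpx.2, hXe ▸ (Finset.mem_inter.mp hX').1⟩
        ⟨hpy.1, hpy.2, hYe ▸ (Finset.mem_inter.mp hY').1⟩
        ⟨hpz.1, hpz.2, hZe ▸ (Finset.mem_inter.mp hZ').1⟩
    exact SB_key4 σ hS i h12 h23 h34 hm12 P1.1 P4.2.1 hb1 hb1n hb2 hb2n
      P1.2.2 P2.2.2 P3.2.2 P4.2.2 hm1A hm2A
  · -- type 3R
    obtain ⟨s1, s2, s3, h12, h23, P1, P2, P3, himg⟩ := extract3 h3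
    have hsets : ({s1, s2, s3} : Finset ℕ) = {j, j + 1, j + 2} := by rw [← himg, hjeq]
    have t1 : s1 = j ∨ s1 = j + 1 ∨ s1 = j + 2 := by
      have : s1 ∈ ({j, j + 1, j + 2} : Finset ℕ) := by rw [← hsets]; simp
      simpa using this
    have t2 : s2 = j ∨ s2 = j + 1 ∨ s2 = j + 2 := by
      have : s2 ∈ ({j, j + 1, j + 2} : Finset ℕ) := by rw [← hsets]; simp
      simpa using this
    have t3 : s3 = j ∨ s3 = j + 1 ∨ s3 = j + 2 := by
      have : s3 ∈ ({j, j + 1, j + 2} : Finset ℕ) := by rw [← hsets]; simp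
      simpa using this
    have hjo : j % 2 = 1 := Nat.odd_iff.mp hjodd
    refine SB_key3 σ hS i h12 h23 hm12 P1.1 P3.2.1 hb1 hb2n P1.2.2 P2.2.2 P3.2.2 hm1A hm2A ?_
    rintro ⟨e1, e2, e0⟩
    rcases t1 with h | h | h <;> rcases t2 with h' | h' | h' <;> rcases t3 with h'' | h'' | h'' <;>
      omega
  · -- type 3S
    obtain ⟨s1, s2, s3, h12, h23, P1, P2, P3, himg⟩ := extract3 h3
    refine SB_key3 σ hS i h12 h23 hm12 P1.1 P3.2.1 hb1 hb2n P1.2.2 P2.2.2 P3.2.2 hm1A hm2A ?_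
    rintro ⟨e1, e2, _⟩
    refine hnotc ⟨s1, ?_⟩
    rw [himg, e2, e1]
end
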